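/- arXiv:0803.2112 — 5 statements merged into one kernel-verified Lean document; each statement's English description precedes it below -/
import Mathlib

section
/- For all n, i > 0 with i ≤ ⌊n/2⌋, α(n,i) = Σ_{h=2i−1}^{n−1} α(h, i−1). -/
open Finset Filter Topology

/-- Cells of a Young diagram given by its list of column lengths:
`(c, r)` means row `r` of column `c`. -/
def Cells (lam : List ℕ) : Set (ℕ × ℕ) :=
  {p | p.1 < lam.length ∧ p.2 < lam.getD p.1 0}

/-- `T` is a standard Young tableau of (column-lengths) shape `lam`:
it is a bijection from the cells onto `{1, …, lam.sum}`, strictly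
increasing along each column and each row, and `0` outside the diagram. -/
def IsSYT (lam : List ℕ) (T : ℕ × ℕ → ℕ) : Prop :=
  Set.BijOn T (Cells lam) (Set.Icc 1 lam.sum) ∧
  (∀ p ∈ Cells lam, ∀ q ∈ Cells lam, p.1 = q.1 → p.2 < q.2 → T p < T q) ∧
  (∀ p ∈ Cells lam, ∀ q ∈ Cells lam, p.2 = q.2 → p.1 < q.1 → T p < T q) ∧
  (∀ p, p ∉ Cells lam → T p = 0)

/-- The number of standard Young tableaux of a fixed column-shape. -/
noncomputable def sytCount (lam : List ℕ) : ℕ :=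
  Nat.card {T : ℕ × ℕ → ℕ // IsSYT lam T}

/-- `alpha n i` : the number of standard Young tableaux on `n` cells whose
shape has two columns of lengths `n - i` and `i`. -/
noncomputable def alpha (n i : ℕ) : ℕ := sytCount [n - i, i]


lemma mem_cells_iff (a b : ℕ) (p : ℕ × ℕ) :
    p ∈ Cells [a, b] ↔ (p.1 = 0 ∧ p.2 < a) ∨ (p.1 = 1 ∧ p.2 < b) := by
  simp only [Cells, Set.mem_setOf_eq, List.length_cons, List.length_nil]
  constructor
  · rintro ⟨h1, h2⟩
    interval_cases h : p.1
    · exact Or.inl ⟨rfl, by simpa [h] using h2⟩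
    · exact Or.inr ⟨rfl, by simpa [h] using h2⟩
  · rintro (⟨h1, h2⟩ | ⟨h1, h2⟩) <;> simp [h1, h2]

/-- cells as a finset -/
def colCells (a b : ℕ) : Finset (ℕ × ℕ) :=
  ((range a).image fun r => ((0:ℕ), r)) ∪ ((range b).image fun j => ((1:ℕ), j))

lemma mem_colCells (a b : ℕ) (p : ℕ × ℕ) :
    p ∈ colCells a b ↔ (p.1 = 0 ∧ p.2 < a) ∨ (p.1 = 1 ∧ p.2 < b) := by
  obtain ⟨x, y⟩ := p
  simp only [colCells, Finset.mem_union, Finset.mem_image, Finset.mem_range, Prod.mk.injEq]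
  constructor
  · rintro (⟨r, hr, rfl, rfl⟩ | ⟨j, hj, rfl, rfl⟩) <;> simp_all
  · rintro (⟨rfl, h⟩ | ⟨rfl, h⟩)
    · exact Or.inl ⟨y, h, rfl, rfl⟩
    · exact Or.inr ⟨y, h, rfl, rfl⟩

lemma coe_colCells (a b : ℕ) : (colCells a b : Set (ℕ × ℕ)) = Cells [a, b] := by
  ext p; rw [Finset.mem_coe, mem_colCells, mem_cells_iff]

lemma card_colCells (a b : ℕ) : (colCells a b).card = a + b := by
  rw [colCells, Finset.card_union_of_disjoint, Finset.card_image_of_injective,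
    Finset.card_image_of_injective, Finset.card_range, Finset.card_range]
  · intro x y h; simpa using h
  · intro x y h; simpa using h
  · simp only [Finset.disjoint_left, Finset.mem_image, Finset.mem_range]
    rintro p ⟨x, -, rfl⟩ ⟨y, -, h⟩
    simp at h

lemma sum_two (a b : ℕ) : [a, b].sum = a + b := by simp

lemma cell0 {a b r : ℕ} (h : r < a) : ((0:ℕ), r) ∈ Cells [a, b] :=
  (mem_cells_iff a b _).2 (Or.inl ⟨rfl, h⟩)

lemma cell1 {a b j : ℕ} (h : j < b) : ((1:ℕ), j) ∈ Cells [a, b] :=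
  (mem_cells_iff a b _).2 (Or.inr ⟨rfl, h⟩)

section helpers
variable {a b : ℕ} {T : ℕ × ℕ → ℕ} (hT : IsSYT [a, b] T)

lemma col0_lt (hT : IsSYT [a, b] T) {r r' : ℕ} (h : r < r') (h' : r' < a) :
    T (0, r) < T (0, r') :=
  hT.2.1 _ (cell0 (h.trans h')) _ (cell0 h') rfl h

lemma col1_lt (hT : IsSYT [a, b] T) {j j' : ℕ} (h : j < j') (h' : j' < b) :
    T (1, j) < T (1, j') :=
  hT.2.1 _ (cell1 (h.trans h')) _ (cell1 h') rfl h

lemma row_lt (hT : IsSYT [a, b] T) {r : ℕ} (hr : r < b) (hra : r < a) :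
    T (0, r) < T (1, r) :=
  hT.2.2.1 _ (cell0 hra) _ (cell1 hr) rfl Nat.zero_lt_one

lemma val_mem (hT : IsSYT [a, b] T) {p : ℕ × ℕ} (hp : p ∈ Cells [a, b]) :
    1 ≤ T p ∧ T p ≤ a + b := by
  have := hT.1.1 hp
  rw [sum_two] at this
  exact this

lemma col0_gap (hT : IsSYT [a, b] T) (s : ℕ) :
    ∀ r, r + s < a → T (0, r) + s ≤ T (0, r + s) := by
  induction s with
  | zero => intro r _; simp
  | succ s ih =>
    intro r h
    have h1 : r + s < a := by omega
    have h2 := ih r h1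
    have h3 : T (0, r + s) < T (0, r + s + 1) := col0_lt hT (by omega) (by omega)
    have h4 : T (0, r + (s + 1)) = T (0, r + s + 1) := rfl
    omega

end helpers

lemma finite_syt (lam : List ℕ) : Finite {T : ℕ × ℕ → ℕ // IsSYT lam T} := by
  have hc : (Cells lam).Finite := by
    apply Set.Finite.subset ((Set.finite_Iio lam.length).prod (Set.finite_Iio (lam.sum + 1)))
    rintro ⟨x, y⟩ ⟨h1, h2⟩
    have h1' : x < lam.length := h1
    have h2' : y < lam.getD x 0 := h2
    refine ⟨h1', ?_⟩
    simp only [Set.mem_Iio]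
    have : lam.getD x 0 ≤ lam.sum := by
      rw [List.getD_eq_getElem lam 0 h1']
      exact List.single_le_sum (fun _ _ => Nat.zero_le _) _ (lam.getElem_mem h1')
    omega
  haveI : Finite (Cells lam) := hc
  haveI : Finite (Set.Icc 1 lam.sum : Set ℕ) := Set.finite_Icc _ _
  apply Finite.of_injective
    (fun T => (fun c : Cells lam => (⟨T.1 c, T.2.1.1 c.2⟩ : Set.Icc 1 lam.sum)))
  intro T T' h
  ext p
  by_cases hp : p ∈ Cells lam
  · have := congrFun h ⟨p, hp⟩
    simpa using this
  · rw [T.2.2.2.2 p hp, T'.2.2.2.2 p hp]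

lemma downclosed_eq_range {s : Finset ℕ} (h : ∀ x ∈ s, ∀ y < x, y ∈ s) :
    s = Finset.range s.card := by
  have hsub : s ⊆ Finset.range s.card := by
    intro x hx
    rw [Finset.mem_range]
    have : Finset.range (x + 1) ⊆ s := by
      intro y hy
      rw [Finset.mem_range] at hy
      rcases Nat.lt_or_ge y x with h' | h'
      · exact h x hx y h'
      · have : y = x := by omega
        rwa [this]
    have := Finset.card_le_card this
    rw [Finset.card_range] at this
    omega
  exact Finset.eq_of_subset_of_card_le hsub (by rw [Finset.card_range])

lemma image_colCells {a b : ℕ} {T : ℕ × ℕ → ℕ} (hT : IsSYT [a, b] T) :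
    (colCells a b).image T = Finset.Icc 1 (a + b) := by
  apply Finset.coe_injective
  rw [Finset.coe_image, coe_colCells, hT.1.image_eq, Finset.coe_Icc, sum_two]

lemma key_lemma {a b : ℕ} {T : ℕ × ℕ → ℕ} (hb : 0 < b) (hba : b ≤ a)
    (hT : IsSYT [a, b] T) :
    2 * b ≤ T (1, b - 1) ∧ T (1, b - 1) ≤ a + b ∧
      ∀ r < a, (T (0, r) < T (1, b - 1) ↔ r + b < T (1, b - 1)) := by
  set m := T (1, b - 1) with hm
  have hinj : Set.InjOn T ↑(colCells a b) := by rw [coe_colCells]; exact hT.1.2.1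
  have hm1 : 1 ≤ m ∧ m ≤ a + b := val_mem hT (cell1 (by omega))
  set s0 := (range a).filter (fun r => T (0, r) < m) with hs0
  set k := s0.card with hk
  set s1 := (range b).filter (fun j => T (1, j) < m) with hs1def
  have hs1 : s1 = Finset.range (b - 1) := by
    ext j
    simp only [hs1def, Finset.mem_filter, Finset.mem_range]
    constructor
    · rintro ⟨hj, hlt⟩
      by_contra h
      have : j = b - 1 := by omega
      rw [this] at hlt
      omega
    · intro hj
      exact ⟨by omega, col1_lt hT (by omega) (by omega)⟩
  set B := (colCells a b).filter (fun p => T p < m) with hB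
  have hBeq : B = s0.image (fun r => ((0:ℕ), r)) ∪ s1.image (fun j => ((1:ℕ), j)) := by
    ext p
    simp only [hB, Finset.mem_filter, mem_colCells, Finset.mem_union, Finset.mem_image,
      hs0, hs1def, Finset.mem_range]
    obtain ⟨x, y⟩ := p
    constructor
    · rintro ⟨(⟨rfl, h⟩ | ⟨rfl, h⟩), hlt⟩
      · exact Or.inl ⟨y, ⟨h, hlt⟩, rfl⟩
      · exact Or.inr ⟨y, ⟨h, hlt⟩, rfl⟩
    · rintro (⟨r, ⟨h1, h2⟩, h3⟩ | ⟨j, ⟨h1, h2⟩, h3⟩)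
      · obtain ⟨rfl, rfl⟩ : x = 0 ∧ y = r := by
          constructor <;> [exact (Prod.mk.injEq _ _ _ _ ▸ h3.symm).1;
            exact (Prod.mk.injEq _ _ _ _ ▸ h3.symm).2]
        exact ⟨Or.inl ⟨rfl, h1⟩, h2⟩
      · obtain ⟨rfl, rfl⟩ : x = 1 ∧ y = j := by
          constructor <;> [exact (Prod.mk.injEq _ _ _ _ ▸ h3.symm).1;
            exact (Prod.mk.injEq _ _ _ _ ▸ h3.symm).2]
        exact ⟨Or.inr ⟨rfl, h1⟩, h2⟩
  have hBcard1 : B.card = k + (b - 1) := by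
    rw [hBeq, Finset.card_union_of_disjoint, Finset.card_image_of_injective _
      (fun x y h => by simpa using h), Finset.card_image_of_injective _
      (fun x y h => by simpa using h), hs1, Finset.card_range]
    simp only [Finset.disjoint_left, Finset.mem_image]
    rintro p ⟨x, -, rfl⟩ ⟨y, -, h⟩
    simp at h
  have hBcard2 : B.card = m - 1 := by
    have himg : B.image T = Finset.Icc 1 (m - 1) := by
      ext v
      simp only [hB, Finset.mem_image, Finset.mem_filter, Finset.mem_Icc]
      constructor
      · rintro ⟨p, ⟨hp, hlt⟩, rfl⟩
        have := val_mem hT (by rw [← coe_colCells]; exact hp)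
        omega
      · intro hv
        have hv' : v ∈ Finset.Icc 1 (a + b) := by
          rw [Finset.mem_Icc]; omega
        rw [← image_colCells hT] at hv'
        obtain ⟨p, hp, rfl⟩ := Finset.mem_image.1 hv'
        exact ⟨p, ⟨hp, by omega⟩, rfl⟩
    have hsub : (B : Set (ℕ × ℕ)) ⊆ ↑(colCells a b) := by
      intro p hp
      exact Finset.mem_coe.2 (Finset.mem_of_mem_filter p (Finset.mem_coe.1 hp))
    have := Finset.card_image_of_injOn (s := B) (hinj.mono hsub)
    rw [himg] at this
    rw [← this, Nat.card_Icc]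
    omega
  have hkb : b ≤ k := by
    have : Finset.range b ⊆ s0 := by
      intro r hr
      rw [Finset.mem_range] at hr
      rw [hs0, Finset.mem_filter, Finset.mem_range]
      refine ⟨by omega, ?_⟩
      rcases Nat.lt_or_ge r (b - 1) with h | h
      · exact (row_lt hT hr (by omega)).trans (col1_lt hT h (by omega))
      · have : r = b - 1 := by omega
        rw [this]
        exact row_lt hT (by omega) (by omega)
    have := Finset.card_le_card this
    rw [Finset.card_range] at this
    omega
  have hmk : m = k + b := by omega
  have hs0r : s0 = Finset.range k := by
    rw [hk]
    apply downclosed_eq_range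
    intro x hx y hy
    rw [hs0, Finset.mem_filter, Finset.mem_range] at hx ⊢
    exact ⟨by omega, (col0_lt hT hy (by omega)).trans hx.2⟩
  refine ⟨by omega, by omega, fun r hr => ?_⟩
  constructor
  · intro hlt
    have : r ∈ s0 := by rw [hs0, Finset.mem_filter, Finset.mem_range]; exact ⟨hr, hlt⟩
    rw [hs0r, Finset.mem_range] at this
    omega
  · intro hlt
    have : r ∈ s0 := by rw [hs0r, Finset.mem_range]; omega
    rw [hs0, Finset.mem_filter] at this
    exact this.2

/-- restriction of a tableau to a smaller two-column shape -/
def restrictT (c d : ℕ) (T : ℕ × ℕ → ℕ) : ℕ × ℕ → ℕ := fun p =>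
  if (p.1 = 0 ∧ p.2 < c) ∨ (p.1 = 1 ∧ p.2 < d) then T p else 0

lemma restrictT_of_mem {c d : ℕ} {T : ℕ × ℕ → ℕ} {p : ℕ × ℕ} (h : p ∈ Cells [c, d]) :
    restrictT c d T p = T p := if_pos ((mem_cells_iff c d p).1 h)

lemma restrictT_of_not_mem {c d : ℕ} {T : ℕ × ℕ → ℕ} {p : ℕ × ℕ} (h : p ∉ Cells [c, d]) :
    restrictT c d T p = 0 := if_neg (fun hc => h ((mem_cells_iff c d p).2 hc))

lemma sub_cells {a b m : ℕ} (hm2 : m ≤ a + b) :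
    Cells [m - b, b - 1] ⊆ Cells [a, b] := by
  intro p hp
  rw [mem_cells_iff] at hp ⊢
  rcases hp with ⟨h1, h2⟩ | ⟨h1, h2⟩
  · exact Or.inl ⟨h1, by omega⟩
  · exact Or.inr ⟨h1, by omega⟩

lemma restrict_syt {a b : ℕ} {T : ℕ × ℕ → ℕ} (hb : 0 < b) (hba : b ≤ a)
    (hT : IsSYT [a, b] T) :
    IsSYT [T (1, b - 1) - b, b - 1] (restrictT (T (1, b - 1) - b) (b - 1) T) := by
  obtain ⟨h2b, hmn, hkey⟩ := key_lemma hb hba hT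
  set m := T (1, b - 1) with hm
  have hsum : [m - b, b - 1].sum = m - 1 := by rw [sum_two]; omega
  have hsub : Cells [m - b, b - 1] ⊆ Cells [a, b] := sub_cells hmn
  have hval : ∀ p ∈ Cells [m - b, b - 1], 1 ≤ T p ∧ T p ≤ m - 1 := by
    intro p hp
    have hv := val_mem hT (hsub hp)
    rw [mem_cells_iff] at hp
    rcases hp with ⟨h1, h2⟩ | ⟨h1, h2⟩
    · obtain ⟨x, y⟩ := p
      simp only at h1 h2
      subst h1
      have := (hkey y (by omega)).2 (by omega)
      exact ⟨hv.1, by omega⟩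
    · obtain ⟨x, y⟩ := p
      simp only at h1 h2
      subst h1
      have := col1_lt hT (show y < b - 1 by omega) (by omega)
      exact ⟨hv.1, by omega⟩
  refine ⟨⟨?_, ?_, ?_⟩, ?_, ?_, ?_⟩
  · intro p hp
    rw [restrictT_of_mem hp, hsum]
    exact hval p hp
  · intro p hp q hq h
    rw [restrictT_of_mem hp, restrictT_of_mem hq] at h
    exact hT.1.2.1 (hsub hp) (hsub hq) h
  · intro v hv
    rw [hsum] at hv
    have hv' : v ∈ Set.Icc 1 [a, b].sum := by
      rw [sum_two]
      simp only [Set.mem_Icc] at hv ⊢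
      omega
    obtain ⟨p, hp, rfl⟩ := hT.1.2.2 hv'
    simp only [Set.mem_Icc] at hv
    have hpm : p ∈ Cells [m - b, b - 1] := by
      rw [mem_cells_iff] at hp ⊢
      rcases hp with ⟨h1, h2⟩ | ⟨h1, h2⟩
      · obtain ⟨x, y⟩ := p
        simp only at h1 h2 ⊢
        subst h1
        refine Or.inl ⟨rfl, ?_⟩
        have := (hkey y h2).1 (by omega)
        omega
      · obtain ⟨x, y⟩ := p
        simp only at h1 h2 ⊢
        subst h1
        refine Or.inr ⟨rfl, ?_⟩
        by_contra h
        have : y = b - 1 := by omega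
        subst this
        omega
    exact ⟨p, hpm, restrictT_of_mem hpm⟩
  · intro p hp q hq h1 h2
    rw [restrictT_of_mem hp, restrictT_of_mem hq]
    exact hT.2.1 p (hsub hp) q (hsub hq) h1 h2
  · intro p hp q hq h1 h2
    rw [restrictT_of_mem hp, restrictT_of_mem hq]
    exact hT.2.2.1 p (hsub hp) q (hsub hq) h1 h2
  · intro p hp
    exact restrictT_of_not_mem hp

lemma top_vals {a b : ℕ} {T : ℕ × ℕ → ℕ} (hb : 0 < b) (hba : b ≤ a)
    (hT : IsSYT [a, b] T) {r : ℕ} (h1 : T (1, b - 1) - b ≤ r) (h2 : r < a) :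
    T (0, r) = r + b + 1 := by
  obtain ⟨h2b, hmn, hkey⟩ := key_lemma hb hba hT
  set m := T (1, b - 1) with hm
  have hub : T (0, r) ≤ r + b + 1 := by
    have hg := col0_gap hT (a - 1 - r) r (by omega)
    have hr2 : r + (a - 1 - r) = a - 1 := by omega
    rw [hr2] at hg
    have := (val_mem hT (cell0 (show a - 1 < a by omega))).2
    omega
  have hlb : m + 1 ≤ T (0, m - b) := by
    have h3 : ¬ T (0, m - b) < m := by
      intro hc
      have := (hkey (m - b) (by omega)).1 hc
      omega
    have h4 : T (0, m - b) ≠ m := by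
      intro hc
      have : ((0:ℕ), m - b) = ((1:ℕ), b - 1) :=
        hT.1.2.1 (cell0 (by omega)) (cell1 (by omega)) (by rw [hc])
      simp at this
    omega
  have hg2 := col0_gap hT (r - (m - b)) (m - b) (by omega)
  have hr3 : m - b + (r - (m - b)) = r := by omega
  rw [hr3] at hg2
  omega

/-- extend a tableau of shape `[m-b, b-1]` to shape `[a, b]` -/
def extT (a b m : ℕ) (T' : ℕ × ℕ → ℕ) : ℕ × ℕ → ℕ := fun p =>
  if p.1 = 1 ∧ p.2 = b - 1 then m
  else if p.1 = 0 ∧ m - b ≤ p.2 ∧ p.2 < a then p.2 + b + 1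
  else T' p

section extSection
variable {a b m : ℕ} {T' : ℕ × ℕ → ℕ}

lemma extT_corner : extT a b m T' (1, b - 1) = m := if_pos ⟨rfl, rfl⟩

lemma extT_top {r : ℕ} (h1 : m - b ≤ r) (h2 : r < a) :
    extT a b m T' (0, r) = r + b + 1 := by
  unfold extT
  rw [if_neg (by simp), if_pos ⟨rfl, h1, h2⟩]

lemma extT_cells {p : ℕ × ℕ} (hb : 0 < b) (hp : p ∈ Cells [m - b, b - 1]) :
    extT a b m T' p = T' p := by
  rw [mem_cells_iff] at hp
  obtain ⟨x, y⟩ := p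
  unfold extT
  rcases hp with ⟨h1, h2⟩ | ⟨h1, h2⟩ <;> simp only at h1 h2 <;> subst h1
  · rw [if_neg (by simp), if_neg (by simp; omega)]
  · rw [if_neg (by simp; omega), if_neg (by simp)]

lemma extT_out {p : ℕ × ℕ} (hb : 0 < b) (hba : b ≤ a) (hm2 : m ≤ a + b)
    (hp : p ∉ Cells [a, b]) : extT a b m T' p = T' p := by
  rw [mem_cells_iff] at hp
  push_neg at hp
  obtain ⟨x, y⟩ := p
  unfold extT
  simp only at hp ⊢
  rw [if_neg, if_neg]
  · rintro ⟨rfl, h1, h2⟩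
    exact absurd (hp.1 rfl) (by omega)
  · rintro ⟨rfl, rfl⟩
    exact absurd (hp.2 rfl) (by omega)

/-- classification of cells of the big shape for the extended tableau -/
lemma extT_cases (hb : 0 < b) (hba : b ≤ a) (hm1 : 2 * b ≤ m) (hm2 : m ≤ a + b)
    {p : ℕ × ℕ} (hp : p ∈ Cells [a, b]) :
    (p ∈ Cells [m - b, b - 1] ∧ extT a b m T' p = T' p) ∨
    (p = (1, b - 1) ∧ extT a b m T' p = m) ∨
    (∃ r, p = ((0:ℕ), r) ∧ m - b ≤ r ∧ r < a ∧ extT a b m T' p = r + b + 1) := by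
  rw [mem_cells_iff] at hp
  obtain ⟨x, y⟩ := p
  rcases hp with ⟨h1, h2⟩ | ⟨h1, h2⟩ <;> simp only at h1 h2 <;> subst h1
  · rcases Nat.lt_or_ge y (m - b) with h | h
    · exact Or.inl ⟨(mem_cells_iff _ _ _).2 (Or.inl ⟨rfl, h⟩), extT_cells hb
        ((mem_cells_iff _ _ _).2 (Or.inl ⟨rfl, h⟩))⟩
    · exact Or.inr (Or.inr ⟨y, rfl, h, h2, extT_top h h2⟩)
  · rcases Nat.lt_or_ge y (b - 1) with h | h
    · exact Or.inl ⟨(mem_cells_iff _ _ _).2 (Or.inr ⟨rfl, h⟩), extT_cells hb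
        ((mem_cells_iff _ _ _).2 (Or.inr ⟨rfl, h⟩))⟩
    · have : y = b - 1 := by omega
      subst this
      exact Or.inr (Or.inl ⟨rfl, extT_corner⟩)

lemma ext_syt (hb : 0 < b) (hba : b ≤ a) (hm1 : 2 * b ≤ m) (hm2 : m ≤ a + b)
    (hT' : IsSYT [m - b, b - 1] T') : IsSYT [a, b] (extT a b m T') := by
  have hsum : [m - b, b - 1].sum = m - 1 := by rw [sum_two]; omega
  have hsub : Cells [m - b, b - 1] ⊆ Cells [a, b] := sub_cells hm2
  have hval : ∀ p ∈ Cells [m - b, b - 1], 1 ≤ T' p ∧ T' p ≤ m - 1 := by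
    intro p hp
    have := hT'.1.1 hp
    rw [hsum] at this
    exact this
  refine ⟨⟨?_, ?_, ?_⟩, ?_, ?_, ?_⟩
  · -- maps to
    intro p hp
    rw [sum_two]
    rcases extT_cases hb hba hm1 hm2 hp with ⟨hc, he⟩ | ⟨hc, he⟩ | ⟨r, hc, h1, h2, he⟩ <;>
      rw [he]
    · have := hval p hc
      constructor <;> omega
    · constructor <;> omega
    · constructor <;> omega
  · -- injOn
    intro p hp q hq h
    rcases extT_cases (T' := T') hb hba hm1 hm2 hp with ⟨hc, he⟩ | ⟨hc, he⟩ | ⟨r, hc, h1, h2, he⟩ <;>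
      rcases extT_cases (T' := T') hb hba hm1 hm2 hq with ⟨hc', he'⟩ | ⟨hc', he'⟩ | ⟨r', hc', h1', h2', he'⟩ <;>
      rw [he, he'] at h
    · exact hT'.1.2.1 hc hc' h
    · have := hval p hc; omega
    · have := hval p hc; omega
    · have := hval q hc'; omega
    · rw [hc, hc']
    · omega
    · have := hval q hc'; omega
    · omega
    · rw [hc, hc']; simp; omega
  · -- surjOn
    intro v hv
    rw [sum_two] at hv
    simp only [Set.mem_Icc] at hv
    rcases Nat.lt_trichotomy v m with h | h | h
    · have hv' : v ∈ Set.Icc 1 [m - b, b - 1].sum := by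
        rw [hsum]; simp only [Set.mem_Icc]; omega
      obtain ⟨p, hp, rfl⟩ := hT'.1.2.2 hv'
      exact ⟨p, hsub hp, extT_cells hb hp⟩
    · exact ⟨(1, b - 1), cell1 (by omega), by rw [extT_corner, h]⟩
    · refine ⟨(0, v - b - 1), cell0 (by omega), ?_⟩
      rw [extT_top (by omega) (by omega)]
      omega
  · -- columns increase
    intro p hp q hq h1 h2
    rcases extT_cases (T' := T') hb hba hm1 hm2 hp with ⟨hc, he⟩ | ⟨hc, he⟩ | ⟨r, hc, hr1, hr2, he⟩ <;>
      rcases extT_cases (T' := T') hb hba hm1 hm2 hq with ⟨hc', he'⟩ | ⟨hc', he'⟩ | ⟨r', hc', hr1', hr2', he'⟩ <;>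
      rw [he, he']
    · exact hT'.2.1 p hc q hc' h1 h2
    · have := hval p hc; omega
    · have := hval p hc; omega
    · -- p corner, q in small cells : impossible since q above p in column 1
      exfalso
      rw [hc] at h1 h2
      rw [mem_cells_iff] at hc'
      rcases hc' with ⟨e1, e2⟩ | ⟨e1, e2⟩ <;> omega
    · rw [hc, hc'] at h2; omega
    · exfalso; rw [hc] at h1; rw [hc'] at h1; simp at h1
    · -- p top col-1, q small cells : q must be in column 0 below m-b, contradiction with p.2 < q.2
      exfalso
      rw [hc] at h1 h2
      rw [mem_cells_iff] at hc'
      rcases hc' with ⟨e1, e2⟩ | ⟨e1, e2⟩ <;> obtain ⟨x, y⟩ := q <;>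
        simp only at e1 e2 <;> subst e1 <;> simp only at h1 h2 <;> omega
    · exfalso; rw [hc, hc'] at h1; simp at h1
    · rw [hc, hc'] at h2; simp only at h2; omega
  · -- rows increase
    intro p hp q hq h1 h2
    rcases extT_cases (T' := T') hb hba hm1 hm2 hp with ⟨hc, he⟩ | ⟨hc, he⟩ | ⟨r, hc, hr1, hr2, he⟩ <;>
      rcases extT_cases (T' := T') hb hba hm1 hm2 hq with ⟨hc', he'⟩ | ⟨hc', he'⟩ | ⟨r', hc', hr1', hr2', he'⟩ <;>
      rw [he, he']
    · exact hT'.2.2.1 p hc q hc' h1 h2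
    · have := hval p hc; omega
    · have := hval p hc; omega
    · -- p corner, q small : impossible, q.1 ≤ 1
      exfalso
      rw [hc] at h2
      rw [mem_cells_iff] at hc'
      rcases hc' with ⟨e1, e2⟩ | ⟨e1, e2⟩ <;> obtain ⟨x, y⟩ := q <;>
        simp only at e1 e2 <;> subst e1 <;> simp only at h2 <;> omega
    · rw [hc, hc'] at h2; simp at h2
    · exfalso; rw [hc, hc'] at h2; simp at h2
    · -- p top col-1, q in small cells with same row, q in col 1 : q.2 = p.2 = r ≥ m-b > b-1, contra
      exfalso
      rw [hc] at h1 h2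
      rw [mem_cells_iff] at hc'
      rcases hc' with ⟨e1, e2⟩ | ⟨e1, e2⟩ <;> obtain ⟨x, y⟩ := q <;>
        simp only at e1 e2 <;> subst e1 <;> simp only at h1 h2 <;> omega
    · -- p top col-1, q corner : row r = b-1 but r ≥ m-b ≥ b > b-1, contra
      exfalso
      rw [hc, hc'] at h1
      simp only at h1
      omega
    · rw [hc, hc'] at h2; simp at h2
  · intro p hp
    rw [extT_out hb hba hm2 hp]
    exact hT'.2.2.2 p (fun hc => hp (hsub hc))
end extSection

lemma ext_restrict {a b : ℕ} {T : ℕ × ℕ → ℕ} (hb : 0 < b) (hba : b ≤ a)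
    (hT : IsSYT [a, b] T) :
    extT a b (T (1, b - 1)) (restrictT (T (1, b - 1) - b) (b - 1) T) = T := by
  obtain ⟨h2b, hmn, hkey⟩ := key_lemma hb hba hT
  set m := T (1, b - 1) with hm
  funext p
  by_cases hp : p ∈ Cells [a, b]
  · rcases extT_cases (T' := restrictT (m - b) (b - 1) T) hb hba h2b hmn hp with
      ⟨hc, he⟩ | ⟨hc, he⟩ | ⟨r, hc, h1, h2, he⟩
    · rw [he, restrictT_of_mem hc]
    · rw [he, hc]
    · rw [he, hc, top_vals hb hba hT h1 h2]
  · rw [extT_out hb hba hmn hp, restrictT_of_not_mem (fun hc => hp (sub_cells hmn hc))]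
    exact (hT.2.2.2 p hp).symm

lemma restrict_ext {a b m : ℕ} {T' : ℕ × ℕ → ℕ} (hb : 0 < b)
    (hT' : IsSYT [m - b, b - 1] T') :
    restrictT (m - b) (b - 1) (extT a b m T') = T' := by
  funext p
  by_cases hp : p ∈ Cells [m - b, b - 1]
  · rw [restrictT_of_mem hp, extT_cells hb hp]
  · rw [restrictT_of_not_mem hp]
    exact (hT'.2.2.2 p hp).symm

lemma fiber_card {a b : ℕ} (hb : 0 < b) (hba : b ≤ a) (m : ℕ) (hm1 : 2 * b ≤ m)
    (hm2 : m ≤ a + b) [Fintype {T : ℕ × ℕ → ℕ // IsSYT [a, b] T}] :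
    (Finset.univ.filter
        (fun T : {T : ℕ × ℕ → ℕ // IsSYT [a, b] T} => T.1 (1, b - 1) = m)).card
      = sytCount [m - b, b - 1] := by
  haveI : Finite {T : ℕ × ℕ → ℕ // IsSYT [m - b, b - 1] T} := finite_syt _
  haveI : Fintype {T : ℕ × ℕ → ℕ // IsSYT [m - b, b - 1] T} := Fintype.ofFinite _
  rw [sytCount, Nat.card_eq_fintype_card, ← Finset.card_univ]
  refine Finset.card_bij'
    (i := fun T hT => ⟨restrictT (m - b) (b - 1) T.1, ?_⟩)
    (j := fun T' _ => ⟨extT a b m T'.1, ext_syt hb hba hm1 hm2 T'.2⟩)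
    ?_ ?_ ?_ ?_
  · rw [Finset.mem_filter] at hT
    have h := restrict_syt hb hba T.2
    rw [hT.2] at h
    exact h
  · intro T hT
    exact Finset.mem_univ _
  · intro T' _
    rw [Finset.mem_filter]
    exact ⟨Finset.mem_univ _, extT_corner⟩
  · intro T hT
    rw [Finset.mem_filter] at hT
    apply Subtype.ext
    have := ext_restrict hb hba T.2
    rw [hT.2] at this
    exact this
  · intro T' _
    apply Subtype.ext
    exact restrict_ext hb T'.2

lemma main_rec (a b : ℕ) (hb : 0 < b) (hba : b ≤ a) :
    sytCount [a, b] = ∑ h ∈ Finset.Icc (2 * b - 1) (a + b - 1), sytCount [h - (b - 1), b - 1] := by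
  haveI : Finite {T : ℕ × ℕ → ℕ // IsSYT [a, b] T} := finite_syt _
  haveI : Fintype {T : ℕ × ℕ → ℕ // IsSYT [a, b] T} := Fintype.ofFinite _
  rw [sytCount, Nat.card_eq_fintype_card, ← Finset.card_univ]
  rw [Finset.card_eq_sum_card_fiberwise (f := fun T => T.1 (1, b - 1))
    (t := Finset.Icc (2 * b) (a + b))
    (fun T _ => by
      obtain ⟨h1, h2, -⟩ := key_lemma hb hba T.2
      rw [Finset.mem_coe, Finset.mem_Icc]
      exact ⟨h1, h2⟩)]
  refine Finset.sum_bij' (i := fun m _ => m - 1) (j := fun h _ => h + 1) ?_ ?_ ?_ ?_ ?_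
  · intro m hm
    rw [Finset.mem_Icc] at hm
    show m - 1 ∈ Finset.Icc (2 * b - 1) (a + b - 1)
    rw [Finset.mem_Icc]
    omega
  · intro h hh
    rw [Finset.mem_Icc] at hh
    show h + 1 ∈ Finset.Icc (2 * b) (a + b)
    rw [Finset.mem_Icc]
    omega
  · intro m hm
    rw [Finset.mem_Icc] at hm
    show m - 1 + 1 = m
    omega
  · intro h hh
    show h + 1 - 1 = h
    omega
  · intro m hm
    rw [Finset.mem_Icc] at hm
    show _ = sytCount [m - 1 - (b - 1), b - 1]
    rw [fiber_card hb hba m (by omega) (by omega)]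
    congr 2
    omega

theorem stmt1 (n i : ℕ) (hn : 0 < n) (hi : 0 < i) (hi' : i ≤ n / 2) :
    alpha n i = ∑ h ∈ Finset.Icc (2 * i - 1) (n - 1), alpha h (i - 1) := by
  have hba : i ≤ n - i := by omega
  have h2 : n - i + i = n := by omega
  rw [alpha, main_rec (n - i) i hi hba, h2]
  rfl
end

section
/- For n ≥ 1, τ₂(n) = 2·τ₂(n−1) − E(n−1)·C_{(n−1)/2}, where E(m) = 1 if m is even and 0 otherwise, and C_k is the k-th Catalan number. -/
open Finset Filter Topology

/-- `tau s n` : the number of standard Young tableaux on `n` cells whose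
shape has at most `s` columns. -/
noncomputable def tau (s n : ℕ) : ℕ :=
  Nat.card {p : List ℕ × (ℕ × ℕ → ℕ) //
    p.1.length ≤ s ∧ p.1.Pairwise (· ≥ ·) ∧ (∀ x ∈ p.1, 0 < x) ∧
    p.1.sum = n ∧ IsSYT p.1 p.2}

/-- `Epar m = 1` if `m` is even, `0` otherwise. -/
def Epar (m : ℕ) : ℕ := if Even m then 1 else 0


open List DyckStep

instance : Finite DyckStep := Finite.of_equiv Bool ⟨fun b => if b then U else D, fun s => s = U, by intro b; cases b <;> simp, by intro s; cases s <;> simp⟩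

def IsBallot (w : List DyckStep) : Prop := ∀ i, (w.take i).count D ≤ (w.take i).count U

def BW (n : ℕ) := {w : List DyckStep // w.length = n ∧ IsBallot w}

def Bal (m : ℕ) := {w : List DyckStep // w.length = m ∧ IsBallot w ∧ w.count U = w.count D}

instance (n : ℕ) : Finite (BW n) := by
  have : Finite {w : List DyckStep // w.length = n} := (List.finite_length_eq DyckStep n).to_subtype
  exact Finite.of_injective (fun w : BW n => (⟨w.1, w.2.1⟩ : {w : List DyckStep // w.length = n}))
    (by rintro ⟨a, ha⟩ ⟨b, hb⟩ h; exact Subtype.ext (congrArg Subtype.val h : a = b))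

instance (n : ℕ) : Finite (Bal n) := by
  have : Finite {w : List DyckStep // w.length = n} := (List.finite_length_eq DyckStep n).to_subtype
  exact Finite.of_injective (fun w : Bal n => (⟨w.1, w.2.1⟩ : {w : List DyckStep // w.length = n}))
    (by rintro ⟨a, ha⟩ ⟨b, hb⟩ h; exact Subtype.ext (congrArg Subtype.val h : a = b))

lemma count_U_add_count_D (w : List DyckStep) : w.count U + w.count D = w.length := by
  induction w with
  | nil => simp
  | cons x t ih => cases x <;> simp [count_cons] <;> omega

lemma isBallot_iff_le_length (w : List DyckStep) :
    IsBallot w ↔ ∀ i ≤ w.length, (w.take i).count D ≤ (w.take i).count U := by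
  constructor
  · exact fun h i _ => h i
  · intro h i
    rcases le_or_gt i w.length with hi | hi
    · exact h i hi
    · rw [List.take_of_length_le hi.le]
      simpa using h w.length le_rfl

lemma isBallot_take (w : List DyckStep) (h : IsBallot w) (k : ℕ) : IsBallot (w.take k) := by
  intro i
  rw [List.take_take]
  exact h _

lemma ballot_count_le (w : List DyckStep) (h : IsBallot w) : w.count D ≤ w.count U := by
  simpa using h w.length

lemma isBallot_append_singleton (w : List DyckStep) (x : DyckStep) (hw : IsBallot w)
    (hx : x = U ∨ w.count D < w.count U) : IsBallot (w ++ [x]) := by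
  rw [isBallot_iff_le_length]
  intro i hi
  rcases lt_or_eq_of_le hi with hi | hi
  · rw [List.length_append, List.length_singleton] at hi
    rw [List.take_append_of_le_length (by omega)]
    exact hw i
  · subst hi
    rw [List.take_length]
    rcases hx with rfl | hx
    · simp [count_append]
      have := hw w.length
      simp at this
      omega
    · cases x <;> simp [count_append] <;> omega

lemma isBallot_dropLast (w : List DyckStep) (hw : IsBallot w) : IsBallot w.dropLast := by
  rw [List.dropLast_eq_take]
  exact isBallot_take w hw _


lemma card_Bal_even (k : ℕ) : Nat.card (Bal (2 * k)) = catalan k := by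
  have e : Bal (2 * k) ≃ {p : DyckWord // p.semilength = k} :=
    { toFun := fun w => ⟨⟨w.1, w.2.2.2, fun i => w.2.2.1 i⟩, by
        have := w.2.1
        have h2 := DyckWord.two_mul_semilength_eq_length (p := ⟨w.1, w.2.2.2, fun i => w.2.2.1 i⟩)
        simp only at h2
        omega⟩
      invFun := fun p => ⟨p.1.toList, by
        have := p.1.two_mul_semilength_eq_length
        rw [p.2] at this
        exact ⟨this.symm, fun i => p.1.count_D_le_count_U i, p.1.count_U_eq_count_D⟩⟩
      left_inv := fun w => rfl
      right_inv := fun p => rfl }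
  rw [Nat.card_congr e, Nat.card_eq_fintype_card]
  exact DyckWord.card_dyckWord_semilength_eq_catalan k

lemma card_Bal_odd (m : ℕ) (hm : ¬ Even m) : Nat.card (Bal m) = 0 := by
  have : IsEmpty (Bal m) := by
    constructor
    rintro ⟨w, hl, _, hc⟩
    have := count_U_add_count_D w
    exact hm ⟨w.count U, by omega⟩
  simp

def recEquiv (m : ℕ) : (BW (m + 1)) ⊕ (Bal m) ≃ BW m × Bool where
  toFun := fun x => match x with
    | Sum.inl ⟨w, hl, hb⟩ => (⟨w.dropLast, by simp [hl], isBallot_dropLast w hb⟩,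
        w.getLast? == some U)
    | Sum.inr ⟨w, hl, hb, _⟩ => (⟨w, hl, hb⟩, false)
  invFun := fun x =>
    if hb : x.2 = true then
      Sum.inl ⟨x.1.1 ++ [U], by simp [x.1.2.1], isBallot_append_singleton _ _ x.1.2.2 (Or.inl rfl)⟩
    else if hc : x.1.1.count U = x.1.1.count D then
      Sum.inr ⟨x.1.1, x.1.2.1, x.1.2.2, hc⟩
    else
      Sum.inl ⟨x.1.1 ++ [D], by simp [x.1.2.1], isBallot_append_singleton _ _ x.1.2.2
        (Or.inr (lt_of_le_of_ne (ballot_count_le _ x.1.2.2) (Ne.symm hc)))⟩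
  left_inv := by
    rintro (⟨w, hl, hb⟩ | ⟨w, hl, hb, hc⟩)
    · have hne : w ≠ [] := by intro h; simp [h] at hl
      have hsplit : w.dropLast ++ [w.getLast hne] = w := List.dropLast_append_getLast hne
      have hgl : w.getLast? = some (w.getLast hne) := List.getLast?_eq_getLast hne
      rcases (w.getLast hne).dichotomy with hU | hD
      · simp only [hgl, hU, beq_self_eq_true, dif_pos]
        congr 1
        apply Subtype.ext
        simp only
        rw [← hU, hsplit]
      · have hfalse : (w.getLast? == some U) = false := by
          rw [hgl, hD]; simp
        simp only [hfalse]
        have hcount : w.dropLast.count D < w.dropLast.count U := by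
          have h1 : w.count D = w.dropLast.count D + 1 := by
            conv_lhs => rw [← hsplit]
            rw [count_append, hD]; simp
          have h2 : w.count U = w.dropLast.count U := by
            conv_lhs => rw [← hsplit]
            rw [count_append, hD]; simp
          have := ballot_count_le w hb
          omega
        rw [dif_neg (by simp), dif_neg (by omega)]
        congr 1
        apply Subtype.ext
        simp only
        rw [← hD, hsplit]
    · dsimp only
      rw [dif_neg (by simp), dif_pos hc]
  right_inv := by
    rintro ⟨⟨w, hl, hb⟩, b⟩
    cases b
    · by_cases hc : w.count U = w.count D
      · dsimp only
        rw [dif_neg (by simp), dif_pos hc]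
      · dsimp only
        rw [dif_neg (by simp), dif_neg hc]
        simp
        rfl
    · dsimp only
      rw [dif_pos rfl]
      simp

lemma card_BW_rec (m : ℕ) : Nat.card (BW (m + 1)) + Nat.card (Bal m) = 2 * Nat.card (BW m) := by
  have := Nat.card_congr (recEquiv m)
  rw [Nat.card_sum, Nat.card_prod] at this
  simp [Nat.card_eq_fintype_card] at this
  omega



/-- column of a step -/
def colOf (s : DyckStep) : ℕ := match s with | U => 0 | D => 1

/-- cell occupied by value `i+1` in the tableau associated to `w` -/
def fcell (w : List DyckStep) (i : ℕ) : ℕ × ℕ :=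
  (colOf (w.getD i U), (w.take i).count (w.getD i U))

noncomputable def Tw (w : List DyckStep) (p : ℕ × ℕ) : ℕ :=
  if h : ∃ i, i < w.length ∧ fcell w i = p then Classical.choose h + 1 else 0

def lamOf (a b : ℕ) : List ℕ := if a = 0 then [] else if b = 0 then [a] else [a, b]

lemma colOf_inj {s t : DyckStep} (h : colOf s = colOf t) : s = t := by
  cases s <;> cases t <;> simp [colOf] at * <;> omega

lemma count_take_le (w : List DyckStep) (s : DyckStep) {i j : ℕ} (h : i ≤ j) :
    (w.take i).count s ≤ (w.take j).count s := by
  have : w.take i = (w.take j).take i := by rw [List.take_take, min_eq_left h]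
  rw [this]
  exact ((w.take j).take_sublist i).count_le s

lemma count_take_succ (w : List DyckStep) (s : DyckStep) {i : ℕ} (h : i < w.length) :
    (w.take (i + 1)).count s = (w.take i).count s + (if w.getD i U = s then 1 else 0) := by
  rw [← List.take_concat_get' w i h, count_append, List.getD_eq_getElem w U h]
  simp [count_singleton']

lemma count_take_lt (w : List DyckStep) {i : ℕ} (h : i < w.length) :
    (w.take i).count (w.getD i U) < w.count (w.getD i U) := by
  have h1 := count_take_succ w (w.getD i U) h
  rw [if_pos rfl] at h1
  have h2 := count_take_le w (w.getD i U) (show i + 1 ≤ w.length by omega)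
  rw [List.take_length] at h2
  omega

lemma fcell_injOn (w : List DyckStep) {i j : ℕ} (hi : i < w.length) (hj : j < w.length)
    (h : fcell w i = fcell w j) : i = j := by
  rcases Prod.mk.injEq .. ▸ h with ⟨h1, h2⟩
  have hs : w.getD i U = w.getD j U := colOf_inj h1
  rw [hs] at h2
  by_contra hne
  rcases Nat.lt_or_ge i j with hlt | hge
  · have := count_take_succ w (w.getD j U) hi
    rw [if_pos hs] at this
    have := count_take_le w (w.getD j U) (show i + 1 ≤ j by omega)
    omega
  · have hlt : j < i := by omega
    have h3 := count_take_succ w (w.getD j U) hj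
    rw [if_pos rfl] at h3
    have := count_take_le w (w.getD j U) (show j + 1 ≤ i by omega)
    omega

lemma Tw_eq_iff (w : List DyckStep) (p : ℕ × ℕ) (i : ℕ) :
    Tw w p = i + 1 ↔ i < w.length ∧ fcell w i = p := by
  constructor
  · intro h
    rw [Tw] at h
    split at h
    · next he =>
      have hs := Classical.choose_spec he
      have : Classical.choose he = i := by omega
      rwa [this] at hs
    · omega
  · rintro ⟨hi, hf⟩
    have he : ∃ k, k < w.length ∧ fcell w k = p := ⟨i, hi, hf⟩
    rw [Tw, dif_pos he]
    have hs := Classical.choose_spec he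
    have := fcell_injOn w hs.1 hi (hs.2.trans hf.symm)
    omega

lemma exists_fcell (w : List DyckStep) (s : DyckStep) {r : ℕ} (hr : r < w.count s) :
    ∃ i, i < w.length ∧ w.getD i U = s ∧ (w.take i).count s = r := by
  induction w generalizing r with
  | nil => simp at hr
  | cons x t ih =>
    by_cases hx : x = s
    · rcases Nat.eq_zero_or_pos r with rfl | hrp
      · exact ⟨0, by simp, by simp [hx], by simp⟩
      · obtain ⟨r', rfl⟩ := Nat.exists_eq_add_of_lt hrp
        rw [zero_add] at *
        have : r' < t.count s := by
          simp [count_cons, hx] at hr; omega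
        obtain ⟨i, hi, hgi, hci⟩ := ih this
        refine ⟨i + 1, by simpa using hi, by simpa using hgi, ?_⟩
        rw [List.take_succ_cons]
        simp [count_cons, hx, hci]
    · have : r < t.count s := by simp [count_cons, hx] at hr; omega
      obtain ⟨i, hi, hgi, hci⟩ := ih this
      refine ⟨i + 1, by simpa using hi, by simpa using hgi, ?_⟩
      rw [List.take_succ_cons]
      simp [count_cons, hx, hci]

lemma cells_lamOf {a b : ℕ} (hba : b ≤ a) :
    Cells (lamOf a b) = {p | (p.1 = 0 ∧ p.2 < a) ∨ (p.1 = 1 ∧ p.2 < b)} := by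
  ext ⟨c, r⟩
  rcases Nat.eq_zero_or_pos a with rfl | ha
  · have hb0 : b = 0 := by omega
    subst hb0
    simp [Cells, lamOf]
  · rcases Nat.eq_zero_or_pos b with rfl | hb
    · rcases c with _ | _ | c <;> simp [Cells, lamOf, ha.ne'] <;> omega
    · rcases c with _ | _ | c <;> simp [Cells, lamOf, ha.ne', hb.ne'] <;> omega

lemma ballot_count_le' (w : List DyckStep) (h : IsBallot w) : w.count D ≤ w.count U := by
  simpa using h w.length

lemma fcell_mem_cells (w : List DyckStep) (hw : IsBallot w) {i : ℕ} (hi : i < w.length) :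
    fcell w i ∈ Cells (lamOf (w.count U) (w.count D)) := by
  have hcl := count_take_lt w hi
  rw [cells_lamOf (ballot_count_le' w hw)]
  rcases (w.getD i U).dichotomy with hs | hs <;> rw [hs] at hcl <;>
    rw [Set.mem_setOf_eq, fcell, hs]
  · exact Or.inl ⟨rfl, hcl⟩
  · exact Or.inr ⟨rfl, hcl⟩

lemma count_U_add_count_D' (w : List DyckStep) : w.count U + w.count D = w.length := by
  induction w with
  | nil => simp
  | cons x t ih => cases x <;> simp [count_cons] <;> omega

lemma lamOf_sum {a b : ℕ} (hba : b ≤ a) : (lamOf a b).sum = a + b := by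
  rcases Nat.eq_zero_or_pos a with rfl | ha
  · have : b = 0 := by omega
    subst this; simp [lamOf]
  · rcases Nat.eq_zero_or_pos b with rfl | hb
    · simp [lamOf, ha.ne']
    · simp [lamOf, ha.ne', hb.ne']

lemma lamOf_length {a b : ℕ} : (lamOf a b).length ≤ 2 := by
  rw [lamOf]; split <;> [simp; skip]; split <;> simp

lemma lamOf_sorted {a b : ℕ} (hba : b ≤ a) : (lamOf a b).Pairwise (· ≥ ·) := by
  rw [lamOf]; split <;> [simp; skip]; split <;> simp [hba]

lemma lamOf_pos {a b : ℕ} : ∀ x ∈ lamOf a b, 0 < x := by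
  rw [lamOf]
  split
  · simp
  · next ha =>
    split
    · simpa using Nat.pos_of_ne_zero ha
    · next hb =>
      intro x hx
      simp only [List.mem_cons, List.not_mem_nil, or_false] at hx
      rcases hx with rfl | rfl <;> omega

lemma Tw_cell (w : List DyckStep) (hw : IsBallot w) {p : ℕ × ℕ}
    (hp : p ∈ Cells (lamOf (w.count U) (w.count D))) :
    ∃ i, i < w.length ∧ fcell w i = p ∧ Tw w p = i + 1 := by
  rw [cells_lamOf (ballot_count_le' w hw)] at hp
  obtain ⟨c, r⟩ := p
  have : ∃ s : DyckStep, c = colOf s ∧ r < w.count s := by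
    rcases hp with ⟨h1, h2⟩ | ⟨h1, h2⟩
    · exact ⟨U, by simpa [colOf] using h1, h2⟩
    · exact ⟨D, by simpa [colOf] using h1, h2⟩
  obtain ⟨s, rfl, hr⟩ := this
  obtain ⟨i, hi, hgi, hci⟩ := exists_fcell w s hr
  have hf : fcell w i = (colOf s, r) := by rw [fcell, hgi, hci]
  exact ⟨i, hi, hf, (Tw_eq_iff w _ i).mpr ⟨hi, hf⟩⟩

lemma isSYT_Tw (w : List DyckStep) (hw : IsBallot w) :
    IsSYT (lamOf (w.count U) (w.count D)) (Tw w) := by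
  have hba := ballot_count_le' w hw
  have hsum : (lamOf (w.count U) (w.count D)).sum = w.length := by
    rw [lamOf_sum hba, count_U_add_count_D']
  refine ⟨⟨?_, ?_, ?_⟩, ?_, ?_, ?_⟩
  · -- MapsTo
    intro p hp
    obtain ⟨i, hi, _, hT⟩ := Tw_cell w hw hp
    rw [hT, hsum]
    exact ⟨by omega, by omega⟩
  · -- InjOn
    intro p hp q hq hpq
    obtain ⟨i, hi, hfi, hTi⟩ := Tw_cell w hw hp
    obtain ⟨j, hj, hfj, hTj⟩ := Tw_cell w hw hq
    rw [hTi, hTj] at hpq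
    have : i = j := by omega
    rw [← hfi, ← hfj, this]
  · -- SurjOn
    intro k hk
    rw [hsum] at hk
    obtain ⟨hk1, hk2⟩ := hk
    have hi : k - 1 < w.length := by omega
    refine ⟨fcell w (k - 1), fcell_mem_cells w hw hi, ?_⟩
    have := (Tw_eq_iff w (fcell w (k - 1)) (k - 1)).mpr ⟨hi, rfl⟩
    rw [this]; omega
  · -- column increase
    rintro ⟨c, r⟩ hp ⟨c', r'⟩ hq (rfl : c = c') hrr
    obtain ⟨i, hi, hfi, hTi⟩ := Tw_cell w hw hp
    obtain ⟨j, hj, hfj, hTj⟩ := Tw_cell w hw hq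
    rw [hTi, hTj]
    rw [fcell, Prod.mk.injEq] at hfi hfj
    obtain ⟨hc1, hr1⟩ := hfi
    obtain ⟨hc2, hr2⟩ := hfj
    have hss : w.getD i U = w.getD j U := colOf_inj (hc1.trans hc2.symm)
    have hij : i < j := by
      by_contra hij
      have hmono := count_take_le w (w.getD j U) (show j ≤ i by omega)
      rw [hss] at hr1
      omega
    omega
  · -- row increase
    rintro ⟨c, r⟩ hp ⟨c', r'⟩ hq (rfl : r = r') hcc
    have hp' := hp
    have hq' := hq
    rw [cells_lamOf hba] at hp' hq'
    have hcs : c = 0 ∨ c = 1 := by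
      rcases hp' with ⟨h, _⟩ | ⟨h, _⟩ <;> [left; right] <;> simpa using h
    have hcs' : c' = 0 ∨ c' = 1 := by
      rcases hq' with ⟨h, _⟩ | ⟨h, _⟩ <;> [left; right] <;> simpa using h
    have hc0 : c = 0 := by omega
    have hc1 : c' = 1 := by omega
    subst hc0; subst hc1
    obtain ⟨i, hi, hfi, hTi⟩ := Tw_cell w hw hp
    obtain ⟨j, hj, hfj, hTj⟩ := Tw_cell w hw hq
    rw [hTi, hTj]
    rw [fcell, Prod.mk.injEq] at hfi hfj
    obtain ⟨hc1', hr1⟩ := hfi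
    obtain ⟨hc2', hr2⟩ := hfj
    have hsi : w.getD i U = U := by
      rcases (w.getD i U).dichotomy with h | h; exact h
      rw [h] at hc1'; simp [colOf] at hc1'
    have hsj : w.getD j U = D := by
      rcases (w.getD j U).dichotomy with h | h
      · rw [h] at hc2'; simp [colOf] at hc2'
      · exact h
    rw [hsi] at hr1
    rw [hsj] at hr2
    have hij : i < j := by
      have hne : i ≠ j := by
        intro h; rw [h, hsj] at hsi; cases hsi
      by_contra hij
      have hj1 : j + 1 ≤ i := by omega
      have h1 : (w.take (j+1)).count D = r + 1 := by
        rw [count_take_succ w D hj, if_pos hsj, hr2]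
      have h2 := hw (j + 1)
      have h3 := count_take_le w U hj1
      omega
    omega
  · -- zero outside
    intro p hp
    rw [Tw, dif_neg]
    rintro ⟨i, hi, hfi⟩
    exact hp (hfi ▸ fcell_mem_cells w hw hi)

lemma Tw_inj {w₁ w₂ : List DyckStep} (hl : w₁.length = w₂.length) (hT : Tw w₁ = Tw w₂) :
    w₁ = w₂ := by
  apply List.ext_getElem hl
  intro i h1 h2
  have h := (Tw_eq_iff w₁ (fcell w₁ i) i).mpr ⟨h1, rfl⟩
  rw [hT] at h
  obtain ⟨-, hf⟩ := (Tw_eq_iff w₂ (fcell w₁ i) i).mp h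
  rw [fcell, fcell, Prod.mk.injEq] at hf
  have := colOf_inj hf.1
  rwa [List.getD_eq_getElem _ _ h2, List.getD_eq_getElem _ _ h1, eq_comm] at this

lemma lam_eq_lamOf {lam : List ℕ} (hlen : lam.length ≤ 2) (hsort : lam.Pairwise (· ≥ ·))
    (hpos : ∀ x ∈ lam, 0 < x) :
    lam = lamOf (lam.getD 0 0) (lam.getD 1 0) ∧ lam.getD 1 0 ≤ lam.getD 0 0 := by
  rcases lam with _ | ⟨x, _ | ⟨y, _ | ⟨z, t⟩⟩⟩
  · simp [lamOf]
  · have hx : 0 < x := hpos x (by simp)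
    simp [lamOf, hx.ne']
  · have hx : 0 < x := hpos x (by simp)
    have hy : 0 < y := hpos y (by simp)
    have hxy : y ≤ x := by
      have := List.pairwise_cons.mp hsort
      exact this.1 y (by simp)
    simp [lamOf, hx.ne', hy.ne', hxy]
  · simp at hlen

lemma cells_of_lt_getD {lam : List ℕ} {c r : ℕ} (h : r < lam.getD c 0) : (c, r) ∈ Cells lam := by
  refine ⟨?_, h⟩
  by_contra hc
  rw [List.getD_eq_default _ _ (by omega)] at h
  omega

lemma exists_word (n : ℕ) (lam : List ℕ) (T : ℕ × ℕ → ℕ) (hlen : lam.length ≤ 2)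
    (hsort : lam.Pairwise (· ≥ ·)) (hpos : ∀ x ∈ lam, 0 < x) (hsum : lam.sum = n)
    (hsyt : IsSYT lam T) :
    ∃ w : List DyckStep, w.length = n ∧ IsBallot w ∧
      lamOf (w.count U) (w.count D) = lam ∧ Tw w = T := by
  classical
  obtain ⟨⟨hmaps, hinj, hsurj⟩, hcol, hrow, hzero⟩ := hsyt
  obtain ⟨hlam, hba⟩ := lam_eq_lamOf hlen hsort hpos
  set a := lam.getD 0 0 with ha_def
  set b := lam.getD 1 0 with hb_def
  have hcells : Cells lam = {p | (p.1 = 0 ∧ p.2 < a) ∨ (p.1 = 1 ∧ p.2 < b)} := by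
    rw [hlam]; exact cells_lamOf hba
  -- basic facts about T
  have hB : ∀ p ∈ Cells lam, 1 ≤ T p ∧ T p ≤ n := by
    intro p hp
    have := hmaps hp
    rw [hsum] at this
    exact this
  have hC : ∀ p i, T p = i + 1 → p ∈ Cells lam := by
    intro p i hT
    by_contra hp
    rw [hzero p hp] at hT
    omega
  have hA : ∀ i < n, ∃ p ∈ Cells lam, T p = i + 1 := by
    intro i hi
    have : i + 1 ∈ Set.Icc 1 lam.sum := by rw [hsum]; exact ⟨by omega, by omega⟩
    obtain ⟨p, hp, hTp⟩ := hsurj this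
    exact ⟨p, hp, hTp⟩
  -- the word
  set w : List DyckStep :=
    (List.range n).map (fun i => if ∃ r, T (0, r) = i + 1 then U else D) with hw_def
  have hwlen : w.length = n := by simp [hw_def]
  have hgetw : ∀ i, i < n → w.getD i U = if ∃ r, T (0, r) = i + 1 then U else D := by
    intro i hi
    rw [List.getD_eq_getElem _ _ (by omega)]
    simp [hw_def]
  have hcolU : ∀ i < n, (w.getD i U = U ↔ ∃ r, T (0, r) = i + 1) := by
    intro i hi
    rw [hgetw i hi]
    constructor
    · intro h
      by_contra hne
      rw [if_neg hne] at h
      cases h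
    · intro h; rw [if_pos h]
  have hcolD : ∀ i < n, (w.getD i U = D ↔ ∃ r, T (1, r) = i + 1) := by
    intro i hi
    rw [hgetw i hi]
    constructor
    · intro h
      obtain ⟨⟨pc, pr⟩, hp, hTp⟩ := hA i hi
      rw [hcells] at hp
      rcases hp with ⟨h1, h2⟩ | ⟨h1, h2⟩
      · exfalso
        have hpc : pc = 0 := h1
        subst hpc
        rw [if_pos ⟨pr, hTp⟩] at h
        cases h
      · have hpc : pc = 1 := h1
        subst hpc
        exact ⟨pr, hTp⟩
    · rintro ⟨r, hr⟩
      rw [if_neg]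
      rintro ⟨r', hr'⟩
      have h1 : (1, r) ∈ Cells lam := hC _ i hr
      have h0 : (0, r') ∈ Cells lam := hC _ i hr'
      have := hinj h0 h1 (hr'.trans hr.symm)
      simp at this
  -- the counting finsets
  set S : ℕ → ℕ → Finset ℕ :=
    fun c j => (Finset.range j).filter (fun i => ∃ r, T (c, r) = i + 1) with hS_def
  -- counts of prefixes
  have hcnt : ∀ j, j ≤ n →
      (w.take j).count U = (S 0 j).card ∧ (w.take j).count D = (S 1 j).card := by
    intro j hj
    induction j with
    | zero => simp [hS_def]
    | succ j ih =>
      obtain ⟨ihU, ihD⟩ := ih (by omega)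
      have hjn : j < n := by omega
      have hstepU := count_take_succ w U (show j < w.length by omega)
      have hstepD := count_take_succ w D (show j < w.length by omega)
      have hSsucc : ∀ c, S c (j + 1) =
          if ∃ r, T (c, r) = j + 1 then insert j (S c j) else S c j := by
        intro c
        rw [hS_def]
        simp only [Finset.range_add_one, Finset.filter_insert]
      have hnotmem : ∀ c, j ∉ S c j := by
        intro c
        rw [hS_def]
        simp
      constructor
      · rw [hstepU, ihU, hSsucc 0]
        by_cases h : ∃ r, T (0, r) = j + 1
        · rw [if_pos h, if_pos ((hcolU j hjn).mpr h),
            Finset.card_insert_of_notMem (hnotmem 0)]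
        · rw [if_neg h, if_neg (fun hu => h ((hcolU j hjn).mp hu))]
          omega
      · rw [hstepD, ihD, hSsucc 1]
        by_cases h : ∃ r, T (1, r) = j + 1
        · rw [if_pos h, if_pos ((hcolD j hjn).mpr h),
            Finset.card_insert_of_notMem (hnotmem 1)]
        · rw [if_neg h, if_neg (fun hu => h ((hcolD j hjn).mp hu))]
          omega
  -- cardinality of the counting sets via images
  have hcardS : ∀ c i m : ℕ, (∀ r', r' < m → (c, r') ∈ Cells lam) →
      (∀ r', r' < m → T (c, r') < i + 1) →
      (∀ j, j < i → (∃ r', T (c, r') = j + 1) → ∃ r', r' < m ∧ T (c, r') = j + 1) →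
      (S c i).card = m := by
    intro c i m hcm hlt hall
    have himg : S c i = (Finset.range m).image (fun r' => T (c, r') - 1) := by
      ext j
      rw [hS_def]
      simp only [Finset.mem_filter, Finset.mem_range, Finset.mem_image]
      constructor
      · rintro ⟨hji, hex⟩
        obtain ⟨r', hr'm, hr'⟩ := hall j hji hex
        exact ⟨r', hr'm, by omega⟩
      · rintro ⟨r', hr'm, hr'⟩
        have h1 := (hB _ (hcm r' hr'm)).1
        have h2 := hlt r' hr'm
        exact ⟨by omega, r', by omega⟩
    rw [himg, Finset.card_image_of_injOn, Finset.card_range]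
    intro r1 h1 r2 h2 heq
    dsimp only at heq
    simp only [Finset.coe_range, Set.mem_Iio] at h1 h2
    have hb1 := (hB _ (hcm r1 h1)).1
    have hb2 := (hB _ (hcm r2 h2)).1
    have hTeq : T (c, r1) = T (c, r2) := by omega
    have := hinj (hcm r1 h1) (hcm r2 h2) hTeq
    simpa using this
  -- strict column monotonicity helper
  have hcolmono : ∀ c r r', (c, r) ∈ Cells lam → r' < r → T (c, r') < T (c, r) := by
    intro c r r' hr hlt
    have hr2 : r < lam.getD c 0 := hr.2
    have hr' : (c, r') ∈ Cells lam := ⟨hr.1, show r' < lam.getD c 0 by omega⟩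
    exact hcol _ hr' _ hr rfl hlt
  -- the main counting identity: row index from prefix count
  have hrowcount : ∀ c r i, (c, r) ∈ Cells lam → T (c, r) = i + 1 → (S c i).card = r := by
    intro c r i hcr hT
    have hcr2 : r < lam.getD c 0 := hcr.2
    refine hcardS c i r (fun r' hr' => ⟨hcr.1, show r' < lam.getD c 0 by omega⟩)
      (fun r' hr' => by rw [← hT]; exact hcolmono c r r' hcr hr') ?_
    intro j hj ⟨r', hr'⟩
    refine ⟨r', ?_, hr'⟩
    have hcr' : (c, r') ∈ Cells lam := hC _ j hr'
    by_contra hge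
    rcases Nat.lt_or_ge r r' with hlt | hge'
    · have := hcolmono c r' r hcr' hlt
      omega
    · have : r = r' := by omega
      rw [this] at hT
      omega
  -- total counts
  have htotal : ∀ c, (S c n).card = lam.getD c 0 := by
    intro c
    refine hcardS c n (lam.getD c 0) (fun r' hr' => cells_of_lt_getD hr')
      (fun r' hr' => by have := (hB _ (cells_of_lt_getD hr')).2; omega) ?_
    intro j hj ⟨r', hr'⟩
    have hcr' : (c, r') ∈ Cells lam := hC _ j hr'
    exact ⟨r', hcr'.2, hr'⟩
  -- ballot property
  have hSle : ∀ j, (S 1 j).card ≤ (S 0 j).card := by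
    intro j
    refine Finset.card_le_card_of_injOn
      (fun i => if h : ∃ r, T (1, r) = i + 1 then T (0, Classical.choose h) - 1 else 0) ?_ ?_
    · intro i hi
      rw [hS_def] at hi
      simp only [Finset.coe_filter, Finset.mem_coe, Finset.mem_filter, Finset.mem_range, Set.mem_setOf_eq] at hi
      obtain ⟨hij, hex⟩ := hi
      dsimp only
      rw [dif_pos hex]
      have hspec := Classical.choose_spec hex
      set r := Classical.choose hex with hr_def
      have h1r : (1, r) ∈ Cells lam := hC _ i hspec
      have h0r : (0, r) ∈ Cells lam := by
        rw [hcells] at h1r ⊢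
        rcases h1r with ⟨h, _⟩ | ⟨_, h2⟩
        · simp at h
        · exact Or.inl ⟨rfl, by omega⟩
      have hTlt : T (0, r) < T (1, r) := hrow _ h0r _ h1r rfl (by omega)
      have hT1 := (hB _ h0r).1
      rw [hS_def]
      simp only [Finset.coe_filter, Finset.mem_coe, Finset.mem_filter, Finset.mem_range, Set.mem_setOf_eq]
      exact ⟨by omega, r, by omega⟩
    · intro i1 h1 i2 h2 heq
      rw [hS_def] at h1 h2
      simp only [Finset.coe_filter, Finset.mem_range, Set.mem_setOf_eq] at h1 h2
      obtain ⟨hi1, hex1⟩ := h1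
      obtain ⟨hi2, hex2⟩ := h2
      dsimp only at heq
      rw [dif_pos hex1, dif_pos hex2] at heq
      have hs1 := Classical.choose_spec hex1
      have hs2 := Classical.choose_spec hex2
      set r1 := Classical.choose hex1
      set r2 := Classical.choose hex2
      have h1r : (1, r1) ∈ Cells lam := hC _ i1 hs1
      have h2r : (1, r2) ∈ Cells lam := hC _ i2 hs2
      have h01 : (0, r1) ∈ Cells lam := by
        rw [hcells] at h1r ⊢
        rcases h1r with ⟨h, _⟩ | ⟨_, h⟩
        · simp at h
        · exact Or.inl ⟨rfl, by omega⟩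
      have h02 : (0, r2) ∈ Cells lam := by
        rw [hcells] at h2r ⊢
        rcases h2r with ⟨h, _⟩ | ⟨_, h⟩
        · simp at h
        · exact Or.inl ⟨rfl, by omega⟩
      have hb1 := (hB _ h01).1
      have hb2 := (hB _ h02).1
      have hTeq : T (0, r1) = T (0, r2) := by omega
      have := hinj h01 h02 hTeq
      simp only [Prod.mk.injEq, true_and] at this
      rw [this] at hs1
      omega
  have hballot : IsBallot w := by
    rw [isBallot_iff_le_length]
    intro j hj
    rw [hwlen] at hj
    obtain ⟨hU, hD⟩ := hcnt j hj
    rw [hU, hD]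
    exact hSle j
  -- the counts
  have hcU : w.count U = a := by
    have h := (hcnt n le_rfl).1
    rw [List.take_of_length_le (by omega : w.length ≤ n)] at h
    rw [h, htotal 0]
  have hcD : w.count D = b := by
    have h := (hcnt n le_rfl).2
    rw [List.take_of_length_le (by omega : w.length ≤ n)] at h
    rw [h, htotal 1]
  have hlamOf : lamOf (w.count U) (w.count D) = lam := by
    rw [hcU, hcD, ← hlam]
  refine ⟨w, hwlen, hballot, hlamOf, ?_⟩
  -- Tw w = T
  funext p
  by_cases hp : p ∈ Cells lam
  · obtain ⟨hp1, hp2⟩ := hB p hp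
    have hi : T p - 1 < n := by omega
    have hfc : fcell w (T p - 1) = p := by
      obtain ⟨c, r⟩ := p
      have hpc := hp
      rw [hcells] at hpc
      have hTeq : T (c, r) = (T (c, r) - 1) + 1 := by omega
      rcases hpc with ⟨hc0, hra⟩ | ⟨hc1, hrb⟩
      · have hc0' : c = 0 := hc0
        subst hc0'
        have hgU : w.getD (T (0, r) - 1) U = U :=
          (hcolU _ hi).mpr ⟨r, hTeq⟩
        rw [fcell, hgU]
        have := hrowcount 0 r (T (0, r) - 1) hp hTeq
        rw [(hcnt (T (0,r) - 1) (by omega)).1, this]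
        simp [colOf]
      · have hc1' : c = 1 := hc1
        subst hc1'
        have hgD : w.getD (T (1, r) - 1) U = D :=
          (hcolD _ hi).mpr ⟨r, hTeq⟩
        rw [fcell, hgD]
        have := hrowcount 1 r (T (1, r) - 1) hp hTeq
        rw [(hcnt (T (1,r) - 1) (by omega)).2, this]
        simp [colOf]
    have := (Tw_eq_iff w p (T p - 1)).mpr ⟨by omega, hfc⟩
    rw [this]
    omega
  · rw [hzero p hp, Tw, dif_neg]
    rintro ⟨i, hilen, hfi⟩
    have := fcell_mem_cells w hballot hilen
    rw [hfi, hlamOf] at this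
    exact hp this


noncomputable section

def Fmap (n : ℕ) (w : BW n) :
    {p : List ℕ × (ℕ × ℕ → ℕ) //
      p.1.length ≤ 2 ∧ p.1.Pairwise (· ≥ ·) ∧ (∀ x ∈ p.1, 0 < x) ∧
      p.1.sum = n ∧ IsSYT p.1 p.2} :=
  ⟨(lamOf (w.1.count U) (w.1.count D), Tw w.1),
    lamOf_length, lamOf_sorted (ballot_count_le' w.1 w.2.2), lamOf_pos,
    by rw [lamOf_sum (ballot_count_le' w.1 w.2.2), count_U_add_count_D', w.2.1],
    isSYT_Tw w.1 w.2.2⟩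

lemma Fmap_bijective (n : ℕ) : Function.Bijective (Fmap n) := by
  constructor
  · rintro ⟨w1, hl1, hb1⟩ ⟨w2, hl2, hb2⟩ h
    rw [Subtype.ext_iff, Prod.ext_iff] at h
    obtain ⟨-, hT⟩ := h
    exact Subtype.ext (Tw_inj (by rw [hl1, hl2]) hT)
  · rintro ⟨⟨lam, T⟩, hlen, hsort, hpos, hsum, hsyt⟩
    obtain ⟨w, hwlen, hballot, hlamOf, hTw⟩ :=
      exists_word n lam T hlen hsort hpos hsum hsyt
    refine ⟨⟨w, hwlen, hballot⟩, ?_⟩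
    apply Subtype.ext
    unfold Fmap
    exact Prod.ext hlamOf hTw

lemma tau_eq_card_BW (n : ℕ) : tau 2 n = Nat.card (BW n) :=
  (Nat.card_eq_of_bijective (Fmap n) (Fmap_bijective n)).symm

end

theorem stmt3 (n : ℕ) (hn : 1 ≤ n) :
    tau 2 n + Epar (n - 1) * catalan ((n - 1) / 2) = 2 * tau 2 (n - 1) := by
  obtain ⟨m, rfl⟩ : ∃ m, n = m + 1 := ⟨n - 1, by omega⟩
  simp only [Nat.add_sub_cancel]
  rw [tau_eq_card_BW, tau_eq_card_BW]
  have hbal : Epar m * catalan (m / 2) = Nat.card (Bal m) := by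
    by_cases hm : Even m
    · obtain ⟨k, hk⟩ := hm
      have : m = 2 * k := by omega
      subst this
      rw [Epar, if_pos ⟨k, by omega⟩, one_mul, card_Bal_even]
      congr 1
      omega
    · rw [Epar, if_neg hm, zero_mul, card_Bal_odd m hm]
  rw [hbal]
  exact card_BW_rec m
end

section
/- The number of standard Young tableaux with exactly n cells and at most two columns equals the central binomial coefficient binomial(n, ⌊n/2⌋). -/
open Finset Filter Topology

open Finset
open scoped symmDiff

namespace SYT2

def cnt (S : Finset ℕ) (m : ℕ) : ℕ := Nat.count (· ∈ S) m

noncomputable def nth (S : Finset ℕ) (r : ℕ) : ℕ := Nat.nth (· ∈ S) r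

lemma toFinset_card (S : Finset ℕ) (hf : {x | x ∈ S}.Finite) :
    hf.toFinset.card = S.card := by congr 1; ext; simp

lemma cnt_succ (S : Finset ℕ) (m : ℕ) :
    cnt S (m + 1) = cnt S m + if m ∈ S then 1 else 0 := by
  simp [cnt, Nat.count_succ]

lemma cnt_mono (S : Finset ℕ) : Monotone (cnt S) := Nat.count_monotone _

lemma cnt_le_card (S : Finset ℕ) (m : ℕ) : cnt S m ≤ S.card := by
  simpa [cnt, toFinset_card] using Nat.count_le_card S.finite_toSet m

lemma cnt_eq_card (S : Finset ℕ) {n m : ℕ} (hS : S ⊆ range n) (h : n ≤ m) :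
    cnt S m = S.card := by
  rw [cnt, Nat.count_eq_card_filter_range]
  congr 1
  rw [Finset.filter_mem_eq_inter, Finset.inter_eq_right]
  exact hS.trans (Finset.range_subset_range.2 h)

/-- the ballot condition -/
def BallotP (S : Finset ℕ) : Prop := ∀ m, 2 * cnt S m ≤ m

instance : DecidablePred BallotP := fun S =>
  decidable_of_iff (∀ m < 2 * S.card, 2 * cnt S m ≤ m) (by
    constructor
    · intro h m
      by_cases hm : m < 2 * S.card
      · exact h m hm
      · exact le_trans (by have := cnt_le_card S m; omega) (le_of_not_gt hm)
    · exact fun h m _ => h m)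

lemma BallotP.card_le {S : Finset ℕ} {n : ℕ} (hS : S ⊆ range n) (hb : BallotP S) :
    2 * S.card ≤ n := by
  simpa [cnt_eq_card S hS le_rfl] using hb n

/- ### flip lemmas -/

lemma mem_flip {S : Finset ℕ} {t x : ℕ} :
    x ∈ S ∆ range t ↔ (x ∈ S ∧ ¬ x < t) ∨ (x < t ∧ x ∉ S) := by
  simp [Finset.mem_symmDiff, and_comm]

lemma cnt_flip_le {S : Finset ℕ} {t m : ℕ} (hm : m ≤ t) :
    cnt (S ∆ range t) m + cnt S m = m := by
  induction m with
  | zero => simp [cnt]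
  | succ m ih =>
    have hm' : m < t := hm
    rw [cnt_succ, cnt_succ]
    by_cases hS : m ∈ S <;>
      simp [hS, mem_flip, hm'] <;> omega

lemma cnt_flip_ge {S : Finset ℕ} {t m : ℕ} (hm : t ≤ m) :
    cnt (S ∆ range t) m + cnt S t = cnt S m + cnt (S ∆ range t) t := by
  induction m with
  | zero =>
    have : t = 0 := by omega
    subst this
    omega
  | succ m ih =>
    rcases Nat.lt_or_ge t (m+1) with h | h
    · have ht : t ≤ m := by omega
      have hnl : ¬ m < t := by omega
      have hmem : m ∈ S ∆ range t ↔ m ∈ S := by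
        simp [mem_flip, hnl]
      have ih' := ih ht
      rw [cnt_succ, cnt_succ]
      by_cases hS : m ∈ S <;> simp [hS, hmem] <;> omega
    · have : t = m + 1 := by omega
      subst this
      omega

lemma flip_subset {S : Finset ℕ} {t n : ℕ} (hS : S ⊆ range n) (ht : t ≤ n) :
    S ∆ range t ⊆ range n := by
  intro x hx
  rcases mem_flip.1 hx with ⟨h, _⟩ | ⟨h, _⟩
  · exact hS h
  · exact mem_range.2 (lt_of_lt_of_le h ht)

/- ### violations and first hitting times -/

def vio (S : Finset ℕ) : Prop := ∃ m, m < 2 * cnt S m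

def hit (S : Finset ℕ) : Prop := ∃ m, 2 * cnt S m + 1 ≤ m

lemma vio_iff_not_ballot {S : Finset ℕ} : vio S ↔ ¬ BallotP S := by
  unfold vio BallotP; push_neg; rfl

open scoped Classical in
noncomputable def flipV (S : Finset ℕ) : Finset ℕ :=
  if h : vio S then S ∆ range (Nat.find h) else S

open scoped Classical in
noncomputable def flipH (S : Finset ℕ) : Finset ℕ :=
  if h : hit S then S ∆ range (Nat.find h) else S

lemma vio_find_eq {S : Finset ℕ} (h : vio S) :
    2 * cnt S (Nat.find h) = Nat.find h + 1 := by
  have hs := Nat.find_spec h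
  rcases Nat.eq_zero_or_pos (Nat.find h) with h0 | h0
  · rw [h0] at hs ⊢; simp [cnt] at hs
  · obtain ⟨m, hm⟩ := Nat.exists_eq_add_of_lt h0
    rw [zero_add] at hm
    have hmin : ¬ (m < 2 * cnt S m) := Nat.find_min h (by omega)
    have := cnt_succ S m
    rw [hm] at hs ⊢
    by_cases hS : m ∈ S <;> simp [hS] at this <;> omega

lemma hit_find_eq {S : Finset ℕ} (h : hit S) :
    2 * cnt S (Nat.find h) + 1 = Nat.find h := by
  have hs := Nat.find_spec h
  rcases Nat.eq_zero_or_pos (Nat.find h) with h0 | h0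
  · omega
  · obtain ⟨m, hm⟩ := Nat.exists_eq_add_of_lt h0
    rw [zero_add] at hm
    have hmin : ¬ (2 * cnt S m + 1 ≤ m) := Nat.find_min h (by omega)
    have := cnt_succ S m
    rw [hm] at hs ⊢
    by_cases hS : m ∈ S <;> simp [hS] at this <;> omega

end SYT2

namespace SYT2
open scoped symmDiff
open Finset

lemma flipV_eq {S : Finset ℕ} (h : vio S) : flipV S = S ∆ range (Nat.find h) := by
  rw [flipV, dif_pos h]

lemma flipH_eq {S : Finset ℕ} (h : hit S) : flipH S = S ∆ range (Nat.find h) := by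
  rw [flipH, dif_pos h]

lemma bad_card {n k : ℕ} (hk : 1 ≤ k) (hkn : 2 * k ≤ n) :
    #((range n).powerset.filter fun S => S.card = k ∧ ¬ BallotP S)
      = #((range n).powerset.filter fun S => S.card = k - 1) := by
  apply Finset.card_bij' (fun S _ => flipV S) (fun S' _ => flipH S')
  · -- hi : flipV maps bad k-sets to (k-1)-sets
    intro S hS
    rw [mem_filter, mem_powerset] at hS
    obtain ⟨hSn, hck, hnb⟩ := hS
    have h : vio S := vio_iff_not_ballot.2 hnb
    set t := Nat.find h with htdef
    have te : 2 * cnt S t = t + 1 := vio_find_eq h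
    have hcnt : cnt S t ≤ k := hck ▸ cnt_le_card S t
    have htn : t + 1 ≤ n := by omega
    rw [flipV_eq h, mem_filter, mem_powerset, ← htdef]
    have hsub : S ∆ range t ⊆ range n := flip_subset hSn (by omega)
    refine ⟨hsub, ?_⟩
    have h1 := cnt_flip_ge (S := S) (t := t) (m := n) (by omega)
    have h2 := cnt_flip_le (S := S) (t := t) (m := t) le_rfl
    have h3 : cnt S n = k := by rw [cnt_eq_card S hSn le_rfl, hck]
    have h4 : cnt (S ∆ range t) n = (S ∆ range t).card :=
      cnt_eq_card _ hsub le_rfl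
    omega
  · -- hj : flipH maps (k-1)-sets to bad k-sets
    intro S hS
    rw [mem_filter, mem_powerset] at hS
    obtain ⟨hSn, hck⟩ := hS
    have hcn : cnt S n = k - 1 := by rw [cnt_eq_card S hSn le_rfl, hck]
    have h : hit S := ⟨n, by omega⟩
    set t := Nat.find h with htdef
    have te : 2 * cnt S t + 1 = t := hit_find_eq h
    have hcnt : cnt S t ≤ k - 1 := hck ▸ cnt_le_card S t
    have htn : t + 1 ≤ n := by omega
    rw [flipH_eq h, mem_filter, mem_powerset, ← htdef]
    have hsub : S ∆ range t ⊆ range n := flip_subset hSn (by omega)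
    have h1 := cnt_flip_ge (S := S) (t := t) (m := n) (by omega)
    have h2 := cnt_flip_le (S := S) (t := t) (m := t) le_rfl
    have h4 : cnt (S ∆ range t) n = (S ∆ range t).card :=
      cnt_eq_card _ hsub le_rfl
    refine ⟨hsub, by omega, ?_⟩
    rw [← vio_iff_not_ballot]
    exact ⟨t, by omega⟩
  · -- left inverse
    intro S hS
    rw [mem_filter, mem_powerset] at hS
    obtain ⟨hSn, hck, hnb⟩ := hS
    have h : vio S := vio_iff_not_ballot.2 hnb
    set t := Nat.find h with htdef
    have te : 2 * cnt S t = t + 1 := vio_find_eq h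
    have h2 := cnt_flip_le (S := S) (t := t) (m := t) le_rfl
    rw [flipV_eq h]
    have hh : hit (S ∆ range t) := ⟨t, by omega⟩
    have hfind : Nat.find hh = t := by
      refine le_antisymm (Nat.find_le (by omega)) ?_
      refine Nat.le_find_iff hh t |>.2 fun m hm hcon => ?_
      have hmin : ¬ (m < 2 * cnt S m) := Nat.find_min h hm
      have h3 := cnt_flip_le (S := S) (t := t) (m := m) (le_of_lt hm)
      omega
    rw [flipH_eq hh, hfind, symmDiff_symmDiff_cancel_right]
  · -- right inverse
    intro S hS
    rw [mem_filter, mem_powerset] at hS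
    obtain ⟨hSn, hck⟩ := hS
    have hcn : cnt S n = k - 1 := by rw [cnt_eq_card S hSn le_rfl, hck]
    have h : hit S := ⟨n, by omega⟩
    set t := Nat.find h with htdef
    have te : 2 * cnt S t + 1 = t := hit_find_eq h
    have h2 := cnt_flip_le (S := S) (t := t) (m := t) le_rfl
    rw [flipH_eq h]
    have hh : vio (S ∆ range t) := ⟨t, by omega⟩
    have hfind : Nat.find hh = t := by
      refine le_antisymm (Nat.find_le (by omega)) ?_
      refine Nat.le_find_iff hh t |>.2 fun m hm hcon => ?_
      have hmin : ¬ (2 * cnt S m + 1 ≤ m) := Nat.find_min h hm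
      have h3 := cnt_flip_le (S := S) (t := t) (m := m) (le_of_lt hm)
      omega
    rw [flipV_eq hh, hfind, symmDiff_symmDiff_cancel_right]

end SYT2

namespace SYT2
open Finset

lemma cnt_empty (m : ℕ) : cnt ∅ m = 0 := by
  induction m with
  | zero => simp [cnt]
  | succ m ih => rw [cnt_succ]; simp [ih]

lemma ballot_empty : BallotP ∅ := fun m => by simp [cnt_empty]

lemma card_filter_card (n k : ℕ) :
    #((range n).powerset.filter fun S => S.card = k) = n.choose k := by
  rw [← powersetCard_eq_filter, card_powersetCard, card_range]

lemma good_card {n k : ℕ} (hk : 1 ≤ k) (hkn : 2 * k ≤ n) :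
    #((range n).powerset.filter fun S => S.card = k ∧ BallotP S)
      = n.choose k - n.choose (k - 1) := by
  have key : #(((range n).powerset.filter fun S => S.card = k).filter BallotP)
      + #(((range n).powerset.filter fun S => S.card = k).filter fun S => ¬ BallotP S)
      = #((range n).powerset.filter fun S => S.card = k) :=
    Finset.card_filter_add_card_filter_not _
  rw [filter_filter, filter_filter] at key
  rw [card_filter_card] at key
  have hbad : #((range n).powerset.filter fun S => S.card = k ∧ ¬ BallotP S)
      = n.choose (k - 1) := by
    rw [bad_card hk hkn, card_filter_card]
  omega

lemma good_zero_card (n : ℕ) :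
    #((range n).powerset.filter fun S => S.card = 0 ∧ BallotP S) = 1 := by
  have : ((range n).powerset.filter fun S => S.card = 0 ∧ BallotP S) = {∅} := by
    ext S
    simp only [mem_filter, mem_powerset, mem_singleton, Finset.card_eq_zero]
    constructor
    · tauto
    · rintro rfl
      exact ⟨empty_subset _, rfl, ballot_empty⟩
  rw [this, card_singleton]

lemma sum_good (n : ℕ) : ∀ K, 2 * K ≤ n →
    (∑ j ∈ range (K + 1),
      #((range n).powerset.filter fun S => S.card = j ∧ BallotP S)) = n.choose K := by
  intro K
  induction K with
  | zero => intro _; simpa using good_zero_card n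
  | succ K ih =>
    intro hK
    rw [Finset.sum_range_succ, ih (by omega), good_card (by omega) hK]
    have hmono : n.choose K ≤ n.choose (K + 1) :=
      Nat.choose_le_succ_of_lt_half_left (by omega)
    simp only [Nat.add_sub_cancel]
    omega

theorem ballot_card (n : ℕ) :
    #((range n).powerset.filter BallotP) = n.choose (n / 2) := by
  have hfib : ∀ S ∈ (range n).powerset.filter BallotP, S.card ∈ range (n / 2 + 1) := by
    intro S hS
    rw [mem_filter, mem_powerset] at hS
    have := hS.2.card_le hS.1
    rw [mem_range]
    omega
  rw [Finset.card_eq_sum_card_fiberwise hfib]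
  have hfiber : ∀ j, (((range n).powerset.filter BallotP).filter fun S => S.card = j)
      = (range n).powerset.filter fun S => S.card = j ∧ BallotP S := by
    intro j
    rw [filter_filter]
    exact filter_congr fun S _ => by tauto
  calc (∑ j ∈ range (n / 2 + 1), #(((range n).powerset.filter BallotP).filter fun S => S.card = j))
      = ∑ j ∈ range (n / 2 + 1),
          #((range n).powerset.filter fun S => S.card = j ∧ BallotP S) := by
        exact Finset.sum_congr rfl fun j _ => by rw [hfiber]
    _ = n.choose (n / 2) := sum_good n (n / 2) (by omega)

end SYT2

namespace SYT2
open Finset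

lemma nth_mem {S : Finset ℕ} {r : ℕ} (h : r < S.card) : nth S r ∈ S :=
  Nat.nth_mem r (fun hf => by rwa [toFinset_card])

lemma cnt_nth {S : Finset ℕ} {r : ℕ} (h : r < S.card) : cnt S (nth S r) = r :=
  Nat.count_nth (fun hf => by rwa [toFinset_card])

lemma nth_cnt {S : Finset ℕ} {x : ℕ} (h : x ∈ S) : nth S (cnt S x) = x :=
  Nat.nth_count h

lemma nth_lt_of_lt_cnt {S : Finset ℕ} {m k : ℕ} (h : k < cnt S m) : nth S k < m :=
  Nat.nth_lt_of_lt_count h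

lemma nth_lt_nth {S : Finset ℕ} {r s : ℕ} (h : r < s) (hs : s < S.card) :
    nth S r < nth S s :=
  Nat.nth_lt_nth_of_lt_card S.finite_toSet h (by rwa [toFinset_card])

lemma cnt_nth_succ {S : Finset ℕ} {r : ℕ} (h : r < S.card) :
    cnt S (nth S r + 1) = r + 1 := by
  rw [cnt_succ, cnt_nth h, if_pos (nth_mem h)]

lemma cnt_lt_card_of_mem {S : Finset ℕ} {x : ℕ} (hx : x ∈ S) : cnt S x < S.card := by
  have h1 : cnt S (x + 1) = cnt S x + 1 := by rw [cnt_succ, if_pos hx]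
  have := cnt_le_card S (x + 1)
  omega

/-- counts of a set and its complement in `range n` add to `m`, for `m ≤ n`. -/
lemma cnt_compl_add {S : Finset ℕ} {n m : ℕ} (h : m ≤ n) :
    cnt (range n \ S) m + cnt S m = m := by
  induction m with
  | zero => simp [cnt]
  | succ m ih =>
    have hm : m < n := h
    have hmem : m ∈ range n \ S ↔ m ∉ S := by simp [hm]
    have := ih (by omega)
    rw [cnt_succ, cnt_succ]
    by_cases hS : m ∈ S <;> simp [hS, hmem] <;> omega

lemma cnt_eq_filter (S : Finset ℕ) (m : ℕ) : cnt S m = #(S.filter (· < m)) := by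
  rw [cnt, Nat.count_eq_card_filter_range]
  congr 1
  ext x
  simp [and_comm]

/-- a strictly monotone enumeration of `S` coincides with `nth S`. -/
lemma eq_nth_of_image {S : Finset ℕ} {f : ℕ → ℕ} {m : ℕ} (hcard : S.card = m)
    (hmono : ∀ i j, i < j → j < m → f i < f j)
    (himg : ∀ i < m, f i ∈ S) (hsurj : ∀ x ∈ S, ∃ i < m, f i = x) :
    ∀ r < m, f r = nth S r := by
  intro r hr
  have hfr : f r ∈ S := himg r hr
  suffices hc : cnt S (f r) = r by
    conv_rhs => rw [← hc]
    rw [nth_cnt hfr]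
  have hset : S.filter (· < f r) = (range r).image f := by
    ext x
    simp only [mem_filter, mem_image, mem_range]
    constructor
    · rintro ⟨hxS, hxlt⟩
      obtain ⟨i, hi, rfl⟩ := hsurj x hxS
      refine ⟨i, ?_, rfl⟩
      by_contra hge
      rcases Nat.lt_or_ge i r with h | h
      · exact hge h
      · rcases Nat.eq_or_lt_of_le h with rfl | h
        · omega
        · exact absurd (hmono r i h hi) (by omega)
    · rintro ⟨i, hi, rfl⟩
      exact ⟨himg i (by omega), hmono i r hi hr⟩
  rw [cnt_eq_filter, hset, Finset.card_image_of_injOn, card_range]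
  intro i hi j hj hij
  rw [mem_coe, mem_range] at hi hj
  by_contra hne
  rcases Nat.lt_or_ge i j with h | h
  · exact absurd (hmono i j h (by omega)) (by omega)
  · exact absurd (hmono j i (by omega) (by omega)) (by omega)

lemma nth_image (S : Finset ℕ) : (range S.card).image (nth S) = S := by
  ext x
  simp only [mem_image, mem_range]
  constructor
  · rintro ⟨r, hr, rfl⟩; exact nth_mem hr
  · intro hx
    exact ⟨cnt S x, cnt_lt_card_of_mem hx, nth_cnt hx⟩

/-- first column: complement of `S` in `range n` -/
def colA (n : ℕ) (S : Finset ℕ) : Finset ℕ := range n \ S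

lemma colA_card {n : ℕ} {S : Finset ℕ} (hS : S ⊆ range n) :
    (colA n S).card = n - S.card := by
  rw [colA, card_sdiff_of_subset hS, card_range]

lemma mem_colA {n x : ℕ} {S : Finset ℕ} : x ∈ colA n S ↔ x < n ∧ x ∉ S := by
  simp [colA]

/-- ballot condition implies entries of the first column are smaller rowwise -/
lemma row_lt {S : Finset ℕ} {n r : ℕ} (hS : S ⊆ range n) (hb : BallotP S)
    (hr : r < S.card) : nth (colA n S) r < nth S r := by
  have hx : nth S r ∈ S := nth_mem hr
  have hxn : nth S r < n := mem_range.1 (hS hx)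
  have h1 : cnt S (nth S r + 1) = r + 1 := cnt_nth_succ hr
  have h2 := hb (nth S r + 1)
  have h3 : cnt (range n \ S) (nth S r + 1) + cnt S (nth S r + 1) = nth S r + 1 :=
    cnt_compl_add (by omega)
  have h4 : nth (colA n S) r < nth S r + 1 := nth_lt_of_lt_cnt (by rw [colA]; omega)
  have hcard : 2 * S.card ≤ n := hb.card_le hS
  have h5 : nth (colA n S) r ∈ colA n S := nth_mem (by rw [colA_card hS]; omega)
  have h6 : nth (colA n S) r ∉ S := (mem_colA.1 h5).2
  rcases Nat.eq_or_lt_of_le (Nat.lt_succ_iff.1 h4) with h | h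
  · exact absurd (h ▸ hx) h6
  · exact h

/-- rowwise comparison implies the ballot condition -/
lemma ballot_of_row_lt {S : Finset ℕ} {n : ℕ} (hS : S ⊆ range n)
    (hba : S.card ≤ n - S.card)
    (h : ∀ r < S.card, nth (colA n S) r < nth S r) : BallotP S := by
  have key : ∀ m, m ≤ n → 2 * cnt S m ≤ m := by
    intro m hm
    by_cases hj : cnt S m = 0
    · omega
    have hjc : cnt S m ≤ S.card := cnt_le_card S m
    have hj1 : cnt S m - 1 < S.card := by omega
    have hx : nth S (cnt S m - 1) < m := nth_lt_of_lt_cnt (by omega)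
    have hrow := h (cnt S m - 1) hj1
    have hAc : cnt S m - 1 < (colA n S).card := by rw [colA_card hS]; omega
    have h6 : cnt (colA n S) (nth (colA n S) (cnt S m - 1) + 1) = cnt S m - 1 + 1 :=
      cnt_nth_succ hAc
    have h7 : cnt (colA n S) (nth (colA n S) (cnt S m - 1) + 1) ≤ cnt (colA n S) m :=
      cnt_mono _ (by omega)
    have h8 : cnt (range n \ S) m + cnt S m = m := cnt_compl_add hm
    rw [← colA] at h8
    omega
  intro m
  rcases le_or_gt m n with hm | hm
  · exact key m hm
  · have h9 : cnt S m = S.card := cnt_eq_card S hS (by omega)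
    have h10 := key n le_rfl
    rw [cnt_eq_card S hS le_rfl] at h10
    omega

end SYT2

namespace SYT2
open Finset

/-- the two-column shape associated to the set `S` of second-column entries -/
def shapeOf (n : ℕ) (S : Finset ℕ) : List ℕ :=
  if S = ∅ then (if n = 0 then [] else [n]) else [n - S.card, S.card]

/-- the tableau associated to `S` -/
noncomputable def tabOf (n : ℕ) (S : Finset ℕ) : ℕ × ℕ → ℕ := fun p =>
  if p.1 = 0 ∧ p.2 < n - S.card then nth (colA n S) p.2 + 1
  else if p.1 = 1 ∧ p.2 < S.card then nth S p.2 + 1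
  else 0

/-- description of the cells of the possible shapes -/
def CellsEq (lam : List ℕ) (a b : ℕ) : Prop :=
  ∀ p : ℕ × ℕ, p ∈ Cells lam ↔ (p.1 = 0 ∧ p.2 < a) ∨ (p.1 = 1 ∧ p.2 < b)

lemma cellsEq_nil : CellsEq [] 0 0 := by
  rintro ⟨c, r⟩
  simp [Cells]

lemma cellsEq_single (x : ℕ) : CellsEq [x] x 0 := by
  rintro ⟨c, r⟩
  show (c < 1 ∧ r < [x].getD c 0) ↔ _
  rcases c with _ | c <;> simp [List.getD]

lemma cellsEq_pair (x y : ℕ) : CellsEq [x, y] x y := by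
  rintro ⟨c, r⟩
  show (c < 2 ∧ r < [x, y].getD c 0) ↔ _
  rcases c with _ | _ | c <;> simp [List.getD]

lemma cellsEq_shapeOf {n : ℕ} {S : Finset ℕ} (hS : S ⊆ range n) :
    CellsEq (shapeOf n S) (n - S.card) S.card := by
  rw [shapeOf]
  by_cases hE : S = ∅
  · subst hE
    rw [if_pos rfl]
    by_cases hn : n = 0
    · subst hn
      rw [if_pos rfl]
      intro p
      rw [cellsEq_nil p]
      simp
    · rw [if_neg hn]
      intro p
      rw [cellsEq_single n p]
      simp only [Finset.card_empty, Nat.sub_zero]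
  · rw [if_neg hE]
    exact cellsEq_pair _ _

lemma shapeOf_sum {n : ℕ} {S : Finset ℕ} (hS : S ⊆ range n) :
    (shapeOf n S).sum = n := by
  have hle : S.card ≤ n := by simpa using card_le_card hS
  rw [shapeOf]
  by_cases hE : S = ∅
  · subst hE
    by_cases hn : n = 0 <;> simp [hn]
  · rw [if_neg hE]
    simp
    omega

lemma tabOf_isSYT {n : ℕ} {S : Finset ℕ} (hS : S ⊆ range n) (hb : BallotP S) :
    IsSYT (shapeOf n S) (tabOf n S) := by
  have hcells := cellsEq_shapeOf hS
  have hcard : 2 * S.card ≤ n := hb.card_le hS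
  have hAcard : (colA n S).card = n - S.card := colA_card hS
  have hsum : (shapeOf n S).sum = n := shapeOf_sum hS
  have hval0 : ∀ p : ℕ × ℕ, p.1 = 0 → p.2 < n - S.card →
      tabOf n S p = nth (colA n S) p.2 + 1 := by
    intro p h1 h2
    rw [tabOf, if_pos ⟨h1, h2⟩]
  have hval1 : ∀ p : ℕ × ℕ, p.1 = 1 → p.2 < S.card →
      tabOf n S p = nth S p.2 + 1 := by
    intro p h1 h2
    rw [tabOf, if_neg (by omega), if_pos ⟨h1, h2⟩]
  have hmem0 : ∀ r < n - S.card, nth (colA n S) r < n ∧ nth (colA n S) r ∉ S := by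
    intro r hr
    exact mem_colA.1 (nth_mem (by omega))
  have hmem1 : ∀ r < S.card, nth S r ∈ S ∧ nth S r < n := by
    intro r hr
    exact ⟨nth_mem hr, mem_range.1 (hS (nth_mem hr))⟩
  refine ⟨⟨?_, ?_, ?_⟩, ?_, ?_, ?_⟩
  · -- MapsTo
    intro p hp
    rw [hsum]
    simp only [Set.mem_Icc]
    rcases (hcells p).1 hp with ⟨h0, hr⟩ | ⟨h0, hr⟩
    · rw [hval0 p h0 hr]
      have := hmem0 p.2 hr
      omega
    · rw [hval1 p h0 hr]
      have := hmem1 p.2 hr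
      omega
  · -- InjOn
    intro p hp q hq hT
    rcases (hcells p).1 hp with ⟨h0, hr⟩ | ⟨h0, hr⟩ <;>
        rcases (hcells q).1 hq with ⟨h0', hr'⟩ | ⟨h0', hr'⟩
    · rw [hval0 p h0 hr, hval0 q h0' hr'] at hT
      refine Prod.ext (by omega) ?_
      have h5 : cnt (colA n S) (nth (colA n S) p.2) = cnt (colA n S) (nth (colA n S) q.2) := by
        rw [Nat.succ_injective hT]
      rwa [cnt_nth (by omega), cnt_nth (by omega)] at h5
    · rw [hval0 p h0 hr, hval1 q h0' hr'] at hT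
      have h5 := hmem0 p.2 hr
      have h6 := hmem1 q.2 hr'
      rw [Nat.succ_injective hT] at h5
      exact absurd h6.1 h5.2
    · rw [hval1 p h0 hr, hval0 q h0' hr'] at hT
      have h5 := hmem0 q.2 hr'
      have h6 := hmem1 p.2 hr
      rw [← Nat.succ_injective hT] at h5
      exact absurd h6.1 h5.2
    · rw [hval1 p h0 hr, hval1 q h0' hr'] at hT
      refine Prod.ext (by omega) ?_
      have h5 : cnt S (nth S p.2) = cnt S (nth S q.2) := by
        rw [Nat.succ_injective hT]
      rwa [cnt_nth hr, cnt_nth hr'] at h5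
  · -- SurjOn
    intro x hx
    rw [hsum] at hx
    obtain ⟨hx1, hxn⟩ := hx
    have hxr : x - 1 < n := by omega
    by_cases hxS : x - 1 ∈ S
    · refine ⟨(1, cnt S (x - 1)), ?_, ?_⟩
      · exact (hcells _).2 (Or.inr ⟨rfl, cnt_lt_card_of_mem hxS⟩)
      · rw [hval1 _ rfl (cnt_lt_card_of_mem hxS)]
        show nth S (cnt S (x - 1)) + 1 = x
        rw [nth_cnt hxS]
        omega
    · have hxA : x - 1 ∈ colA n S := mem_colA.2 ⟨hxr, hxS⟩
      have hcA : cnt (colA n S) (x - 1) < n - S.card := by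
        have := cnt_lt_card_of_mem hxA
        omega
      refine ⟨(0, cnt (colA n S) (x - 1)), ?_, ?_⟩
      · exact (hcells _).2 (Or.inl ⟨rfl, hcA⟩)
      · rw [hval0 _ rfl hcA]
        show nth (colA n S) (cnt (colA n S) (x - 1)) + 1 = x
        rw [nth_cnt hxA]
        omega
  · -- columns increasing
    intro p hp q hq hcc hrr
    rcases (hcells p).1 hp with ⟨h0, hr⟩ | ⟨h0, hr⟩ <;>
        rcases (hcells q).1 hq with ⟨h0', hr'⟩ | ⟨h0', hr'⟩ <;>
        try omega
    · rw [hval0 p h0 hr, hval0 q h0' hr']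
      have := nth_lt_nth (S := colA n S) hrr (by omega)
      omega
    · rw [hval1 p h0 hr, hval1 q h0' hr']
      have := nth_lt_nth (S := S) hrr hr'
      omega
  · -- rows increasing
    intro p hp q hq hrr hcc
    rcases (hcells p).1 hp with ⟨h0, hr⟩ | ⟨h0, hr⟩ <;>
        rcases (hcells q).1 hq with ⟨h0', hr'⟩ | ⟨h0', hr'⟩ <;>
        try omega
    rw [hval0 p h0 hr, hval1 q h0' hr']
    rw [hrr]
    have := row_lt hS hb hr'
    omega
  · -- zero outside
    intro p hp
    rw [tabOf, if_neg, if_neg]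
    · intro hcon
      exact hp ((hcells p).2 (Or.inr hcon))
    · intro hcon
      exact hp ((hcells p).2 (Or.inl hcon))

end SYT2

namespace SYT2
open Finset

lemma shapeOf_len (n : ℕ) (S : Finset ℕ) : (shapeOf n S).length ≤ 2 := by
  rw [shapeOf]
  split_ifs <;> simp

lemma shapeOf_sorted {n : ℕ} {S : Finset ℕ} (hS : S ⊆ range n) (hb : BallotP S) :
    (shapeOf n S).Pairwise (· ≥ ·) := by
  have hcard : 2 * S.card ≤ n := hb.card_le hS
  rw [shapeOf]
  split_ifs <;> simp <;> omega

lemma shapeOf_pos {n : ℕ} {S : Finset ℕ} (hS : S ⊆ range n) (hb : BallotP S) :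
    ∀ x ∈ shapeOf n S, 0 < x := by
  have hcard : 2 * S.card ≤ n := hb.card_le hS
  rw [shapeOf]
  split_ifs with h1 h2
  · simp
  · simp; omega
  · have : 0 < S.card := card_pos.2 (nonempty_iff_ne_empty.2 h1)
    intro x hx
    simp at hx
    rcases hx with rfl | rfl <;> omega

/-- value of the shape at index 1 recovers the cardinality -/
lemma shapeOf_getD_one (n : ℕ) (S : Finset ℕ) : (shapeOf n S).getD 1 0 = S.card := by
  rw [shapeOf]
  split_ifs with h1 h2 <;> simp [h1]

lemma tabOf_col1 {n : ℕ} (S : Finset ℕ) {r : ℕ} (hr : r < S.card) :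
    tabOf n S (1, r) = nth S r + 1 := by
  rw [tabOf, if_neg (by simp), if_pos ⟨rfl, hr⟩]

/-- recover `S` from its tableau -/
lemma S_eq_image (n : ℕ) (S : Finset ℕ) :
    S = (range S.card).image (fun r => tabOf n S (1, r) - 1) := by
  conv_lhs => rw [← nth_image S]
  apply image_congr
  intro r hr
  rw [mem_coe, mem_range] at hr
  show nth S r = tabOf n S (1, r) - 1
  rw [tabOf_col1 S hr]
  omega

noncomputable def Phi (n : ℕ) (S : {S : Finset ℕ // S ⊆ range n ∧ BallotP S}) :
    {p : List ℕ × (ℕ × ℕ → ℕ) //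
      p.1.length ≤ 2 ∧ p.1.Pairwise (· ≥ ·) ∧ (∀ x ∈ p.1, 0 < x) ∧
      p.1.sum = n ∧ IsSYT p.1 p.2} :=
  ⟨(shapeOf n S.1, tabOf n S.1),
    shapeOf_len n S.1, shapeOf_sorted S.2.1 S.2.2, shapeOf_pos S.2.1 S.2.2,
    shapeOf_sum S.2.1, tabOf_isSYT S.2.1 S.2.2⟩

lemma Phi_injective (n : ℕ) : Function.Injective (Phi n) := by
  rintro ⟨S₁, hS₁⟩ ⟨S₂, hS₂⟩ h
  rw [Subtype.mk.injEq, Prod.mk.injEq] at h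
  obtain ⟨hsh, htab⟩ := h
  have hsh' : shapeOf n S₁ = shapeOf n S₂ := hsh
  have htab' : tabOf n S₁ = tabOf n S₂ := htab
  have hc : S₁.card = S₂.card := by
    rw [← shapeOf_getD_one n S₁, ← shapeOf_getD_one n S₂, hsh']
  apply Subtype.ext
  show S₁ = S₂
  rw [S_eq_image n S₁, S_eq_image n S₂, hc, htab']

/-- main surjectivity auxiliary : every SYT of a shape with cells
`{0} × [0,a) ∪ {1} × [0,b)` comes from a ballot set. -/
lemma surj_aux {n a b : ℕ} {lam : List ℕ} {T : ℕ × ℕ → ℕ}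
    (hsyt : IsSYT lam T) (hcells : CellsEq lam a b)
    (hsum : lam.sum = n) (hab : a + b = n) (hba : b ≤ a) :
    ∃ S : Finset ℕ, S ⊆ range n ∧ BallotP S ∧ S.card = b ∧ tabOf n S = T := by
  obtain ⟨⟨hmap, hinj, hsur⟩, hcol, hrow, hout⟩ := hsyt
  rw [hsum] at hmap hsur
  set g : ℕ → ℕ := fun r => T (1, r) - 1 with hg
  set f0 : ℕ → ℕ := fun r => T (0, r) - 1 with hf0
  have hcell1 : ∀ r < b, (1, r) ∈ Cells lam := fun r hr => (hcells _).2 (Or.inr ⟨rfl, hr⟩)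
  have hcell0 : ∀ r < a, (0, r) ∈ Cells lam := fun r hr => (hcells _).2 (Or.inl ⟨rfl, hr⟩)
  have hT1 : ∀ r < b, 1 ≤ T (1, r) ∧ T (1, r) ≤ n := by
    intro r hr
    exact hmap (hcell1 r hr)
  have hT0 : ∀ r < a, 1 ≤ T (0, r) ∧ T (0, r) ≤ n := by
    intro r hr
    exact hmap (hcell0 r hr)
  have monog : ∀ i j, i < j → j < b → g i < g j := by
    intro i j hij hj
    have := hcol (1, i) (hcell1 i (by omega)) (1, j) (hcell1 j hj) rfl hij
    have h1 := hT1 i (by omega)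
    simp only [hg]
    omega
  have monof : ∀ i j, i < j → j < a → f0 i < f0 j := by
    intro i j hij hj
    have := hcol (0, i) (hcell0 i (by omega)) (0, j) (hcell0 j hj) rfl hij
    have h1 := hT0 i (by omega)
    simp only [hf0]
    omega
  set S : Finset ℕ := (range b).image g with hSdef
  have hgmem : ∀ i < b, g i ∈ S := fun i hi => mem_image_of_mem g (mem_range.2 hi)
  have hgsurj : ∀ x ∈ S, ∃ i < b, g i = x := by
    intro x hx
    obtain ⟨i, hi, rfl⟩ := mem_image.1 hx
    exact ⟨i, mem_range.1 hi, rfl⟩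
  have hSsub : S ⊆ range n := by
    intro x hx
    obtain ⟨i, hi, rfl⟩ := hgsurj x hx
    have := hT1 i hi
    rw [mem_range]
    simp only [hg]
    omega
  have hSc : S.card = b := by
    rw [hSdef, Finset.card_image_of_injOn, card_range]
    intro i hi j hj hij
    rw [mem_coe, mem_range] at hi hj
    by_contra hne
    rcases Nat.lt_or_ge i j with h | h
    · exact absurd (monog i j h hj) (by omega)
    · exact absurd (monog j i (by omega) hi) (by omega)
  have hTg : ∀ r < b, T (1, r) = nth S r + 1 := by
    intro r hr
    have := eq_nth_of_image hSc monog hgmem hgsurj r hr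
    have h1 := hT1 r hr
    simp only [hg] at this
    omega
  -- column 0 enumerates the complement
  have himg0 : ∀ x, (x < n ∧ x ∉ S) ↔ ∃ r < a, f0 r = x := by
    intro x
    constructor
    · rintro ⟨hxn, hxS⟩
      obtain ⟨p, hp, hTp⟩ := hsur (Set.mem_Icc.2 ⟨by omega, by omega⟩ : x + 1 ∈ Set.Icc 1 n)
      rcases (hcells p).1 hp with ⟨h0, hr⟩ | ⟨h0, hr⟩
      · refine ⟨p.2, hr, ?_⟩
        have hp' : p = (0, p.2) := Prod.ext h0 rfl
        simp only [hf0]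
        rw [← hp', hTp]
        omega
      · exfalso
        have hp' : p = (1, p.2) := Prod.ext h0 rfl
        rw [hp', hTg p.2 hr] at hTp
        have : x = nth S p.2 := by omega
        exact hxS (this ▸ nth_mem (hSc ▸ hr))
    · rintro ⟨r, hr, rfl⟩
      have h1 := hT0 r hr
      constructor
      · simp only [hf0]; omega
      · intro hmem
        obtain ⟨i, hi, hgi⟩ := hgsurj _ hmem
        have h2 := hT1 i hi
        have : T (0, r) = T (1, i) := by
          simp only [hf0, hg] at hgi
          omega
        have := hinj (hcell0 r hr) (hcell1 i hi) this
        simp only [Prod.mk.injEq] at this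
        omega
  have hAcard : (colA n S).card = a := by
    rw [colA_card hSsub, hSc]
    omega
  have hAmem : ∀ i < a, f0 i ∈ colA n S := by
    intro i hi
    exact mem_colA.2 ((himg0 _).2 ⟨i, hi, rfl⟩)
  have hAsurj : ∀ x ∈ colA n S, ∃ i < a, f0 i = x := by
    intro x hx
    exact (himg0 x).1 (mem_colA.1 hx)
  have hTf0 : ∀ r < a, T (0, r) = nth (colA n S) r + 1 := by
    intro r hr
    have := eq_nth_of_image hAcard monof hAmem hAsurj r hr
    have h1 := hT0 r hr
    simp only [hf0] at this
    omega
  have hballot : BallotP S := by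
    apply ballot_of_row_lt hSsub (by omega)
    intro r hr
    rw [hSc] at hr
    have := hrow (0, r) (hcell0 r (by omega)) (1, r) (hcell1 r hr) rfl (by omega)
    rw [hTf0 r (by omega), hTg r hr] at this
    omega
  refine ⟨S, hSsub, hballot, hSc, ?_⟩
  funext p
  by_cases h0 : p.1 = 0 ∧ p.2 < a
  · rw [tabOf]
    rw [if_pos (by rw [hSc]; omega : p.1 = 0 ∧ p.2 < n - S.card)]
    have hp' : p = (0, p.2) := Prod.ext h0.1 rfl
    conv_rhs => rw [hp']
    rw [hTf0 p.2 h0.2]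
  · by_cases h1 : p.1 = 1 ∧ p.2 < b
    · rw [tabOf]
      rw [if_neg (by omega), if_pos (by rw [hSc]; exact h1)]
      have hp' : p = (1, p.2) := Prod.ext h1.1 rfl
      conv_rhs => rw [hp']
      rw [hTg p.2 h1.2]
    · have hnc : p ∉ Cells lam := by
        intro hmem
        rcases (hcells p).1 hmem with h | h
        · exact h0 h
        · exact h1 h
      rw [hout p hnc, tabOf]
      rw [if_neg (by rw [hSc]; omega), if_neg (by rw [hSc]; exact fun h => h1 h)]
end SYT2

namespace SYT2
open Finset

lemma Phi_surjective (n : ℕ) : Function.Surjective (Phi n) := by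
  rintro ⟨⟨lam, T⟩, hlen, hsort, hpos, hsum, hsyt⟩
  rcases lam with _ | ⟨x, _ | ⟨y, _ | ⟨z, l⟩⟩⟩
  · -- empty shape
    have hn : n = 0 := by simpa using hsum.symm
    obtain ⟨S, hsub, hbal, hcardS, htab⟩ :=
      surj_aux (a := 0) (b := 0) hsyt cellsEq_nil hsum (by omega) le_rfl
    refine ⟨⟨S, hsub, hbal⟩, ?_⟩
    apply Subtype.ext
    show (shapeOf n S, tabOf n S) = ([], T)
    have hSe : S = ∅ := card_eq_zero.1 hcardS
    rw [htab, hSe, hn]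
    simp [shapeOf]
  · -- one column
    have hn : n = x := by simpa using hsum.symm
    have hx : 0 < x := hpos x (by simp)
    obtain ⟨S, hsub, hbal, hcardS, htab⟩ :=
      surj_aux (a := x) (b := 0) hsyt (cellsEq_single x) hsum (by omega) (by omega)
    refine ⟨⟨S, hsub, hbal⟩, ?_⟩
    apply Subtype.ext
    show (shapeOf n S, tabOf n S) = ([x], T)
    have hSe : S = ∅ := card_eq_zero.1 hcardS
    rw [htab, hSe]
    have : shapeOf n ∅ = [x] := by
      rw [shapeOf, if_pos rfl, if_neg (by omega), hn]
    rw [this]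
  · -- two columns
    have hxy : x + y = n := by simpa using hsum
    have hy : 0 < y := hpos y (by simp)
    have hyx : y ≤ x := by
      have := hsort
      simp [List.pairwise_cons] at this
      exact this
    obtain ⟨S, hsub, hbal, hcardS, htab⟩ :=
      surj_aux (a := x) (b := y) hsyt (cellsEq_pair x y) hsum hxy hyx
    refine ⟨⟨S, hsub, hbal⟩, ?_⟩
    apply Subtype.ext
    show (shapeOf n S, tabOf n S) = ([x, y], T)
    have hSe : S ≠ ∅ := by
      intro h
      rw [h] at hcardS
      simp at hcardS
      omega
    rw [htab]
    have : shapeOf n S = [x, y] := by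
      rw [shapeOf, if_neg hSe, hcardS]
      congr 1
      omega
    rw [this]
  · -- too long
    exfalso
    have : (z :: l).length + 2 ≤ 2 := by simpa using hlen
    simp at this

lemma tau_eq (n : ℕ) : tau 2 n = #((range n).powerset.filter BallotP) := by
  rw [tau]
  rw [Nat.card_congr (Equiv.ofBijective (Phi n) ⟨Phi_injective n, Phi_surjective n⟩).symm]
  have e2 : {S : Finset ℕ // S ⊆ range n ∧ BallotP S} ≃
      {S // S ∈ (range n).powerset.filter BallotP} :=
    Equiv.subtypeEquivRight (by intro S; simp [mem_filter, mem_powerset])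
  rw [Nat.card_congr e2, Nat.card_eq_fintype_card, Fintype.card_coe]

end SYT2

theorem stmt4 (n : ℕ) : tau 2 n = n.choose (n / 2) := by
  rw [SYT2.tau_eq n, SYT2.ballot_card n]
end

section
/- For n ≥ 1, β(n,0) = β(n−1,0) + β(n−1,1). -/
open Finset Filter Topology

/-- Standard Young tableaux on `n` cells, with at most `s` columns
(column lengths positive and weakly decreasing), such that the difference
between the lengths of the second and third columns equals `i`. -/
def Y (s n i : ℕ) : Set (List ℕ × (ℕ × ℕ → ℕ)) :=
  {p | p.1.length ≤ s ∧ p.1.Pairwise (· ≥ ·) ∧ (∀ x ∈ p.1, 0 < x) ∧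
       p.1.sum = n ∧ p.1.getD 1 0 - p.1.getD 2 0 = i ∧ IsSYT p.1 p.2}

/-- `gamma s n i = |Y s n i|`. -/
noncomputable def gamma (s n i : ℕ) : ℕ := Nat.card (Y s n i)

def bump (lam : List ℕ) (c : ℕ) : List ℕ :=
  if c < lam.length then lam.set c (lam.getD c 0 + 1) else lam ++ [1]

lemma bump_cons (a : ℕ) (l : List ℕ) (c : ℕ) : bump (a :: l) (c + 1) = a :: bump l c := by
  by_cases h : c < l.length
  · simp [bump, Nat.succ_lt_succ h, h, List.getD]
  · simp [bump, h, fun hh => h (Nat.lt_of_succ_lt_succ hh)]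

lemma bump_zero_cons (a : ℕ) (l : List ℕ) : bump (a :: l) 0 = (a + 1) :: l := by
  simp [bump, List.getD]

lemma bump_nil : bump [] 0 = [1] := by simp [bump]

lemma length_bump (lam : List ℕ) (c : ℕ) (h : c ≤ lam.length) :
    (bump lam c).length = if c = lam.length then lam.length + 1 else lam.length := by
  by_cases hc : c < lam.length
  · simp [bump, hc, Nat.ne_of_lt hc]
  · have : c = lam.length := by omega
    simp [bump, this]

lemma getD_bump (lam : List ℕ) (c : ℕ) (h : c ≤ lam.length) (x : ℕ) :
    (bump lam c).getD x 0 = if x = c then lam.getD c 0 + 1 else lam.getD x 0 := by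
  induction lam generalizing c x with
  | nil =>
    have hc : c = 0 := by simpa using h
    subst hc
    rcases x with _ | x <;> simp [bump]
  | cons a l ih =>
    rcases c with _ | c
    · rw [bump_zero_cons]
      rcases x with _ | x <;> simp [List.getD_cons_zero, List.getD_cons_succ]
    · rw [bump_cons]
      rcases x with _ | x
      · simp [List.getD_cons_zero]
      · simp only [List.getD_cons_succ, ih c (by simpa using h), Nat.add_right_cancel_iff]

lemma sum_bump (lam : List ℕ) (c : ℕ) (h : c ≤ lam.length) :
    (bump lam c).sum = lam.sum + 1 := by
  induction lam generalizing c with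
  | nil =>
    have hc : c = 0 := by simpa using h
    subst hc; simp [bump]
  | cons a l ih =>
    rcases c with _ | c
    · rw [bump_zero_cons]; simp; omega
    · rw [bump_cons]; simp [ih c (by simpa using h)]; omega

lemma getD_zero_of_le (lam : List ℕ) {c : ℕ} (h : lam.length ≤ c) : lam.getD c 0 = 0 :=
  List.getD_eq_default _ _ h

lemma lt_length_of_getD_pos {lam : List ℕ} {c : ℕ} (h : 0 < lam.getD c 0) : c < lam.length := by
  by_contra hc
  rw [getD_zero_of_le lam (by omega)] at h; omega

lemma cells_bump (lam : List ℕ) (c : ℕ) (h : c ≤ lam.length) :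
    Cells (bump lam c) = insert (c, lam.getD c 0) (Cells lam) := by
  ext ⟨x, y⟩
  simp only [Cells, Set.mem_insert_iff, Set.mem_setOf_eq, Prod.mk.injEq]
  rw [getD_bump lam c h x, length_bump lam c h]
  by_cases hx : x = c
  · subst hx
    by_cases hc : x = lam.length
    · have h0 : lam.getD x 0 = 0 := getD_zero_of_le lam (le_of_eq hc.symm)
      simp [hc, h0] <;> omega
    · simp [hc]; omega
  · by_cases hc : c = lam.length
    · subst hc
      simp [hx]
      omega
    · simp [hx, hc]

lemma getD_le_sum (lam : List ℕ) (j : ℕ) : lam.getD j 0 ≤ lam.sum := by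
  induction lam generalizing j with
  | nil => simp
  | cons a l ih =>
    rcases j with _ | j
    · simp
    · simp only [List.getD_cons_succ, List.sum_cons]
      exact le_trans (ih j) (Nat.le_add_left _ _)

lemma getD_anti {lam : List ℕ} (h : lam.Pairwise (· ≥ ·)) {i j : ℕ} (hij : i ≤ j) :
    lam.getD j 0 ≤ lam.getD i 0 := by
  induction lam generalizing i j with
  | nil => simp
  | cons a l ih =>
    rcases i with _ | i
    · rcases j with _ | j
      · simp
      · simp only [List.getD_cons_zero, List.getD_cons_succ]
        by_cases hj : j < l.length
        · have : l.getD j 0 ∈ l := by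
            rw [List.getD_eq_getElem l 0 hj]; exact List.getElem_mem _
          exact (List.pairwise_cons.mp h).1 _ this
        · rw [getD_zero_of_le l (by omega)]; exact Nat.zero_le _
    · rcases j with _ | j
      · omega
      · simp only [List.getD_cons_succ]
        exact ih (List.pairwise_cons.mp h).2 (by omega)

lemma eq_of_getD {lam mu : List ℕ} (hl : ∀ x ∈ lam, 0 < x) (hm : ∀ x ∈ mu, 0 < x)
    (h : ∀ j, lam.getD j 0 = mu.getD j 0) : lam = mu := by
  induction lam generalizing mu with
  | nil =>
    rcases mu with _ | ⟨b, mu⟩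
    · rfl
    · have := h 0
      simp only [List.getD_nil, List.getD_cons_zero] at this
      exact absurd (hm b (by simp)) (by omega)
  | cons a l ih =>
    rcases mu with _ | ⟨b, mu⟩
    · have := h 0
      simp only [List.getD_nil, List.getD_cons_zero] at this
      exact absurd (hl a (by simp)) (by omega)
    · have h0 := h 0
      simp only [List.getD_cons_zero] at h0
      subst h0
      have : l = mu := ih (fun x hx => hl x (by simp [hx]))
        (fun x hx => hm x (by simp [hx])) (fun j => by simpa using h (j + 1))
      rw [this]

lemma T_le {lam : List ℕ} {T : ℕ × ℕ → ℕ} (h : IsSYT lam T) (q : ℕ × ℕ) : T q ≤ lam.sum := by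
  by_cases hq : q ∈ Cells lam
  · exact (h.1.mapsTo hq).2
  · simp [h.2.2.2 q hq]

lemma exists_max {lam : List ℕ} {T : ℕ × ℕ → ℕ} (h : IsSYT lam T) (hn : 1 ≤ lam.sum) :
    ∃ p ∈ Cells lam, T p = lam.sum := by
  have := h.1.surjOn (Set.mem_Icc.mpr ⟨hn, le_rfl⟩)
  obtain ⟨p, hp, hTp⟩ := this
  exact ⟨p, hp, hTp⟩

lemma corner {lam : List ℕ} {T : ℕ × ℕ → ℕ} {p : ℕ × ℕ} (h : IsSYT lam T)
    (hp : p ∈ Cells lam) (hT : T p = lam.sum) :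
    p.2 + 1 = lam.getD p.1 0 ∧ lam.getD (p.1 + 1) 0 ≤ p.2 := by
  constructor
  · by_contra hc
    have h1 : p.2 + 1 < lam.getD p.1 0 := by
      have := hp.2; omega
    have hq : (p.1, p.2 + 1) ∈ Cells lam := ⟨hp.1, h1⟩
    have := h.2.1 p hp _ hq rfl (by simp)
    have := (h.1.mapsTo hq).2
    omega
  · by_contra hc
    push_neg at hc
    have hlen : p.1 + 1 < lam.length := lt_length_of_getD_pos (by omega)
    have hq : (p.1 + 1, p.2) ∈ Cells lam := ⟨hlen, hc⟩
    have := h.2.2.1 p hp _ hq rfl (by simp)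
    have := (h.1.mapsTo hq).2
    omega

lemma bump_pt_not_mem (lam : List ℕ) (c : ℕ) : (c, lam.getD c 0) ∉ Cells lam := by
  intro h
  exact absurd h.2 (by simp)

lemma isSYT_bump {lam : List ℕ} {c : ℕ} (hc : c ≤ lam.length)
    (hsorted : lam.Pairwise (· ≥ ·)) {T : ℕ × ℕ → ℕ} (h : IsSYT lam T) :
    IsSYT (bump lam c) (Function.update T (c, lam.getD c 0) (lam.sum + 1)) := by
  set p : ℕ × ℕ := (c, lam.getD c 0) with hpdef
  set T' := Function.update T p (lam.sum + 1) with hT'def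
  have hp : p ∉ Cells lam := bump_pt_not_mem lam c
  have hcells := cells_bump lam c hc
  rw [← hpdef] at hcells
  have hsum := sum_bump lam c hc
  have hTeq : ∀ q ∈ Cells lam, T' q = T q := by
    intro q hq
    rw [hT'def]
    apply Function.update_of_ne
    rintro rfl; exact hp hq
  have hT'p : T' p = lam.sum + 1 := by rw [hT'def]; exact Function.update_self _ _ _
  unfold IsSYT
  rw [hcells, hsum]
  refine ⟨⟨?_, ?_, ?_⟩, ?_, ?_, ?_⟩
  · rintro q (hq | hq)
    · rw [hq, hT'p]; exact Set.mem_Icc.mpr ⟨by omega, le_rfl⟩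
    · rw [hTeq q hq]
      have ha := (h.1.mapsTo hq).1
      have hb := (h.1.mapsTo hq).2
      exact Set.mem_Icc.mpr ⟨ha, by omega⟩
  · rintro q (hq | hq) r (hr | hr) hqr
    · rw [hq, hr]
    · rw [hq, hT'p, hTeq r hr] at hqr
      have := (h.1.mapsTo hr).2; omega
    · rw [hr, hT'p, hTeq q hq] at hqr
      have := (h.1.mapsTo hq).2; omega
    · rw [hTeq q hq, hTeq r hr] at hqr
      exact h.1.injOn hq hr hqr
  · intro m hm
    rcases Set.mem_Icc.mp hm with ⟨hm1, hm2⟩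
    by_cases hme : m = lam.sum + 1
    · exact ⟨p, Or.inl rfl, by rw [hT'p, hme]⟩
    · obtain ⟨q, hq, hTq⟩ := h.1.surjOn (Set.mem_Icc.mpr ⟨hm1, by omega⟩)
      exact ⟨q, Or.inr hq, by rw [hTeq q hq, hTq]⟩
  · rintro q (hq | hq) r (hr | hr) h1 h2
    · rw [hq, hr] at h2; omega
    · subst hq
      exfalso
      have hr2 : r.2 < lam.getD r.1 0 := hr.2
      have h1' : r.1 = c := by rw [← h1, hpdef]
      have h2' : lam.getD c 0 < r.2 := by simpa [hpdef] using h2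
      rw [h1'] at hr2
      omega
    · subst hr
      rw [hTeq q hq, hT'p]
      have := (h.1.mapsTo hq).2; omega
    · rw [hTeq q hq, hTeq r hr]
      exact h.2.1 q hq r hr h1 h2
  · rintro q (hq | hq) r (hr | hr) h1 h2
    · rw [hq, hr] at h2; omega
    · subst hq
      -- q = p, r ∈ Cells, r.2 = p.2 = lam.getD c 0, r.1 > c : contradiction by sorted
      exfalso
      have hr2 : r.2 < lam.getD r.1 0 := hr.2
      have h1' : r.2 = lam.getD c 0 := by rw [← h1, hpdef]
      have hanti : lam.getD r.1 0 ≤ lam.getD c 0 :=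
        getD_anti hsorted (le_of_lt (by simpa [hpdef] using h2))
      omega
    · subst hr
      rw [hTeq q hq, hT'p]
      have := (h.1.mapsTo hq).2; omega
    · rw [hTeq q hq, hTeq r hr]
      exact h.2.2.1 q hq r hr h1 h2
  · intro q hq
    have hq1 : q ≠ p := fun he => hq (he ▸ Or.inl rfl)
    have hq2 : q ∉ Cells lam := fun he => hq (Or.inr he)
    rw [hT'def, Function.update_of_ne hq1]
    exact h.2.2.2 q hq2

lemma isSYT_unbump {lam : List ℕ} {c : ℕ} (hc : c ≤ lam.length) {T : ℕ × ℕ → ℕ}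
    (h : IsSYT (bump lam c) T) (hT : T (c, lam.getD c 0) = lam.sum + 1) :
    IsSYT lam (Function.update T (c, lam.getD c 0) 0) := by
  set p : ℕ × ℕ := (c, lam.getD c 0) with hpdef
  set T' := Function.update T p 0 with hT'def
  have hp : p ∉ Cells lam := bump_pt_not_mem lam c
  have hcells := cells_bump lam c hc
  rw [← hpdef] at hcells
  have hsum := sum_bump lam c hc
  have hTeq : ∀ q ∈ Cells lam, T' q = T q := by
    intro q hq
    rw [hT'def]
    apply Function.update_of_ne
    rintro rfl; exact hp hq
  have hmem : ∀ q ∈ Cells lam, q ∈ Cells (bump lam c) := by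
    intro q hq; rw [hcells]; exact Or.inr hq
  have hpmem : p ∈ Cells (bump lam c) := by rw [hcells]; exact Or.inl rfl
  have hne : ∀ q ∈ Cells lam, T q ≠ lam.sum + 1 := by
    intro q hq he
    have : q = p := h.1.injOn (hmem q hq) hpmem (by rw [he, hT])
    exact hp (this ▸ hq)
  refine ⟨⟨?_, ?_, ?_⟩, ?_, ?_, ?_⟩
  · intro q hq
    rw [hTeq q hq]
    have h1 := h.1.mapsTo (hmem q hq)
    rw [hsum] at h1
    rcases Set.mem_Icc.mp h1 with ⟨ha, hb⟩
    exact Set.mem_Icc.mpr ⟨ha, by have := hne q hq; omega⟩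
  · intro q hq r hr he
    rw [hTeq q hq, hTeq r hr] at he
    exact h.1.injOn (hmem q hq) (hmem r hr) he
  · intro m hm
    rcases Set.mem_Icc.mp hm with ⟨hm1, hm2⟩
    obtain ⟨q, hq, hTq⟩ := h.1.surjOn (by rw [hsum]; exact Set.mem_Icc.mpr ⟨hm1, by omega⟩)
    rw [hcells] at hq
    rcases hq with hq | hq
    · exfalso; rw [hq, hT] at hTq; omega
    · exact ⟨q, hq, by rw [hTeq q hq, hTq]⟩
  · intro q hq r hr h1 h2
    rw [hTeq q hq, hTeq r hr]
    exact h.2.1 q (hmem q hq) r (hmem r hr) h1 h2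
  · intro q hq r hr h1 h2
    rw [hTeq q hq, hTeq r hr]
    exact h.2.2.1 q (hmem q hq) r (hmem r hr) h1 h2
  · intro q hq
    by_cases hqp : q = p
    · rw [hqp, hT'def]; exact Function.update_self _ _ _
    · rw [hT'def, Function.update_of_ne hqp]
      apply h.2.2.2
      rw [hcells]
      rintro (he | he)
      · exact hqp he
      · exact hq he

lemma finite_Y (s n i : ℕ) : (Y s n i).Finite := by
  have : Finite ↥(Y s n i) := by
    let f : ↥(Y s n i) → (Fin (s+1) → Fin (n+1)) × (Fin (s+1) × Fin (n+1) → Fin (n+1)) :=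
      fun x => (fun j => ⟨min (x.1.1.getD j 0) n, by omega⟩,
                fun q => ⟨min (x.1.2 (q.1.1, q.2.1)) n, by omega⟩)
    apply Finite.of_injective f
    intro x y hfx
    obtain ⟨⟨lam, T⟩, hx⟩ := x
    obtain ⟨⟨mu, S⟩, hy⟩ := y
    have hxlen := hx.1
    have hxpos := hx.2.2.1
    have hxsum := hx.2.2.2.1
    have hxsyt := hx.2.2.2.2.2
    have hylen := hy.1
    have hypos := hy.2.2.1
    have hysum := hy.2.2.2.1
    have hysyt := hy.2.2.2.2.2
    dsimp only at hxlen hxpos hxsum hxsyt hylen hypos hysum hysyt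
    rw [Prod.ext_iff] at hfx
    have h1 := hfx.1
    have h2 := hfx.2
    have hgl : ∀ j, lam.getD j 0 ≤ n := fun j => hxsum ▸ getD_le_sum lam j
    have hgm : ∀ j, mu.getD j 0 ≤ n := fun j => hysum ▸ getD_le_sum mu j
    have hTn : ∀ q, T q ≤ n := fun q => hxsum ▸ T_le hxsyt q
    have hSn : ∀ q, S q ≤ n := fun q => hysum ▸ T_le hysyt q
    have hlm : lam = mu := by
      apply eq_of_getD hxpos hypos
      intro j
      by_cases hj : j < s + 1
      · have hv := congrArg Fin.val (congrFun h1 ⟨j, hj⟩)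
        simp only [f] at hv
        have := hgl j; have := hgm j
        omega
      · rw [getD_zero_of_le lam (by omega), getD_zero_of_le mu (by omega)]
    have hTS : T = S := by
      funext q
      obtain ⟨qx, qy⟩ := q
      by_cases hq : qx < s + 1 ∧ qy < n + 1
      · have hv := congrArg Fin.val (congrFun h2 (⟨qx, hq.1⟩, ⟨qy, hq.2⟩))
        simp only [f] at hv
        have := hTn (qx, qy); have := hSn (qx, qy)
        omega
      · have hcl : (qx, qy) ∉ Cells lam := by
          rintro ⟨hc1, hc2⟩
          dsimp only at hc1 hc2
          have := hgl qx
          exact hq ⟨by omega, by omega⟩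
        have hcm : (qx, qy) ∉ Cells mu := hlm ▸ hcl
        rw [hxsyt.2.2.2 _ hcl, hysyt.2.2.2 _ hcm]
    exact Subtype.ext (Prod.ext hlm hTS)
  exact (Y s n i).toFinite

lemma update_cancel {lam : List ℕ} {T S : ℕ × ℕ → ℕ} {p : ℕ × ℕ} {v : ℕ}
    (hT : IsSYT lam T) (hS : IsSYT lam S) (hp : p ∉ Cells lam)
    (h : Function.update T p v = Function.update S p v) : T = S := by
  funext q
  rcases eq_or_ne q p with rfl | hq
  · rw [hT.2.2.2 q hp, hS.2.2.2 q hp]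
  · have := congrFun h q
    rwa [Function.update_of_ne hq, Function.update_of_ne hq] at this

lemma update_update_self {T : ℕ × ℕ → ℕ} {p : ℕ × ℕ} {v : ℕ} (h : T p = v) :
    Function.update (Function.update T p 0) p v = T := by
  rw [Function.update_idem, ← h, Function.update_eq_self]

lemma bump_inj {lam mu : List ℕ} {c : ℕ} (hcl : c ≤ lam.length) (hcm : c ≤ mu.length)
    (hl : ∀ x ∈ lam, 0 < x) (hm : ∀ x ∈ mu, 0 < x)
    (h : bump lam c = bump mu c) : lam = mu := by
  apply eq_of_getD hl hm
  intro j
  have hj := congrArg (fun l => l.getD j 0) h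
  rw [getD_bump lam c hcl j, getD_bump mu c hcm j] at hj
  by_cases hjc : j = c
  · subst hjc; rw [if_pos rfl, if_pos rfl] at hj; omega
  · simpa [hjc] using hj

lemma G_mem0 {n : ℕ} (hn : 1 ≤ n) {q : List ℕ × (ℕ × ℕ → ℕ)} (h : q ∈ Y 3 (n - 1) 0) :
    (bump q.1 0, Function.update q.2 (0, q.1.getD 0 0) n) ∈ Y 3 n 0 := by
  obtain ⟨lam, T⟩ := q
  have hlen := h.1
  have hsorted := h.2.1
  have hpos := h.2.2.1
  have hsum := h.2.2.2.1
  have hdiff := h.2.2.2.2.1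
  have hsyt := h.2.2.2.2.2
  dsimp only at hlen hsorted hpos hsum hdiff hsyt ⊢
  have hc : (0 : ℕ) ≤ lam.length := Nat.zero_le _
  have hb := isSYT_bump hc hsorted hsyt
  rw [hsum, show n - 1 + 1 = n by omega] at hb
  refine ⟨?_, ?_, ?_, ?_, ?_, hb⟩
  · rw [length_bump lam 0 hc]
    split <;> omega
  · rcases lam with _ | ⟨a, l⟩
    · simp [bump]
    · rw [bump_zero_cons]
      rw [List.pairwise_cons] at hsorted ⊢
      exact ⟨fun b hb => le_trans (hsorted.1 b hb) (by omega), hsorted.2⟩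
  · rcases lam with _ | ⟨a, l⟩
    · intro x hx; simp [bump] at hx; omega
    · rw [bump_zero_cons]
      intro x hx
      rcases List.mem_cons.mp hx with rfl | hx
      · have := hpos a (by simp); omega
      · exact hpos x (by simp [hx])
  · rw [sum_bump lam 0 hc, hsum]; omega
  · rw [getD_bump lam 0 hc 1, getD_bump lam 0 hc 2]
    simpa using hdiff

lemma two_le_length_of_diff1 {m : ℕ} {lam : List ℕ} (hdiff : lam.getD 1 0 - lam.getD 2 0 = 1) :
    2 ≤ lam.length := by
  have : 0 < lam.getD 1 0 := by omega
  have := lt_length_of_getD_pos this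
  omega

lemma G_mem2 {n : ℕ} (hn : 1 ≤ n) {q : List ℕ × (ℕ × ℕ → ℕ)} (h : q ∈ Y 3 (n - 1) 1) :
    (bump q.1 2, Function.update q.2 (2, q.1.getD 2 0) n) ∈ Y 3 n 0 := by
  obtain ⟨lam, T⟩ := q
  have hlen := h.1
  have hsorted := h.2.1
  have hpos := h.2.2.1
  have hsum := h.2.2.2.1
  have hdiff := h.2.2.2.2.1
  have hsyt := h.2.2.2.2.2
  dsimp only at hlen hsorted hpos hsum hdiff hsyt ⊢
  have hc : (2 : ℕ) ≤ lam.length := two_le_length_of_diff1 (m := n - 1) hdiff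
  have hb := isSYT_bump hc hsorted hsyt
  rw [hsum, show n - 1 + 1 = n by omega] at hb
  refine ⟨?_, ?_, ?_, ?_, ?_, hb⟩
  · rw [length_bump lam 2 hc]
    split <;> omega
  · -- sorted
    rcases lam with _ | ⟨a, _ | ⟨b, _ | ⟨c, _ | rest⟩⟩⟩ <;> simp +arith at hlen hc
    · -- [a, b]
      have hb1 : b = 1 := by
        simp [List.getD] at hdiff; omega
      subst hb1
      have : bump [a, 1] 2 = [a, 1, 1] := by simp [bump]
      rw [this]
      simp [List.pairwise_cons] at hsorted ⊢
      omega
    · -- [a, b, c]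
      have hbc : c + 1 ≤ b := by simp [List.getD] at hdiff; omega
      have : bump [a, b, c] 2 = [a, b, c + 1] := by simp [bump, List.getD]
      rw [this]
      simp [List.pairwise_cons] at hsorted ⊢
      omega
  · -- positive
    rcases lam with _ | ⟨a, _ | ⟨b, _ | ⟨c, _ | rest⟩⟩⟩ <;> simp +arith at hlen hc
    · have : bump [a, b] 2 = [a, b, 1] := by simp [bump]
      rw [this]
      intro x hx
      simp at hx
      rcases hx with rfl | rfl | rfl
      · exact hpos x (by simp)
      · exact hpos x (by simp)
      · omega
    · have : bump [a, b, c] 2 = [a, b, c + 1] := by simp [bump, List.getD]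
      rw [this]
      intro x hx
      simp at hx
      rcases hx with rfl | rfl | rfl
      · exact hpos x (by simp)
      · exact hpos x (by simp)
      · omega
  · rw [sum_bump lam 2 hc, hsum]; omega
  · rw [getD_bump lam 2 hc 1, getD_bump lam 2 hc 2,
      if_neg (by omega : ¬(1 : ℕ) = 2), if_pos rfl]
    omega

def G (n : ℕ) (hn : 1 ≤ n) :
    (↥(Y 3 (n - 1) 0) ⊕ ↥(Y 3 (n - 1) 1)) → ↥(Y 3 n 0) :=
  Sum.elim
    (fun x => ⟨(bump x.1.1 0, Function.update x.1.2 (0, x.1.1.getD 0 0) n), G_mem0 hn x.2⟩)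
    (fun x => ⟨(bump x.1.1 2, Function.update x.1.2 (2, x.1.1.getD 2 0) n), G_mem2 hn x.2⟩)

lemma G_inj (n : ℕ) (hn : 1 ≤ n) : Function.Injective (G n hn) := by
  intro x y hxy
  rcases x with a | a <;> rcases y with b | b
  · simp only [G, Sum.elim_inl] at hxy
    rw [Subtype.mk.injEq, Prod.mk.injEq] at hxy
    obtain ⟨h1, h2⟩ := hxy
    have hlm : a.1.1 = b.1.1 :=
      bump_inj (Nat.zero_le _) (Nat.zero_le _) a.2.2.2.1 b.2.2.2.1 h1
    rw [← hlm] at h2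
    have hSsyt := b.2.2.2.2.2.2
    rw [← hlm] at hSsyt
    have hTS : a.1.2 = b.1.2 :=
      update_cancel a.2.2.2.2.2.2 hSsyt (bump_pt_not_mem _ _) h2
    exact congrArg Sum.inl (Subtype.ext (Prod.ext_iff.mpr ⟨hlm, hTS⟩))
  · exfalso
    simp only [G, Sum.elim_inl, Sum.elim_inr] at hxy
    rw [Subtype.mk.injEq, Prod.mk.injEq] at hxy
    obtain ⟨h1, h2⟩ := hxy
    have hev := congrFun h2 (0, a.1.1.getD 0 0)
    rw [Function.update_self, Function.update_of_ne (by simp)] at hev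
    have hle := T_le b.2.2.2.2.2.2 (0, a.1.1.getD 0 0)
    have hsb := b.2.2.2.2.1
    omega
  · exfalso
    simp only [G, Sum.elim_inl, Sum.elim_inr] at hxy
    rw [Subtype.mk.injEq, Prod.mk.injEq] at hxy
    obtain ⟨h1, h2⟩ := hxy
    have hev := congrFun h2 (2, a.1.1.getD 2 0)
    rw [Function.update_self, Function.update_of_ne (by simp)] at hev
    have hle := T_le b.2.2.2.2.2.2 (2, a.1.1.getD 2 0)
    have hsb := b.2.2.2.2.1
    omega
  · simp only [G, Sum.elim_inr] at hxy
    rw [Subtype.mk.injEq, Prod.mk.injEq] at hxy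
    obtain ⟨h1, h2⟩ := hxy
    have hca : 2 ≤ a.1.1.length := two_le_length_of_diff1 (m := n - 1) a.2.2.2.2.2.1
    have hcb : 2 ≤ b.1.1.length := two_le_length_of_diff1 (m := n - 1) b.2.2.2.2.2.1
    have hlm : a.1.1 = b.1.1 := bump_inj hca hcb a.2.2.2.1 b.2.2.2.1 h1
    rw [← hlm] at h2
    have hSsyt := b.2.2.2.2.2.2
    rw [← hlm] at hSsyt
    have hTS : a.1.2 = b.1.2 :=
      update_cancel a.2.2.2.2.2.2 hSsyt (bump_pt_not_mem _ _) h2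
    exact congrArg Sum.inr (Subtype.ext (Prod.ext_iff.mpr ⟨hlm, hTS⟩))

lemma G_inl_eq {n : ℕ} (hn : 1 ≤ n) {lam' : List ℕ} {T : ℕ × ℕ → ℕ}
    (hmemw : (lam', Function.update T (0, lam'.getD 0 0) 0) ∈ Y 3 (n - 1) 0)
    {lamT : List ℕ × (ℕ × ℕ → ℕ)} (hmem : lamT ∈ Y 3 n 0)
    (hb : bump lam' 0 = lamT.1) (hTv : T (0, lam'.getD 0 0) = n) (hTT : T = lamT.2) :
    G n hn (Sum.inl ⟨(lam', Function.update T (0, lam'.getD 0 0) 0), hmemw⟩) = ⟨lamT, hmem⟩ := by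
  apply Subtype.ext
  simp only [G, Sum.elim_inl]
  apply Prod.ext_iff.mpr
  refine ⟨hb, ?_⟩
  dsimp only
  rw [update_update_self hTv, hTT]

lemma G_inr_eq {n : ℕ} (hn : 1 ≤ n) {lam' : List ℕ} {T : ℕ × ℕ → ℕ}
    (hmemw : (lam', Function.update T (2, lam'.getD 2 0) 0) ∈ Y 3 (n - 1) 1)
    {lamT : List ℕ × (ℕ × ℕ → ℕ)} (hmem : lamT ∈ Y 3 n 0)
    (hb : bump lam' 2 = lamT.1) (hTv : T (2, lam'.getD 2 0) = n) (hTT : T = lamT.2) :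
    G n hn (Sum.inr ⟨(lam', Function.update T (2, lam'.getD 2 0) 0), hmemw⟩) = ⟨lamT, hmem⟩ := by
  apply Subtype.ext
  simp only [G, Sum.elim_inr]
  apply Prod.ext_iff.mpr
  refine ⟨hb, ?_⟩
  dsimp only
  rw [update_update_self hTv, hTT]

lemma G_surj (n : ℕ) (hn : 1 ≤ n) : Function.Surjective (G n hn) := by
  rintro ⟨⟨lam, T⟩, hmem⟩
  have hlen := hmem.1
  have hsorted := hmem.2.1
  have hpos := hmem.2.2.1
  have hsum := hmem.2.2.2.1
  have hdiff := hmem.2.2.2.2.1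
  have hsyt := hmem.2.2.2.2.2
  dsimp only at hlen hsorted hpos hsum hdiff hsyt
  obtain ⟨p, hp, hTp⟩ := exists_max hsyt (by omega)
  obtain ⟨hcor1, hcor2⟩ := corner hsyt hp hTp
  rw [hsum] at hTp
  obtain ⟨pc, pr⟩ := p
  dsimp only at hcor1 hcor2 hTp
  have hpc := hp.1
  have hpr := hp.2
  dsimp only at hpc hpr
  clear hp
  rcases lam with _ | ⟨a, _ | ⟨b, _ | ⟨c, _ | rest⟩⟩⟩
  · simp at hsum; omega
  · -- lam = [a]
    have hpc0 : pc = 0 := by simp at hpc; omega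
    subst hpc0
    have hpra : pr + 1 = a := by simpa using hcor1
    have hsa : a = n := by simpa using hsum
    by_cases ha : a = 1
    · subst ha
      have hgd : (([] : List ℕ)).getD 0 0 = pr := by simp; omega
      have hTv : T (0, ([] : List ℕ).getD 0 0) = n := by rw [hgd]; exact hTp
      have hmemw : (([] : List ℕ), Function.update T (0, ([] : List ℕ).getD 0 0) 0) ∈
          Y 3 (n - 1) 0 := by
        refine ⟨by simp, by simp, by simp, by simp; omega, by simp, ?_⟩
        apply isSYT_unbump (Nat.zero_le _)
        · rw [show bump ([] : List ℕ) 0 = [1] by simp [bump]]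
          exact hsyt
        · rw [hTv]; simp; omega
      exact ⟨Sum.inl ⟨_, hmemw⟩, G_inl_eq hn hmemw hmem (by simp [bump]) hTv rfl⟩
    · have hgd : ([a - 1] : List ℕ).getD 0 0 = pr := by simp; omega
      have hTv : T (0, ([a - 1] : List ℕ).getD 0 0) = n := by rw [hgd]; exact hTp
      have hb : bump [a - 1] 0 = [a] := by rw [bump_zero_cons]; simp; omega
      have hmemw : (([a - 1] : List ℕ), Function.update T (0, ([a - 1] : List ℕ).getD 0 0) 0) ∈
          Y 3 (n - 1) 0 := by
        refine ⟨by simp, by simp, ?_, by simp; omega, by simp, ?_⟩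
        · intro x hx; simp at hx; omega
        apply isSYT_unbump (Nat.zero_le _)
        · rw [hb]; exact hsyt
        · rw [hTv]; simp; omega
      exact ⟨Sum.inl ⟨_, hmemw⟩, G_inl_eq hn hmemw hmem hb hTv rfl⟩
  · -- lam = [a, b] : impossible
    exfalso
    have := hpos b (by simp)
    simp [List.getD] at hdiff
    omega
  · -- lam = [a, b, c]
    simp [List.pairwise_cons] at hsorted
    obtain ⟨⟨hab, hac⟩, hbc⟩ := hsorted
    simp [List.getD] at hdiff
    have hcb : c = b := by omega
    subst hcb
    have hbpos := hpos c (by simp)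
    have hapos := hpos a (by simp)
    have hsn : a + c + c = n := by simp at hsum; omega
    have hpc3 : pc < 3 := by simpa using hpc
    interval_cases pc
    · -- remove from column 0
      have hpra : pr + 1 = a := by simpa using hcor1
      have hba : c ≤ pr := by simpa [List.getD] using hcor2
      have hgd : ([a - 1, c, c] : List ℕ).getD 0 0 = pr := by simp; omega
      have hTv : T (0, ([a - 1, c, c] : List ℕ).getD 0 0) = n := by rw [hgd]; exact hTp
      have hb : bump [a - 1, c, c] 0 = [a, c, c] := by rw [bump_zero_cons]; simp; omega
      have hmemw : (([a - 1, c, c] : List ℕ),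
          Function.update T (0, ([a - 1, c, c] : List ℕ).getD 0 0) 0) ∈ Y 3 (n - 1) 0 := by
        refine ⟨by simp, by simp [List.pairwise_cons]; omega, ?_, by simp; omega,
          by simp [List.getD], ?_⟩
        · intro x hx; simp at hx; rcases hx with rfl | rfl | rfl <;> omega
        apply isSYT_unbump (Nat.zero_le _)
        · rw [hb]; exact hsyt
        · rw [hTv]; simp; omega
      exact ⟨Sum.inl ⟨_, hmemw⟩, G_inl_eq hn hmemw hmem hb hTv rfl⟩
    · -- column 1 : impossible
      exfalso
      have h1 : pr + 1 = c := by simpa [List.getD] using hcor1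
      have h2 : c ≤ pr := by simpa [List.getD] using hcor2
      omega
    · -- remove from column 2
      have hprb : pr + 1 = c := by simpa [List.getD] using hcor1
      by_cases hb2 : c = 1
      · subst hb2
        have hgd : ([a, 1] : List ℕ).getD 2 0 = pr := by simp [List.getD]; omega
        have hTv : T (2, ([a, 1] : List ℕ).getD 2 0) = n := by rw [hgd]; exact hTp
        have hb : bump [a, 1] 2 = [a, 1, 1] := by simp [bump]
        have hmemw : (([a, 1] : List ℕ),
            Function.update T (2, ([a, 1] : List ℕ).getD 2 0) 0) ∈ Y 3 (n - 1) 1 := by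
          refine ⟨by simp, by simp [List.pairwise_cons]; omega, ?_, by simp; omega,
            by simp [List.getD], ?_⟩
          · intro x hx; simp at hx; rcases hx with rfl | rfl <;> omega
          apply isSYT_unbump (by simp : (2 : ℕ) ≤ ([a, 1] : List ℕ).length)
          · rw [hb]; exact hsyt
          · rw [hTv]; simp; omega
        exact ⟨Sum.inr ⟨_, hmemw⟩, G_inr_eq hn hmemw hmem hb hTv rfl⟩
      · have hgd : ([a, c, c - 1] : List ℕ).getD 2 0 = pr := by simp [List.getD]; omega
        have hTv : T (2, ([a, c, c - 1] : List ℕ).getD 2 0) = n := by rw [hgd]; exact hTp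
        have hb : bump [a, c, c - 1] 2 = [a, c, c] := by simp [bump, List.getD]; omega
        have hmemw : (([a, c, c - 1] : List ℕ),
            Function.update T (2, ([a, c, c - 1] : List ℕ).getD 2 0) 0) ∈ Y 3 (n - 1) 1 := by
          refine ⟨by simp, by simp [List.pairwise_cons]; omega, ?_, by simp; omega,
            by simp [List.getD]; omega, ?_⟩
          · intro x hx; simp at hx; rcases hx with rfl | rfl | rfl <;> omega
          apply isSYT_unbump (by simp : (2 : ℕ) ≤ ([a, c, c - 1] : List ℕ).length)
          · rw [hb]; exact hsyt
          · rw [hTv]; simp; omega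
        exact ⟨Sum.inr ⟨_, hmemw⟩, G_inr_eq hn hmemw hmem hb hTv rfl⟩
  · -- length ≥ 4 : impossible
    simp +arith at hlen


theorem stmt7 (n : ℕ) (hn : 1 ≤ n) :
    gamma 3 n 0 = gamma 3 (n - 1) 0 + gamma 3 (n - 1) 1 := by
  haveI := (finite_Y 3 (n - 1) 0).to_subtype
  haveI := (finite_Y 3 (n - 1) 1).to_subtype
  have hbij : Function.Bijective (G n hn) := ⟨G_inj n hn, G_surj n hn⟩
  have hcard := Nat.card_eq_of_bijective _ hbij
  unfold gamma
  rw [← hcard, Nat.card_sum]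
end

section
/- For n ≥ 1 and 1 ≤ i ≤ ⌊n/2⌋, β(n,i) = β(n−1,i−1) + β(n−1,i) + β(n−1,i+1) − r(n,i), where r(n,i) is the number of standard Young tableaux of shape ((n+i−2)/3, (n+i−2)/3, (n−2i+1)/3) when n − 2i ≡ 2 (mod 3), and r(n,i) = 0 otherwise. -/
open Finset Filter Topology

noncomputable def rr (n i : ℕ) : ℕ :=
  if (n + i) % 3 = 2 then
    sytCount [(n + i - 2) / 3, (n + i - 2) / 3, (n - 2 * i + 1) / 3]
  else 0

namespace SytAux

abbrev P := List ℕ × (ℕ × ℕ → ℕ)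

/-! ### getD basics -/

lemma getD_eq_zero {l : List ℕ} {j : ℕ} (h : l.length ≤ j) : l.getD j 0 = 0 := by
  simp [List.getD_eq_getElem?_getD, List.getElem?_eq_none h]

lemma lt_length_of_getD_pos {l : List ℕ} {j : ℕ} (h : 0 < l.getD j 0) : j < l.length := by
  by_contra hc
  rw [getD_eq_zero (le_of_not_gt hc)] at h
  omega

lemma getD_pos {l : List ℕ} (hpos : ∀ x ∈ l, 0 < x) {j : ℕ} (h : j < l.length) :
    0 < l.getD j 0 := by
  rw [List.getD_eq_getElem l 0 h]
  exact hpos _ (l.getElem_mem h)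

lemma getD_anti {l : List ℕ} (hs : l.Pairwise (· ≥ ·)) {j k : ℕ} (h : j ≤ k) :
    l.getD k 0 ≤ l.getD j 0 := by
  rcases lt_or_ge k l.length with hk | hk
  · have hj : j < l.length := lt_of_le_of_lt h hk
    rw [List.getD_eq_getElem l 0 hk, List.getD_eq_getElem l 0 hj]
    exact hs.rel_get_of_le (a := ⟨j, hj⟩) (b := ⟨k, hk⟩) h
  · rw [getD_eq_zero hk]; omega

lemma getD_le_sum {l : List ℕ} {j : ℕ} : l.getD j 0 ≤ l.sum := by
  induction l generalizing j with
  | nil => simp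
  | cons a t ih =>
    cases j with
    | zero => simp [List.getD]
    | succ j =>
      have := ih (j := j)
      simp only [List.getD_cons_succ, List.sum_cons]
      omega

lemma sorted_of_getD {l : List ℕ} (h : ∀ j, l.getD (j+1) 0 ≤ l.getD j 0) :
    l.Pairwise (· ≥ ·) := by
  rw [← List.isChain_iff_pairwise]
  rw [List.isChain_iff_getElem]
  intro j hj
  have := h j
  rwa [List.getD_eq_getElem l 0 (by omega), List.getD_eq_getElem l 0 (by omega)] at this

lemma pos_of_getD {l : List ℕ} (h : ∀ j, j < l.length → 0 < l.getD j 0) :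
    ∀ x ∈ l, 0 < x := by
  intro x hx
  obtain ⟨j, hj, rfl⟩ := List.getElem_of_mem hx
  have := h j hj
  rwa [List.getD_eq_getElem l 0 hj] at this

lemma list_eq_of_getD {l l' : List ℕ} (hp : ∀ x ∈ l, 0 < x) (hp' : ∀ x ∈ l', 0 < x)
    (h : ∀ j, l.getD j 0 = l'.getD j 0) : l = l' := by
  have hlen : l.length = l'.length := by
    by_contra hne
    rcases Nat.lt_or_ge l.length l'.length with hlt | hge
    · have h1 := getD_pos hp' (j := l.length) hlt
      rw [← h, getD_eq_zero le_rfl] at h1; omega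
    · have : l'.length < l.length := by omega
      have h1 := getD_pos hp (j := l'.length) this
      rw [h, getD_eq_zero le_rfl] at h1; omega
  apply List.ext_getElem hlen
  intro j h1 h2
  have := h j
  rwa [List.getD_eq_getElem l 0 h1, List.getD_eq_getElem l' 0 h2] at this


lemma getD_set {l : List ℕ} {c v k : ℕ} (hc : c < l.length) :
    (l.set c v).getD k 0 = if k = c then v else l.getD k 0 := by
  simp only [List.getD_eq_getElem?_getD, List.getElem?_set]
  rcases eq_or_ne k c with rfl | h
  · simp [hc]
  · simp [h, Ne.symm h]

lemma getD_take {l : List ℕ} {c k : ℕ} :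
    (l.take c).getD k 0 = if k < c then l.getD k 0 else 0 := by
  simp only [List.getD_eq_getElem?_getD, List.getElem?_take]
  rcases lt_or_ge k c with h | h
  · simp [h]
  · simp [not_lt.2 h]

lemma sum_set {l : List ℕ} {c v : ℕ} (hc : c < l.length) :
    (l.set c v).sum + l.getD c 0 = l.sum + v := by
  induction l generalizing c with
  | nil => simp at hc
  | cons a t ih =>
    cases c with
    | zero => simp [List.getD]; omega
    | succ c =>
      have := ih (c := c) (by simpa using hc)
      simp only [List.set_cons_succ, List.sum_cons, List.getD_cons_succ]
      omega

lemma drop_last {l : List ℕ} {c : ℕ} (h : l.length = c + 1) :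
    l.drop c = [l.getD c 0] := by
  have hc : c < l.length := by omega
  rw [List.drop_eq_getElem_cons hc]
  rw [List.getD_eq_getElem l 0 hc, List.drop_eq_nil_of_le (by omega)]

lemma sum_eq_take {l : List ℕ} {c : ℕ} (h : l.length = c + 1) :
    l.sum = (l.take c).sum + l.getD c 0 := by
  have h2 := List.sum_take_add_sum_drop l c
  rw [← h2, drop_last h]; simp

lemma take_getD {l : List ℕ} {c : ℕ} (h : l.length = c + 1) :
    l.take c ++ [l.getD c 0] = l := by
  rw [← drop_last h, List.take_append_drop]

lemma set_getD_self {l : List ℕ} {c : ℕ} (hc : c < l.length) :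
    l.set c (l.getD c 0) = l := by
  apply List.ext_getElem (by simp)
  intro j h1 h2
  simp only [List.getElem_set]
  split
  · subst_vars; rw [List.getD_eq_getElem l 0 hc]
  · rfl

/-! ### decr / grow -/

def decr (lam : List ℕ) (c : ℕ) : List ℕ :=
  if lam.getD c 0 ≤ 1 then lam.take c else lam.set c (lam.getD c 0 - 1)

def grow (lam : List ℕ) (c : ℕ) : List ℕ :=
  if c < lam.length then lam.set c (lam.getD c 0 + 1) else lam ++ [1]

def addable (c : ℕ) (lam : List ℕ) : Prop :=
  c ≤ lam.length ∧ (c = 0 ∨ lam.getD c 0 < lam.getD (c-1) 0)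

lemma getD_grow (lam : List ℕ) {c : ℕ} (hc : c ≤ lam.length) (k : ℕ) :
    (grow lam c).getD k 0 = lam.getD k 0 + if k = c then 1 else 0 := by
  unfold grow
  rcases lt_or_eq_of_le hc with h | h
  · rw [if_pos h, getD_set h]
    by_cases hk : k = c <;> simp [hk]
  · subst h
    rw [if_neg (lt_irrefl _)]
    rcases lt_trichotomy k lam.length with hk | hk | hk
    · rw [List.getD_append _ _ _ _ hk, if_neg (by omega)]
      simp
    · subst hk
      rw [List.getD_append_right _ _ _ _ le_rfl, getD_eq_zero le_rfl]
      simp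
    · rw [List.getD_append_right _ _ _ _ (by omega), if_neg (by omega),
        getD_eq_zero (l := lam) (by omega)]
      exact getD_eq_zero (by simp; omega)

lemma length_grow (lam : List ℕ) {c : ℕ} (hc : c ≤ lam.length) :
    (grow lam c).length = if c = lam.length then c + 1 else lam.length := by
  unfold grow
  rcases lt_or_eq_of_le hc with h | h
  · rw [if_pos h, if_neg (by omega)]; simp
  · rw [if_neg (by omega), if_pos h]
    simp
    omega

lemma sum_grow (lam : List ℕ) {c : ℕ} (hc : c ≤ lam.length) :
    (grow lam c).sum = lam.sum + 1 := by
  unfold grow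
  rcases lt_or_eq_of_le hc with h | h
  · rw [if_pos h]
    have := sum_set (l := lam) (c := c) (v := lam.getD c 0 + 1) h
    omega
  · rw [if_neg (by omega)]; simp

lemma cells_grow (lam : List ℕ) {c : ℕ} (hc : c ≤ lam.length) :
    Cells (grow lam c) = insert (c, lam.getD c 0) (Cells lam) := by
  ext ⟨x, y⟩
  have hg := getD_grow lam hc x
  have hl := length_grow lam hc
  simp only [Cells, Set.mem_insert_iff, Set.mem_setOf_eq, Prod.mk.injEq]
  constructor
  · rintro ⟨h1, h2⟩
    by_cases hx : x = c
    · subst hx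
      rw [if_pos rfl] at hg
      by_cases hy : y = lam.getD x 0
      · exact Or.inl ⟨rfl, hy⟩
      · exact Or.inr ⟨lt_length_of_getD_pos (l := lam) (j := x) (by omega), by omega⟩
    · rw [if_neg hx] at hg
      exact Or.inr ⟨lt_length_of_getD_pos (l := lam) (j := x) (by omega), by omega⟩
  · rintro (⟨rfl, rfl⟩ | ⟨h1, h2⟩)
    · refine ⟨by rw [hl]; split <;> omega, ?_⟩
      rw [if_pos rfl] at hg
      omega
    · refine ⟨by rw [hl]; split <;> omega, ?_⟩
      by_cases hx : x = c
      · rw [if_pos hx] at hg; omega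
      · rw [if_neg hx] at hg; omega

lemma getD_decr (lam : List ℕ) {c : ℕ} (hc : c < lam.length) (hp : 0 < lam.getD c 0)
    (h1 : lam.getD c 0 = 1 → lam.length = c + 1) (k : ℕ) :
    (decr lam c).getD k 0 = lam.getD k 0 - if k = c then 1 else 0 := by
  unfold decr
  by_cases he : lam.getD c 0 ≤ 1
  · have hl := h1 (by omega)
    rw [if_pos he, getD_take]
    by_cases hk : k = c
    · subst hk
      rw [if_neg (lt_irrefl _), if_pos rfl]
      omega
    · by_cases hk2 : k < c
      · rw [if_pos hk2, if_neg hk]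
        omega
      · rw [if_neg hk2, if_neg hk, getD_eq_zero (l := lam) (by omega)]
  · rw [if_neg he, getD_set hc]
    by_cases hk : k = c
    · subst hk
      simp
    · rw [if_neg hk, if_neg hk]
      omega

lemma sum_decr (lam : List ℕ) {c : ℕ} (hc : c < lam.length) (hp : 0 < lam.getD c 0)
    (h1 : lam.getD c 0 = 1 → lam.length = c + 1) :
    (decr lam c).sum = lam.sum - 1 ∧ 1 ≤ lam.sum := by
  have hles : lam.getD c 0 ≤ lam.sum := getD_le_sum
  constructor
  · unfold decr
    by_cases he : lam.getD c 0 ≤ 1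
    · rw [if_pos he]
      have hl := h1 (by omega)
      have := sum_eq_take hl
      omega
    · rw [if_neg he]
      have := sum_set (l := lam) (c := c) (v := lam.getD c 0 - 1) hc
      omega
  · omega

lemma length_decr_le (lam : List ℕ) (c : ℕ) : (decr lam c).length ≤ lam.length := by
  unfold decr
  split
  · simp [List.length_take]
  · simp

lemma cells_decr (lam : List ℕ) {c : ℕ} (hc : c < lam.length) (hp : 0 < lam.getD c 0)
    (h1 : lam.getD c 0 = 1 → lam.length = c + 1) :
    Cells (decr lam c) = Cells lam \ {(c, lam.getD c 0 - 1)} := by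
  ext ⟨x, y⟩
  have h1' : lam.getD c 0 = 1 → lam.length = c + 1 := h1
  have hld := getD_decr lam hc hp h1 x
  have hll : (decr lam c).length ≤ lam.length := length_decr_le lam c
  simp only [Cells, Set.mem_diff, Set.mem_singleton_iff, Set.mem_setOf_eq, Prod.mk.injEq]
  constructor
  · rintro ⟨hx, hy⟩
    have hpos : 0 < (decr lam c).getD x 0 := by omega
    have hxl : x < lam.length := by omega
    refine ⟨⟨hxl, by split at hld <;> omega⟩, ?_⟩
    rintro ⟨rfl, rfl⟩
    rw [if_pos rfl] at hld
    omega
  · rintro ⟨⟨hx, hy⟩, hne⟩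
    have hgd : 0 < (decr lam c).getD x 0 := by
      by_cases hxc : x = c
      · subst hxc
        rw [if_pos rfl] at hld
        have : ¬(y = lam.getD x 0 - 1) := fun h => hne ⟨rfl, h⟩
        omega
      · rw [if_neg hxc] at hld; omega
    refine ⟨lt_length_of_getD_pos hgd, ?_⟩
    by_cases hxc : x = c
    · subst hxc
      rw [if_pos rfl] at hld
      have : ¬(y = lam.getD x 0 - 1) := fun h => hne ⟨rfl, h⟩
      omega
    · rw [if_neg hxc] at hld; omega

lemma grow_decr (lam : List ℕ) {c : ℕ} (hc : c < lam.length) (hp : 0 < lam.getD c 0)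
    (h1 : lam.getD c 0 = 1 → lam.length = c + 1) :
    grow (decr lam c) c = lam := by
  unfold decr
  by_cases he : lam.getD c 0 ≤ 1
  · rw [if_pos he]
    have hl := h1 (by omega)
    unfold grow
    rw [if_neg (by simp [List.length_take])]
    have : lam.getD c 0 = 1 := by omega
    rw [← this, take_getD hl]
  · rw [if_neg he]
    unfold grow
    rw [if_pos (by simpa using hc), getD_set hc, if_pos rfl, List.set_set]
    have : lam.getD c 0 - 1 + 1 = lam.getD c 0 := by omega
    rw [this, set_getD_self hc]

lemma decr_grow (lam : List ℕ) {c : ℕ} (hc : c ≤ lam.length) (hpos : ∀ x ∈ lam, 0 < x) :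
    decr (grow lam c) c = lam := by
  unfold grow
  rcases lt_or_eq_of_le hc with h | h
  · rw [if_pos h]
    have he : 0 < lam.getD c 0 := getD_pos hpos h
    unfold decr
    rw [getD_set h, if_pos rfl, if_neg (by omega), List.set_set]
    have : lam.getD c 0 + 1 - 1 = lam.getD c 0 := by omega
    rw [this, set_getD_self h]
  · rw [if_neg (by omega)]
    unfold decr
    have hg : (lam ++ [1]).getD c 0 = 1 := by
      rw [List.getD_append_right _ _ _ _ (le_of_eq h.symm)]
      simp [h]
    rw [hg, if_pos le_rfl, h, List.take_left]


/-! ### sorted / positive preservation -/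

lemma sorted_decr {lam : List ℕ} {c : ℕ} (hs : lam.Pairwise (· ≥ ·))
    (hc : c < lam.length) (hp : 0 < lam.getD c 0)
    (h1 : lam.getD c 0 = 1 → lam.length = c + 1)
    (h2 : ∀ k, c < k → lam.getD k 0 + 1 ≤ lam.getD c 0) :
    (decr lam c).Pairwise (· ≥ ·) := by
  apply sorted_of_getD
  intro j
  rw [getD_decr lam hc hp h1, getD_decr lam hc hp h1]
  have ha := getD_anti hs (Nat.le_add_right j 1)
  by_cases hj : j = c
  · subst hj
    have := h2 (j + 1) (Nat.lt_succ_self j)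
    rw [if_neg (by omega), if_pos rfl]
    omega
  · by_cases hj1 : j + 1 = c
    · rw [if_pos hj1, if_neg hj]
      omega
    · rw [if_neg hj1, if_neg hj]
      omega

lemma pos_decr {lam : List ℕ} {c : ℕ} (hpos : ∀ x ∈ lam, 0 < x) :
    ∀ x ∈ decr lam c, 0 < x := by
  intro x hx
  unfold decr at hx
  split at hx
  · exact hpos x (List.mem_of_mem_take hx)
  · rcases List.mem_or_eq_of_mem_set hx with h | h
    · exact hpos x h
    · omega

lemma sorted_grow {lam : List ℕ} {c : ℕ} (hs : lam.Pairwise (· ≥ ·))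
    (ha : addable c lam) : (grow lam c).Pairwise (· ≥ ·) := by
  apply sorted_of_getD
  intro j
  rw [getD_grow lam ha.1, getD_grow lam ha.1]
  have hanti := getD_anti hs (Nat.le_add_right j 1)
  by_cases hj : j = c
  · rw [if_pos hj, if_neg (by omega)]
    omega
  · by_cases hj1 : j + 1 = c
    · have := ha.2.resolve_left (by omega)
      rw [if_pos hj1, if_neg hj]
      rw [show c - 1 = j by omega, ← hj1] at this
      omega
    · rw [if_neg hj1, if_neg hj]
      omega

lemma pos_grow {lam : List ℕ} {c : ℕ} (hpos : ∀ x ∈ lam, 0 < x) :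
    ∀ x ∈ grow lam c, 0 < x := by
  intro x hx
  unfold grow at hx
  split at hx
  · rcases List.mem_or_eq_of_mem_set hx with h | h
    · exact hpos x h
    · omega
  · rcases List.mem_append.mp hx with h | h
    · exact hpos x h
    · simp at h
      omega

/-! ### corner of the maximal entry -/

lemma corner {lam : List ℕ} {T : ℕ × ℕ → ℕ} (h : IsSYT lam T) {p : ℕ × ℕ}
    (hp : p ∈ Cells lam) (hmax : T p = lam.sum) :
    p.2 + 1 = lam.getD p.1 0 ∧ ∀ k, p.1 < k → lam.getD k 0 ≤ p.2 := by
  obtain ⟨hbij, hcol, hrow, -⟩ := h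
  constructor
  · by_contra hne
    have hp2 : p.2 < lam.getD p.1 0 := hp.2
    have hq : (p.1, p.2 + 1) ∈ Cells lam := ⟨hp.1, show p.2 + 1 < lam.getD p.1 0 by omega⟩
    have h3 := hcol p hp (p.1, p.2 + 1) hq rfl (Nat.lt_succ_self _)
    have h4 := (Set.mem_Icc.mp (hbij.mapsTo hq)).2
    omega
  · intro k hk
    by_contra hgt
    push_neg at hgt
    have hq : (k, p.2) ∈ Cells lam :=
      ⟨show k < lam.length from lt_length_of_getD_pos (show 0 < lam.getD k 0 by omega),
       show p.2 < lam.getD k 0 from hgt⟩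
    have h3 := hrow p hp (k, p.2) hq rfl hk
    have h4 := (Set.mem_Icc.mp (hbij.mapsTo hq)).2
    omega

/-! ### SYT preservation under delete / add -/

lemma isSYT_del {lam : List ℕ} {T : ℕ × ℕ → ℕ}
    (h : IsSYT lam T) {p : ℕ × ℕ} (hp : p ∈ Cells lam) (hmax : T p = lam.sum)
    (hcells : Cells (decr lam p.1) = Cells lam \ {p})
    (hsum : (decr lam p.1).sum = lam.sum - 1) (hn : 1 ≤ lam.sum) :
    IsSYT (decr lam p.1) (Function.update T p 0) := by
  obtain ⟨hbij, hcol, hrow, hz⟩ := h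
  have heq : Set.EqOn (Function.update T p 0) T (Cells lam \ {p}) := by
    intro q hq
    exact Function.update_of_ne hq.2 0 T
  refine ⟨?_, ?_, ?_, ?_⟩
  · rw [hcells, hsum]
    have hicc : Set.Icc 1 (lam.sum - 1) = Set.Icc 1 lam.sum \ {lam.sum} := by
      ext x
      simp only [Set.mem_Icc, Set.mem_diff, Set.mem_singleton_iff]
      omega
    rw [hicc]
    apply Set.BijOn.congr _ heq.symm
    refine ⟨?_, ?_, ?_⟩
    · intro q hq
      refine ⟨hbij.mapsTo hq.1, fun he => hq.2 ?_⟩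
      exact hbij.injOn hq.1 hp (by rw [Set.mem_singleton_iff] at he; rw [he, hmax])
    · exact hbij.injOn.mono Set.diff_subset
    · intro b hb
      obtain ⟨q, hq, rfl⟩ := hbij.surjOn hb.1
      refine ⟨q, ⟨hq, fun he => hb.2 ?_⟩, rfl⟩
      rw [Set.mem_singleton_iff] at he ⊢
      rw [he, hmax]
  · intro q hq q' hq' h12 hlt
    rw [hcells] at hq hq'
    rw [heq hq, heq hq']
    exact hcol q hq.1 q' hq'.1 h12 hlt
  · intro q hq q' hq' h12 hlt
    rw [hcells] at hq hq'
    rw [heq hq, heq hq']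
    exact hrow q hq.1 q' hq'.1 h12 hlt
  · intro q hq
    rw [hcells] at hq
    by_cases hqp : q = p
    · rw [hqp, Function.update_self]
    · rw [Function.update_of_ne hqp]
      apply hz
      intro hmem
      exact hq ⟨hmem, hqp⟩

lemma isSYT_grow {lam : List ℕ} {T : ℕ × ℕ → ℕ} (hs : lam.Pairwise (· ≥ ·))
    (h : IsSYT lam T) {c : ℕ} (ha : addable c lam) :
    IsSYT (grow lam c) (Function.update T (c, lam.getD c 0) (lam.sum + 1)) := by
  obtain ⟨hbij, hcol, hrow, hz⟩ := h
  set p : ℕ × ℕ := (c, lam.getD c 0) with hpdef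
  have hpnot : p ∉ Cells lam := fun hmem => lt_irrefl _ hmem.2
  have hcells : Cells (grow lam c) = insert p (Cells lam) := cells_grow lam ha.1
  have hsum : (grow lam c).sum = lam.sum + 1 := sum_grow lam ha.1
  have hTle : ∀ q ∈ Cells lam, 1 ≤ T q ∧ T q ≤ lam.sum := fun q hq =>
    Set.mem_Icc.mp (hbij.mapsTo hq)
  have hupd : ∀ q ∈ Cells lam, Function.update T p (lam.sum + 1) q = T q := by
    intro q hq
    have hne : q ≠ p := fun he => hpnot (by rwa [← he])
    exact Function.update_of_ne hne _ T
  refine ⟨?_, ?_, ?_, ?_⟩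
  · rw [hcells, hsum]
    have hicc : Set.Icc 1 (lam.sum + 1) = insert (lam.sum + 1) (Set.Icc 1 lam.sum) := by
      ext x
      simp only [Set.mem_Icc, Set.mem_insert_iff]
      omega
    rw [hicc]
    refine ⟨?_, ?_, ?_⟩
    · intro q hq
      rcases Set.mem_insert_iff.mp hq with rfl | hq'
      · rw [Function.update_self]
        exact Set.mem_insert _ _
      · rw [hupd q hq']
        exact Set.mem_insert_of_mem _ (hbij.mapsTo hq')
    · intro q hq q' hq' he
      rcases Set.mem_insert_iff.mp hq with rfl | hq1 <;>
        rcases Set.mem_insert_iff.mp hq' with rfl | hq2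
      · rfl
      · rw [Function.update_self, hupd q' hq2] at he
        have := (hTle q' hq2).2
        omega
      · rw [Function.update_self, hupd q hq1] at he
        have := (hTle q hq1).2
        omega
      · rw [hupd q hq1, hupd q' hq2] at he
        exact hbij.injOn hq1 hq2 he
    · intro b hb
      rcases Set.mem_insert_iff.mp hb with rfl | hb'
      · exact ⟨p, Set.mem_insert _ _, Function.update_self _ _ _⟩
      · obtain ⟨q, hq, rfl⟩ := hbij.surjOn hb'
        exact ⟨q, Set.mem_insert_of_mem _ hq, hupd q hq⟩
  · intro q hq q' hq' h12 hlt
    rw [hcells] at hq hq'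
    rcases Set.mem_insert_iff.mp hq with rfl | hq1
    · rcases Set.mem_insert_iff.mp hq' with rfl | hq2
      · omega
      · exfalso
        have := hq2.2
        rw [← h12] at this
        simp only [hpdef] at hlt this
        omega
    · rcases Set.mem_insert_iff.mp hq' with rfl | hq2
      · rw [hupd q hq1, Function.update_self]
        have := (hTle q hq1).2
        omega
      · rw [hupd q hq1, hupd q' hq2]
        exact hcol q hq1 q' hq2 h12 hlt
  · intro q hq q' hq' h12 hlt
    rw [hcells] at hq hq'
    rcases Set.mem_insert_iff.mp hq with rfl | hq1
    · rcases Set.mem_insert_iff.mp hq' with rfl | hq2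
      · omega
      · exfalso
        have h1 := hq2.2
        have h2 : lam.getD q'.1 0 ≤ lam.getD c 0 := getD_anti hs (le_of_lt hlt)
        rw [← h12] at h1
        simp only [hpdef] at h1 h2 hlt
        omega
    · rcases Set.mem_insert_iff.mp hq' with rfl | hq2
      · rw [hupd q hq1, Function.update_self]
        have := (hTle q hq1).2
        omega
      · rw [hupd q hq1, hupd q' hq2]
        exact hrow q hq1 q' hq2 h12 hlt
  · intro q hq
    rw [hcells] at hq
    have hq1 : q ≠ p := fun he => hq (he ▸ Set.mem_insert _ _)
    rw [Function.update_of_ne hq1]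
    exact hz q (fun hm => hq (Set.mem_insert_of_mem _ hm))



/-! ### length of decr -/

lemma length_decr (lam : List ℕ) {c : ℕ} (hc : c < lam.length) (hp : 0 < lam.getD c 0) :
    (decr lam c).length = if lam.getD c 0 ≤ 1 then c else lam.length := by
  unfold decr
  split
  · simp [List.length_take]
    omega
  · simp

/-! ### the three moves -/

noncomputable def maxCell (q : P) : ℕ × ℕ := Function.invFunOn q.2 (Cells q.1) q.1.sum

noncomputable def del (q : P) : P := (decr q.1 (maxCell q).1, Function.update q.2 (maxCell q) 0)

noncomputable def addc (c : ℕ) (q : P) : P :=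
  (grow q.1 c, Function.update q.2 (c, q.1.getD c 0) (q.1.sum + 1))

lemma maxCell_spec {n i : ℕ} (hn : 1 ≤ n) {q : P} (hq : q ∈ Y 3 n i) :
    maxCell q ∈ Cells q.1 ∧ q.2 (maxCell q) = q.1.sum := by
  obtain ⟨-, -, -, hsum, -, hT⟩ := hq
  have hmem : q.1.sum ∈ Set.Icc 1 q.1.sum := Set.mem_Icc.mpr ⟨by omega, le_rfl⟩
  obtain ⟨a, hmem2, hval⟩ := hT.1.surjOn hmem
  exact ⟨Function.invFunOn_mem ⟨a, hmem2, hval⟩, Function.invFunOn_eq ⟨a, hmem2, hval⟩⟩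

lemma del_mem {n i : ℕ} (hn : 1 ≤ n) {q : P} (hq : q ∈ Y 3 n i) :
    (maxCell q).1 < q.1.length ∧
    addable (maxCell q).1 (del q).1 ∧
    addc (maxCell q).1 (del q) = q ∧
    (∀ k, (del q).1.getD k 0 = q.1.getD k 0 - if k = (maxCell q).1 then 1 else 0) ∧
    del q ∈ Y 3 (n - 1) ((del q).1.getD 1 0 - (del q).1.getD 2 0) := by
  obtain ⟨hp, hmax⟩ := maxCell_spec hn hq
  obtain ⟨hlen, hs, hpos, hsum, hdiff, hT⟩ := hq
  set p := maxCell q with hpdef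
  have hc : p.1 < q.1.length := hp.1
  have hpc : 0 < q.1.getD p.1 0 := by
    have := hp.2
    omega
  obtain ⟨hcor1, hcor2⟩ := corner hT hp hmax
  have h1 : q.1.getD p.1 0 = 1 → q.1.length = p.1 + 1 := by
    intro he
    by_contra hne
    have hlt : p.1 + 1 < q.1.length := by omega
    have h2 := getD_pos hpos hlt
    have h3 := hcor2 (p.1 + 1) (Nat.lt_succ_self _)
    omega
  have hpp : (p.1, q.1.getD p.1 0 - 1) = p := by
    rw [show q.1.getD p.1 0 - 1 = p.2 by omega]
  have hcells : Cells (decr q.1 p.1) = Cells q.1 \ {p} := by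
    rw [cells_decr q.1 hc hpc h1, hpp]
  obtain ⟨hsd, hs1⟩ := sum_decr q.1 hc hpc h1
  have hld := length_decr q.1 hc hpc
  have hgd := getD_decr q.1 hc hpc h1
  have hsyt : IsSYT (decr q.1 p.1) (Function.update q.2 p 0) :=
    isSYT_del hT hp hmax hcells hsd (by omega)
  have hcor2' : ∀ k, p.1 < k → q.1.getD k 0 + 1 ≤ q.1.getD p.1 0 := by
    intro k hk
    have := hcor2 k hk
    omega
  refine ⟨hc, ?_, ?_, fun k => hgd k, ?_⟩
  · simp only [del]
    constructor
    · rw [hld]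
      split <;> omega
    · by_cases hp0 : p.1 = 0
      · exact Or.inl hp0
      · right
        have ha := getD_anti hs (show p.1 - 1 ≤ p.1 by omega)
        rw [hgd p.1, hgd (p.1 - 1), if_pos rfl, if_neg (by omega)]
        omega
  · unfold addc del
    have hg1 : grow (decr q.1 p.1) p.1 = q.1 := grow_decr q.1 hc hpc h1
    have hg2 : (decr q.1 p.1).getD p.1 0 = q.1.getD p.1 0 - 1 := by
      rw [hgd p.1, if_pos rfl]
    refine Prod.ext hg1 ?_
    simp only
    rw [hg2, hpp, hsd, hsum]
    rw [show n - 1 + 1 = n by omega, ← hsum, ← hmax]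
    rw [Function.update_idem, Function.update_eq_self]
  · simp only [del]
    refine ⟨?_, ?_, ?_, ?_, rfl, hsyt⟩
    · exact le_trans (length_decr_le q.1 p.1) hlen
    · exact sorted_decr hs hc hpc h1 hcor2'
    · exact pos_decr hpos
    · rw [hsd, hsum]

lemma addc_mem {m j : ℕ} {q : P} (hq : q ∈ Y 3 m j) {c : ℕ} (hc3 : c < 3)
    (ha : addable c q.1) :
    addc c q ∈ Y 3 (m + 1) ((addc c q).1.getD 1 0 - (addc c q).1.getD 2 0) ∧
    (∀ k, (addc c q).1.getD k 0 = q.1.getD k 0 + if k = c then 1 else 0) ∧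
    maxCell (addc c q) = (c, q.1.getD c 0) ∧
    del (addc c q) = q := by
  obtain ⟨hlen, hs, hpos, hsum, hdiff, hT⟩ := hq
  set p : ℕ × ℕ := (c, q.1.getD c 0) with hpdef
  have hpnot : p ∉ Cells q.1 := fun hmem => lt_irrefl _ hmem.2
  have hsyt : IsSYT (grow q.1 c) (Function.update q.2 p (q.1.sum + 1)) :=
    isSYT_grow hs hT ha
  have hsg : (grow q.1 c).sum = q.1.sum + 1 := sum_grow q.1 ha.1
  have hmem : addc c q ∈ Y 3 (m + 1) ((addc c q).1.getD 1 0 - (addc c q).1.getD 2 0) := by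
    simp only [addc]
    refine ⟨?_, sorted_grow hs ha, pos_grow hpos, ?_, rfl, hsyt⟩
    · rw [length_grow q.1 ha.1]
      split <;> omega
    · rw [hsg, hsum]
  have hmc : maxCell (addc c q) = p := by
    have hval : Function.update q.2 p (q.1.sum + 1) p = (grow q.1 c).sum := by
      rw [Function.update_self, hsg]
    have hpmem : p ∈ Cells (grow q.1 c) := by
      rw [cells_grow q.1 ha.1]
      exact Set.mem_insert _ _
    have hex : ∃ a ∈ Cells (addc c q).1, (addc c q).2 a = (addc c q).1.sum :=
      ⟨p, hpmem, hval⟩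
    have h1 : maxCell (addc c q) ∈ Cells (grow q.1 c) := Function.invFunOn_mem hex
    have h2 : (addc c q).2 (maxCell (addc c q)) = (grow q.1 c).sum :=
      Function.invFunOn_eq hex
    refine hsyt.1.injOn h1 hpmem ?_
    rw [show Function.update q.2 p (q.1.sum + 1) (maxCell (addc c q)) =
      (grow q.1 c).sum from h2, hval]
  refine ⟨hmem, fun k => getD_grow q.1 ha.1 k, hmc, ?_⟩
  unfold del
  rw [hmc]
  simp only [addc]
  refine Prod.ext (decr_grow q.1 ha.1 hpos) ?_
  simp only
  funext x
  rcases eq_or_ne x p with rfl | hx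
  · rw [Function.update_idem, Function.update_self]
    exact (hT.2.2.2 p hpnot).symm
  · rw [Function.update_idem, Function.update_of_ne hx]



/-! ### finiteness -/

lemma Y_bounds {n i : ℕ} {q : P} (hq : q ∈ Y 3 n i) :
    (∀ j, q.1.getD j 0 ≤ n) ∧ (∀ x, q.2 x ≤ n) := by
  obtain ⟨hlen, hs, hpos, hsum, hdiff, hT⟩ := hq
  constructor
  · intro j
    have := getD_le_sum (l := q.1) (j := j)
    omega
  · intro x
    by_cases hx : x ∈ Cells q.1
    · have := (Set.mem_Icc.mp (hT.1.mapsTo hx)).2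
      omega
    · rw [hT.2.2.2 x hx]
      omega

lemma finite_Y (n i : ℕ) : (Y 3 n i).Finite := by
  rw [← Set.finite_coe_iff]
  let F : ↥(Y 3 n i) → (Fin 3 → Fin (n + 1)) × (Fin 3 × Fin n → Fin (n + 1)) :=
    fun q => (fun j => ⟨q.1.1.getD j.1 0, by have := (Y_bounds q.2).1 j.1; omega⟩,
              fun x => ⟨q.1.2 (x.1.1, x.2.1), by have := (Y_bounds q.2).2 (x.1.1, x.2.1); omega⟩)
  apply Finite.of_injective F
  intro a b hab
  obtain ⟨ha1, ha2, ha3, ha4, ha5, ha6⟩ := a.2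
  obtain ⟨hb1, hb2, hb3, hb4, hb5, hb6⟩ := b.2
  have hab1 := congrArg Prod.fst hab
  have hab2 := congrArg Prod.snd hab
  simp only [F] at hab1 hab2
  have hsh : a.1.1 = b.1.1 := by
    apply list_eq_of_getD ha3 hb3
    intro j
    by_cases hj : j < 3
    · have := congrArg Fin.val (congrFun hab1 ⟨j, hj⟩)
      simpa using this
    · rw [getD_eq_zero (by omega), getD_eq_zero (by omega)]
  have hTeq : a.1.2 = b.1.2 := by
    funext x
    by_cases hx : x ∈ Cells a.1.1
    · have hx1 : x.1 < 3 := lt_of_lt_of_le hx.1 ha1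
      have hx2 : x.2 < n := by
        have h1 := (Y_bounds a.2).1 x.1
        have h2 := hx.2
        have h3 : 0 < a.1.1.getD x.1 0 := by omega
        omega
      have := congrArg Fin.val (congrFun hab2 (⟨x.1, hx1⟩, ⟨x.2, hx2⟩))
      simpa using this
    · rw [ha6.2.2.2 x hx, hb6.2.2.2 x (by rwa [← hsh])]
  exact Subtype.ext (Prod.ext hsh hTeq)



/-! ### small list facts -/

lemma sum_three {l : List ℕ} (h : l.length ≤ 3) :
    l.sum = l.getD 0 0 + l.getD 1 0 + l.getD 2 0 := by
  match l, h with
  | [], _ => simp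
  | [a], _ => simp [List.getD]
  | [a, b], _ => simp [List.getD]
  | [a, b, c], _ => simp [List.getD]; omega

lemma list3_eq {l : List ℕ} (h : l.length = 3) :
    l = [l.getD 0 0, l.getD 1 0, l.getD 2 0] := by
  match l, h with
  | [a, b, c], _ => simp [List.getD]

/-! ### the images of the three pieces -/

lemma img0 {n i : ℕ} (hn : 2 ≤ n) (hi : 1 ≤ i) :
    del '' {q ∈ Y 3 n i | (maxCell q).1 = 0} = Y 3 (n - 1) i := by
  apply Set.Subset.antisymm
  · rintro - ⟨q, ⟨hq, hc⟩, rfl⟩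
    obtain ⟨-, -, -, hk, hY⟩ := del_mem (by omega) hq
    have hdiff : q.1.getD 1 0 - q.1.getD 2 0 = i := hq.2.2.2.2.1
    have h1 := hk 1
    have h2 := hk 2
    rw [hc, if_neg (by omega)] at h1
    rw [hc, if_neg (by omega)] at h2
    have : (del q).1.getD 1 0 - (del q).1.getD 2 0 = i := by omega
    rwa [this] at hY
  · intro q' hq'
    have ha : addable 0 q'.1 := ⟨Nat.zero_le _, Or.inl rfl⟩
    obtain ⟨hY, hk, hmc, hdel⟩ := addc_mem hq' (by omega) ha
    have hdiff : q'.1.getD 1 0 - q'.1.getD 2 0 = i := hq'.2.2.2.2.1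
    have h1 := hk 1
    have h2 := hk 2
    rw [if_neg (by omega)] at h1
    rw [if_neg (by omega)] at h2
    have heq : (addc 0 q').1.getD 1 0 - (addc 0 q').1.getD 2 0 = i := by omega
    rw [heq, show n - 1 + 1 = n by omega] at hY
    exact ⟨addc 0 q', ⟨hY, by rw [hmc]⟩, hdel⟩

lemma img1 {n i : ℕ} (hn : 2 ≤ n) (hi : 1 ≤ i) :
    del '' {q ∈ Y 3 n i | (maxCell q).1 = 1} =
      Y 3 (n - 1) (i - 1) \ {q ∈ Y 3 (n - 1) (i - 1) | q.1.getD 0 0 = q.1.getD 1 0} := by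
  apply Set.Subset.antisymm
  · rintro - ⟨q, ⟨hq, hc⟩, rfl⟩
    obtain ⟨hcl, -, -, hk, hY⟩ := del_mem (by omega) hq
    obtain ⟨hlen, hs, hpos, hsum, hdiff, hT⟩ := hq
    rw [hc] at hcl
    have hpos1 : 0 < q.1.getD 1 0 := getD_pos hpos hcl
    have hanti : q.1.getD 1 0 ≤ q.1.getD 0 0 := getD_anti hs (by omega)
    have h0 := hk 0
    have h1 := hk 1
    have h2 := hk 2
    rw [hc, if_neg (by omega)] at h0
    rw [hc, if_pos rfl] at h1
    rw [hc, if_neg (by omega)] at h2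
    have heq : (del q).1.getD 1 0 - (del q).1.getD 2 0 = i - 1 := by
      have hanti2 : q.1.getD 2 0 ≤ q.1.getD 1 0 := getD_anti hs (by omega)
      omega
    rw [heq] at hY
    exact ⟨hY, fun hmem => by have := hmem.2; omega⟩
  · rintro q' ⟨hq', hne⟩
    have hne' : ¬ q'.1.getD 0 0 = q'.1.getD 1 0 := fun h => hne ⟨hq', h⟩
    obtain ⟨hlen, hs, hpos, hsum, hdiff, hT⟩ := hq'
    have hanti : q'.1.getD 1 0 ≤ q'.1.getD 0 0 := getD_anti hs (by omega)
    have hlen1 : 1 ≤ q'.1.length := by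
      by_contra hcon
      rw [getD_eq_zero (l := q'.1) (j := 0) (by omega),
        getD_eq_zero (l := q'.1) (j := 1) (by omega)] at hne'
      exact hne' rfl
    have ha : addable 1 q'.1 := ⟨hlen1, Or.inr (show q'.1.getD 1 0 < q'.1.getD 0 0 by omega)⟩
    obtain ⟨hY, hk, hmc, hdel⟩ := addc_mem (show q' ∈ Y 3 (n-1) (i-1) from
      ⟨hlen, hs, hpos, hsum, hdiff, hT⟩) (by omega) ha
    have hanti2 : q'.1.getD 2 0 ≤ q'.1.getD 1 0 := getD_anti hs (by omega)
    have h1 := hk 1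
    have h2 := hk 2
    rw [if_pos rfl] at h1
    rw [if_neg (by omega)] at h2
    have heq : (addc 1 q').1.getD 1 0 - (addc 1 q').1.getD 2 0 = i := by omega
    rw [heq, show n - 1 + 1 = n by omega] at hY
    exact ⟨addc 1 q', ⟨hY, by rw [hmc]⟩, hdel⟩

lemma img2 {n i : ℕ} (hn : 2 ≤ n) (hi : 1 ≤ i) :
    del '' {q ∈ Y 3 n i | (maxCell q).1 = 2} = Y 3 (n - 1) (i + 1) := by
  apply Set.Subset.antisymm
  · rintro - ⟨q, ⟨hq, hc⟩, rfl⟩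
    obtain ⟨hcl, -, -, hk, hY⟩ := del_mem (by omega) hq
    obtain ⟨hlen, hs, hpos, hsum, hdiff, hT⟩ := hq
    rw [hc] at hcl
    have hpos2 : 0 < q.1.getD 2 0 := getD_pos hpos hcl
    have hanti : q.1.getD 2 0 ≤ q.1.getD 1 0 := getD_anti hs (by omega)
    have h1 := hk 1
    have h2 := hk 2
    rw [hc, if_neg (by omega)] at h1
    rw [hc, if_pos rfl] at h2
    have heq : (del q).1.getD 1 0 - (del q).1.getD 2 0 = i + 1 := by omega
    rw [heq] at hY
    exact hY
  · intro q' hq'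
    obtain ⟨hlen, hs, hpos, hsum, hdiff, hT⟩ := hq'
    have hanti : q'.1.getD 2 0 ≤ q'.1.getD 1 0 := getD_anti hs (by omega)
    have hpos1 : 0 < q'.1.getD 1 0 := by omega
    have hlen2 : 2 ≤ q'.1.length := lt_length_of_getD_pos hpos1
    have ha : addable 2 q'.1 := ⟨hlen2, Or.inr (show q'.1.getD 2 0 < q'.1.getD 1 0 by omega)⟩
    obtain ⟨hY, hk, hmc, hdel⟩ := addc_mem (show q' ∈ Y 3 (n-1) (i+1) from
      ⟨hlen, hs, hpos, hsum, hdiff, hT⟩) (by omega) ha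
    have h1 := hk 1
    have h2 := hk 2
    rw [if_neg (by omega)] at h1
    rw [if_pos rfl] at h2
    have heq : (addc 2 q').1.getD 1 0 - (addc 2 q').1.getD 2 0 = i := by omega
    rw [heq, show n - 1 + 1 = n by omega] at hY
    exact ⟨addc 2 q', ⟨hY, by rw [hmc]⟩, hdel⟩

lemma injOn_del {n i c : ℕ} (hn : 2 ≤ n) :
    Set.InjOn del {q ∈ Y 3 n i | (maxCell q).1 = c} := by
  intro q1 hq1 q2 hq2 heq
  obtain ⟨-, -, hrt1, -, -⟩ := del_mem (show 1 ≤ n by omega) hq1.1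
  obtain ⟨-, -, hrt2, -, -⟩ := del_mem (show 1 ≤ n by omega) hq2.1
  rw [hq1.2] at hrt1
  rw [hq2.2] at hrt2
  rw [← hrt1, ← hrt2, heq]



/-! ### the blocked shapes -/

lemma R_shape {n i : ℕ} (hn : 2 ≤ n) (hi : 1 ≤ i) (hi' : i ≤ n / 2) {q : P}
    (hq : q ∈ Y 3 (n - 1) (i - 1)) (heq : q.1.getD 0 0 = q.1.getD 1 0) :
    (n + i) % 3 = 2 ∧ q.1 = [(n + i - 2) / 3, (n + i - 2) / 3, (n - 2 * i + 1) / 3] := by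
  obtain ⟨hlen, hs, hpos, hsum, hdiff, hT⟩ := hq
  have hsum3 := sum_three hlen
  have hanti12 : q.1.getD 2 0 ≤ q.1.getD 1 0 := getD_anti hs (by omega)
  have hlen3 : q.1.length = 3 := by
    rcases Nat.lt_or_ge q.1.length 3 with hl | hl
    · exfalso
      have h2 : q.1.getD 2 0 = 0 := getD_eq_zero (by omega)
      rcases Nat.lt_or_ge q.1.length 1 with h0 | h0
      · have ha : q.1.getD 0 0 = 0 := getD_eq_zero (by omega)
        have hb : q.1.getD 1 0 = 0 := getD_eq_zero (by omega)
        omega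
      · rcases Nat.lt_or_ge q.1.length 2 with h1 | h1
        · have hg1 : q.1.getD 1 0 = 0 := getD_eq_zero (by omega)
          have hg0 : 0 < q.1.getD 0 0 := getD_pos hpos (by omega)
          omega
        · have hg1 : 0 < q.1.getD 1 0 := getD_pos hpos (by omega)
          omega
    · omega
  have hg2 : 0 < q.1.getD 2 0 := getD_pos hpos (by omega)
  constructor
  · omega
  · rw [list3_eq hlen3]
    have e1 : q.1.getD 0 0 = (n + i - 2) / 3 := by omega
    have e2 : q.1.getD 1 0 = (n + i - 2) / 3 := by omega
    have e3 : q.1.getD 2 0 = (n - 2 * i + 1) / 3 := by omega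
    rw [e1, e2, e3]

lemma R_card {n i : ℕ} (hn : 2 ≤ n) (hi : 1 ≤ i) (hi' : i ≤ n / 2) :
    ({q ∈ Y 3 (n - 1) (i - 1) | q.1.getD 0 0 = q.1.getD 1 0} : Set P).ncard = rr n i := by
  by_cases hmod : (n + i) % 3 = 2
  · set a := (n + i - 2) / 3 with hadef
    set cc := (n - 2 * i + 1) / 3 with hccdef
    have ha3 : 3 * a + 2 = n + i := by omega
    have hc3 : 3 * cc = n - 2 * i + 1 := by omega
    have hc1 : 1 ≤ cc := by omega
    have hac : cc ≤ a := by omega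
    have hset : {q ∈ Y 3 (n - 1) (i - 1) | q.1.getD 0 0 = q.1.getD 1 0}
        = {q : P | q.1 = [a, a, cc] ∧ IsSYT [a, a, cc] q.2} := by
      ext q
      constructor
      · rintro ⟨hq, heq⟩
        obtain ⟨-, hsh⟩ := R_shape hn hi hi' hq heq
        exact ⟨hsh, by rw [← hsh]; exact hq.2.2.2.2.2⟩
      · rintro ⟨hsh, hT⟩
        refine ⟨⟨?_, ?_, ?_, ?_, ?_, ?_⟩, ?_⟩
        · rw [hsh]; simp
        · rw [hsh]
          simp [List.pairwise_cons]
          omega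
        · rw [hsh]
          intro x hx
          simp at hx
          rcases hx with rfl | rfl
          · omega
          · omega
        · rw [hsh]
          simp [List.getD]
          omega
        · rw [hsh]
          simp [List.getD]
          omega
        · rw [hsh]; exact hT
        · rw [hsh]
          simp [List.getD]
    rw [hset, ← Nat.card_coe_set_eq]
    have hcongr : Nat.card ↑{q : P | q.1 = [a, a, cc] ∧ IsSYT [a, a, cc] q.2}
        = Nat.card {T : ℕ × ℕ → ℕ // IsSYT [a, a, cc] T} := by
      apply Nat.card_congr
      exact { toFun := fun q => ⟨q.1.2, q.2.2⟩,
              invFun := fun T => ⟨([a, a, cc], T.1), rfl, T.2⟩,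
              left_inv := fun q => Subtype.ext (Prod.ext q.2.1.symm rfl),
              right_inv := fun T => rfl }
    rw [hcongr, rr, if_pos hmod, sytCount]
  · have hempty : {q ∈ Y 3 (n - 1) (i - 1) | q.1.getD 0 0 = q.1.getD 1 0} = (∅ : Set P) := by
      ext q
      simp only [Set.mem_setOf_eq, Set.mem_empty_iff_false, iff_false, not_and]
      intro hq heq
      exact hmod (R_shape hn hi hi' hq heq).1
    rw [hempty, rr, if_neg hmod]
    simp


end SytAux

open SytAux in
theorem stmt8 (n i : ℕ) (hn : 1 ≤ n) (hi : 1 ≤ i) (hi' : i ≤ n / 2) :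
    gamma 3 n i + rr n i =
      gamma 3 (n - 1) (i - 1) + gamma 3 (n - 1) i + gamma 3 (n - 1) (i + 1) := by
  classical
  have hn2 : 2 ≤ n := by omega
  have hfinA : (Y 3 n i).Finite := finite_Y n i
  have hsub0 : {q : P | q ∈ Y 3 n i ∧ (maxCell q).1 = 0} ⊆ Y 3 n i := fun q hq => hq.1
  have hsub1 : {q : P | q ∈ Y 3 n i ∧ (maxCell q).1 = 1} ⊆ Y 3 n i := fun q hq => hq.1
  have hsub2 : {q : P | q ∈ Y 3 n i ∧ (maxCell q).1 = 2} ⊆ Y 3 n i := fun q hq => hq.1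
  have hf0 := hfinA.subset hsub0
  have hf1 := hfinA.subset hsub1
  have hf2 := hfinA.subset hsub2
  have hA : Y 3 n i = ({q : P | q ∈ Y 3 n i ∧ (maxCell q).1 = 0}
      ∪ {q : P | q ∈ Y 3 n i ∧ (maxCell q).1 = 1})
      ∪ {q : P | q ∈ Y 3 n i ∧ (maxCell q).1 = 2} := by
    ext q
    constructor
    · intro hq
      have hcl := (del_mem (show 1 ≤ n by omega) hq).1
      have hl3 : q.1.length ≤ 3 := hq.1
      rcases show (maxCell q).1 = 0 ∨ (maxCell q).1 = 1 ∨ (maxCell q).1 = 2 by omega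
        with h | h | h
      · exact Or.inl (Or.inl ⟨hq, h⟩)
      · exact Or.inl (Or.inr ⟨hq, h⟩)
      · exact Or.inr ⟨hq, h⟩
    · rintro ((⟨h, -⟩ | ⟨h, -⟩) | ⟨h, -⟩) <;> exact h
  have hd01 : Disjoint {q : P | q ∈ Y 3 n i ∧ (maxCell q).1 = 0}
      {q : P | q ∈ Y 3 n i ∧ (maxCell q).1 = 1} := by
    rw [Set.disjoint_left]
    rintro q ⟨-, h0⟩ ⟨-, h1⟩
    omega
  have hd02 : Disjoint {q : P | q ∈ Y 3 n i ∧ (maxCell q).1 = 0}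
      {q : P | q ∈ Y 3 n i ∧ (maxCell q).1 = 2} := by
    rw [Set.disjoint_left]
    rintro q ⟨-, h0⟩ ⟨-, h1⟩
    omega
  have hd12 : Disjoint {q : P | q ∈ Y 3 n i ∧ (maxCell q).1 = 1}
      {q : P | q ∈ Y 3 n i ∧ (maxCell q).1 = 2} := by
    rw [Set.disjoint_left]
    rintro q ⟨-, h0⟩ ⟨-, h1⟩
    omega
  have hcard : (Y 3 n i).ncard = {q : P | q ∈ Y 3 n i ∧ (maxCell q).1 = 0}.ncard
      + {q : P | q ∈ Y 3 n i ∧ (maxCell q).1 = 1}.ncard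
      + {q : P | q ∈ Y 3 n i ∧ (maxCell q).1 = 2}.ncard := by
    conv_lhs => rw [hA]
    rw [Set.ncard_union_eq (Set.disjoint_union_left.mpr ⟨hd02, hd12⟩) (hf0.union hf1) hf2,
      Set.ncard_union_eq hd01 hf0 hf1]
  have e0 : {q : P | q ∈ Y 3 n i ∧ (maxCell q).1 = 0}.ncard = (Y 3 (n - 1) i).ncard := by
    rw [← img0 hn2 hi]
    exact (Set.ncard_image_of_injOn (injOn_del hn2)).symm
  have e1 : {q : P | q ∈ Y 3 n i ∧ (maxCell q).1 = 1}.ncard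
      = (Y 3 (n - 1) (i - 1) \ {q : P | q ∈ Y 3 (n - 1) (i - 1)
        ∧ q.1.getD 0 0 = q.1.getD 1 0}).ncard := by
    rw [← img1 hn2 hi]
    exact (Set.ncard_image_of_injOn (injOn_del hn2)).symm
  have e2 : {q : P | q ∈ Y 3 n i ∧ (maxCell q).1 = 2}.ncard
      = (Y 3 (n - 1) (i + 1)).ncard := by
    rw [← img2 hn2 hi]
    exact (Set.ncard_image_of_injOn (injOn_del hn2)).symm
  have ediff : (Y 3 (n - 1) (i - 1) \ {q : P | q ∈ Y 3 (n - 1) (i - 1)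
        ∧ q.1.getD 0 0 = q.1.getD 1 0}).ncard
      + {q : P | q ∈ Y 3 (n - 1) (i - 1) ∧ q.1.getD 0 0 = q.1.getD 1 0}.ncard
      = (Y 3 (n - 1) (i - 1)).ncard :=
    Set.ncard_diff_add_ncard_of_subset (fun q hq => hq.1) (finite_Y _ _)
  have hRcard := R_card hn2 hi hi'
  have g1 : gamma 3 n i = (Y 3 n i).ncard := Nat.card_coe_set_eq _
  have g2 : gamma 3 (n - 1) (i - 1) = (Y 3 (n - 1) (i - 1)).ncard := Nat.card_coe_set_eq _
  have g3 : gamma 3 (n - 1) i = (Y 3 (n - 1) i).ncard := Nat.card_coe_set_eq _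
  have g4 : gamma 3 (n - 1) (i + 1) = (Y 3 (n - 1) (i + 1)).ncard := Nat.card_coe_set_eq _
  rw [g1, g2, g3, g4, ← hRcard, hcard]
  omega
end
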